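/- arXiv:2207.07735 — 6 statements merged into one kernel-verified Lean document; each statement's English description precedes it below -/
import Mathlib

section
/- Chordal graphs admit positive completions of partially positive matrices (one direction of the chordal completion theorem): let G be a chordal graph on {1,…,n} (with all loops, i.e., consider the reflexive symmetric relation R containing the diagonal). If M ∈ M_n(ℂ) is Hermitian and for every clique C of G the principal submatrix (M_{ij})_{i,j∈C} is positive semidefinite, then there exists a Hermitian matrix N ∈ M_n(ℂ) with N_{ij} = 0 whenever {i,j} is an edge of G or i = j, such that M + N is positive semidefinite. -/
open ComplexOrder

open Matrix Finset

lemma myPosDef_submatrix_equiv {α β : Type*} [Fintype α] [Fintype β]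
    {A : Matrix β β ℂ} (hA : A.PosDef) (e : α ≃ β) : (A.submatrix e e).PosDef := by
  refine Matrix.PosDef.of_dotProduct_mulVec_pos (hA.1.submatrix e) fun x hx => ?_
  have hx' : (fun b => x (e.symm b)) ≠ 0 := by
    intro h
    apply hx
    funext i
    have := congrFun h (e i)
    simpa using this
  have := hA.dotProduct_mulVec_pos hx'
  convert this using 2
  · simp only [dotProduct, mulVec, submatrix_apply]
    refine Fintype.sum_equiv e _ _ fun i => ?_
    simp only [Pi.star_apply, Equiv.symm_apply_apply]
    congr 1
    refine Fintype.sum_equiv e _ _ fun j => ?_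
    simp [Equiv.symm_apply_apply]

lemma quadform_nonneg_of_support {k : ℕ} {A : Matrix (Fin k) (Fin k) ℂ} {C : Finset (Fin k)}
    (h : (A.submatrix (fun i : C => (i : Fin k)) (fun j : C => (j : Fin k))).PosSemidef)
    (y : Fin k → ℂ) (hy : ∀ v, v ∉ C → y v = 0) :
    0 ≤ star y ⬝ᵥ A *ᵥ y := by
  have h2 := h.dotProduct_mulVec_nonneg (fun i : C => y i)
  calc (0:ℂ) ≤ star (fun i : C => y i) ⬝ᵥ
      (A.submatrix (fun i : C => (i : Fin k)) (fun j : C => (j : Fin k))) *ᵥ (fun i : C => y i) := h2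
    _ = star y ⬝ᵥ A *ᵥ y := by
        simp only [dotProduct, mulVec, submatrix_apply, Pi.star_apply]
        have inner : ∀ u : Fin k, ∑ v : Fin k, A u v * y v
            = ∑ v : {x // x ∈ C}, A u ↑v * y ↑v := by
          intro u
          rw [← Finset.sum_subtype C (fun x => Iff.rfl) (fun v => A u v * y v)]
          refine (Finset.sum_subset (Finset.subset_univ C) fun v _ hv => ?_).symm
          rw [hy v hv, mul_zero]
        symm
        calc ∑ u : Fin k, star (y u) * ∑ v : Fin k, A u v * y v
            = ∑ u : Fin k, star (y u) * ∑ v : {x // x ∈ C}, A ↑u ↑v * y ↑v := by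
              simp only [inner]
          _ = ∑ u ∈ C, star (y u) * ∑ v : {x // x ∈ C}, A ↑u ↑v * y ↑v := by
              refine (Finset.sum_subset (Finset.subset_univ C) fun u _ hu => ?_).symm
              rw [hy u hu]; simp
          _ = ∑ u : {x // x ∈ C}, star (y ↑u) * ∑ v : {x // x ∈ C}, A ↑u ↑v * y ↑v :=
              Finset.sum_subtype C (fun x => Iff.rfl) _

lemma star_pi_single {m : ℕ} (i : Fin m) (z : ℂ) :
    star (Pi.single i z : Fin m → ℂ) = Pi.single i (star z) := by
  funext u
  rcases eq_or_ne u i with rfl | h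
  · simp
  · simp [Pi.single_eq_of_ne h]

lemma psd_diag_nonneg {m : ℕ} {P : Matrix (Fin m) (Fin m) ℂ} (hP : P.PosSemidef)
    (i : Fin m) : 0 ≤ P i i := by
  have := hP.dotProduct_mulVec_nonneg (Pi.single i 1)
  simpa [star_pi_single, mulVec_single, single_dotProduct] using this

lemma psd_entry_bound {m : ℕ} {P : Matrix (Fin m) (Fin m) ℂ} (hP : P.PosSemidef)
    (i j : Fin m) : ‖P i j‖ ≤ (P i i).re + (P j j).re := by
  have hdi := psd_diag_nonneg hP i
  have hdj := psd_diag_nonneg hP j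
  rw [Complex.le_def] at hdi hdj
  simp only [Complex.zero_re, Complex.zero_im] at hdi hdj
  rcases eq_or_ne i j with rfl | hij
  · have : ‖P i i‖ = (P i i).re := by
      rw [Complex.norm_def, Complex.normSq_apply, ← hdi.2, mul_zero, add_zero,
        Real.sqrt_mul_self hdi.1]
    rw [this]; linarith [hdi.1]
  rcases eq_or_ne (P i j) 0 with hz | hz
  · rw [hz]; simpa using add_nonneg hdi.1 hdj.1
  set z := P i j with hzdef
  set r := ‖z‖ with hrdef
  have hr : 0 < r := norm_pos_iff.mpr hz
  have hrne : (r : ℂ) ≠ 0 := by exact_mod_cast hr.ne'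
  set b : ℂ := -(starRingEnd ℂ z) * (r:ℂ)⁻¹ with hbdef
  have hzz : z * starRingEnd ℂ z = (r:ℂ)^2 := by
    rw [Complex.mul_conj, Complex.normSq_eq_norm_sq]
    push_cast
    rfl
  have hcb : starRingEnd ℂ b = -z * (r:ℂ)⁻¹ := by
    rw [hbdef]
    rw [_root_.map_mul, map_neg, Complex.conj_conj, map_inv₀, Complex.conj_ofReal]
  have hji : P j i = starRingEnd ℂ z := (hP.1.apply j i).symm
  have key := hP.dotProduct_mulVec_nonneg (Pi.single i 1 + Pi.single j b)
  have hr2 : -((r:ℂ)^2) * (↑r)⁻¹ = -(r:ℂ) := by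
    rw [sq, neg_mul, mul_assoc, mul_inv_cancel₀ hrne, mul_one]
  have h1 : z * b = -(r:ℂ) := by
    rw [hbdef]
    have : z * (-(starRingEnd ℂ z) * (↑r)⁻¹) = -(z * starRingEnd ℂ z) * (↑r)⁻¹ := by ring
    rw [this, hzz, hr2]
  have h2 : starRingEnd ℂ b * starRingEnd ℂ z = -(r:ℂ)  := by
    rw [hcb]
    have : -z * (↑r)⁻¹ * starRingEnd ℂ z = -(z * starRingEnd ℂ z) * (↑r)⁻¹ := by ring
    rw [this, hzz, hr2]
  have h3 : starRingEnd ℂ b * b = 1 := by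
    rw [hcb, hbdef]
    have : -z * (↑r)⁻¹ * (-(starRingEnd ℂ z) * (↑r)⁻¹) = (z * starRingEnd ℂ z) * ((↑r)⁻¹ * (↑r)⁻¹) := by
      ring
    rw [this, hzz, sq]
    field_simp
  have hexp : star (Pi.single i 1 + Pi.single j b) ⬝ᵥ P *ᵥ (Pi.single i 1 + Pi.single j b)
      = P i i + P j j - 2 * (r:ℂ) := by
    rw [star_add, star_pi_single, star_pi_single, mulVec_add, mulVec_single, mulVec_single]
    rw [dotProduct_add, add_dotProduct, add_dotProduct]
    simp only [single_dotProduct, star_one, Pi.add_apply, Pi.smul_apply, op_smul_eq_mul,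
      Matrix.col_apply]
    rw [hji]
    have hsb : (star b : ℂ) = starRingEnd ℂ b := rfl
    calc 1 * (P i i * 1) + star b * (starRingEnd ℂ z * 1) + (1 * (P i j * b) + star b * (P j j * b))
        = P i i + z * b + (starRingEnd ℂ b * starRingEnd ℂ z
            + (starRingEnd ℂ b * b) * P j j) := by rw [hsb]; ring
      _ = P i i + P j j - 2 * (r:ℂ) := by rw [h1, h2, h3]; ring
  rw [hexp, Complex.le_def] at key
  have : (P i i + P j j - 2 * (r:ℂ)).re = (P i i).re + (P j j).re - 2 * r := by
    simp [Complex.sub_re, Complex.add_re]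
  rw [this] at key
  have hk := key.1
  simp only [Complex.zero_re] at hk
  linarith

lemma aux_completion : ∀ (k : ℕ) (G : SimpleGraph (Fin k)),
    (∀ i : Fin k, G.IsClique {v | v = i ∨ (i < v ∧ G.Adj i v)}) →
    ∀ (M : Matrix (Fin k) (Fin k) ℂ), M.IsHermitian →
    (∀ C : Finset (Fin k), G.IsClique (C : Set (Fin k)) →
      (M.submatrix (fun i : C => (i : Fin k)) (fun j : C => (j : Fin k))).PosDef) →
    ∃ N : Matrix (Fin k) (Fin k) ℂ,
      (∀ i j : Fin k, (i = j ∨ G.Adj i j) → N i j = 0) ∧ (M + N).PosSemidef := by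
  intro k
  induction k with
  | zero =>
    intro G _ M hM _
    refine ⟨0, fun i j _ => rfl, .of_dotProduct_mulVec_nonneg (by simpa using hM) fun x => by simp [dotProduct]⟩
  | succ n IH =>
    intro G hPEO M hM hpd
    classical
    set G₁ : SimpleGraph (Fin n) := SimpleGraph.comap Fin.succ G with hG₁
    have hG₁adj : ∀ i j : Fin n, G₁.Adj i j ↔ G.Adj i.succ j.succ := fun i j => Iff.rfl
    have hPEO₁ : ∀ i : Fin n, G₁.IsClique {v | v = i ∨ (i < v ∧ G₁.Adj i v)} := by
      intro i a ha b hb hab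
      have key : ∀ x : Fin n, (x = i ∨ (i < x ∧ G₁.Adj i x)) →
          (x.succ = i.succ ∨ (i.succ < x.succ ∧ G.Adj i.succ x.succ)) := by
        rintro x (rfl | ⟨hlt, hadj⟩)
        · exact Or.inl rfl
        · exact Or.inr ⟨Fin.succ_lt_succ_iff.mpr hlt, (hG₁adj i x).mp hadj⟩
      have := hPEO i.succ (key a ha) (key b hb)
        (fun h => hab (Fin.succ_injective _ h))
      exact (hG₁adj a b).mpr this
    set M₁ := M.submatrix Fin.succ Fin.succ with hM₁def
    have hM₁ : M₁.IsHermitian := hM.submatrix _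
    have hpd₁ : ∀ C : Finset (Fin n), G₁.IsClique (C : Set (Fin n)) →
        (M₁.submatrix (fun i : C => (i : Fin n)) (fun j : C => (j : Fin n))).PosDef := by
      intro C₁ hC₁
      set C : Finset (Fin (n+1)) := C₁.map ⟨Fin.succ, Fin.succ_injective n⟩ with hCdef
      have hmemC : ∀ x : Fin (n+1), x ∈ C ↔ ∃ y ∈ C₁, y.succ = x := by
        intro x; simp [hCdef]
      have hC : G.IsClique (C : Set (Fin (n+1))) := by
        intro a ha b hb hab
        obtain ⟨x, hx, rfl⟩ := (hmemC a).mp ha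
        obtain ⟨y, hy, rfl⟩ := (hmemC b).mp hb
        have hxy : x ≠ y := fun h => hab (by rw [h])
        exact (hG₁adj x y).mp (hC₁ hx hy hxy)
      have hpdC := hpd C hC
      have hf : Function.Bijective (fun x : {x // x ∈ C₁} =>
          (⟨(x : Fin n).succ, (hmemC _).mpr ⟨x, x.2, rfl⟩⟩ : {x // x ∈ C})) := by
        constructor
        · intro x y hxy
          exact Subtype.ext (Fin.succ_injective n (congrArg Subtype.val hxy))
        · rintro ⟨y, hy⟩
          obtain ⟨x, hx, rfl⟩ := (hmemC y).mp hy
          exact ⟨⟨x, hx⟩, rfl⟩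
      set e := Equiv.ofBijective _ hf with hedef
      have heq : (M₁.submatrix (fun i : C₁ => (i : Fin n)) (fun j : C₁ => (j : Fin n)))
          = (M.submatrix (fun i : C => (i : Fin (n+1)))
              (fun j : C => (j : Fin (n+1)))).submatrix e e := by
        ext x y
        rfl
      rw [heq]
      exact myPosDef_submatrix_equiv hpdC e
    obtain ⟨N₁, hN₁zero, hB⟩ := IH G₁ hPEO₁ M₁ hM₁ hpd₁
    set B := M₁ + N₁ with hBdef
    have hBH : B.IsHermitian := hB.1
    have hBdiag : ∀ i : Fin n, B i i = M i.succ i.succ := by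
      intro i
      rw [hBdef, Matrix.add_apply, hN₁zero i i (Or.inl rfl), add_zero, hM₁def,
        Matrix.submatrix_apply]
    have hBedge : ∀ i j : Fin n, G.Adj i.succ j.succ → B i j = M i.succ j.succ := by
      intro i j hadj
      rw [hBdef, Matrix.add_apply, hN₁zero i j (Or.inr ((hG₁adj i j).mpr hadj)), add_zero,
        hM₁def, Matrix.submatrix_apply]
    have hK : G.IsClique {v : Fin (n+1) | v = 0 ∨ G.Adj 0 v} := by
      have hset : {v : Fin (n+1) | v = 0 ∨ G.Adj 0 v}
          = {v : Fin (n+1) | v = 0 ∨ (0 < v ∧ G.Adj 0 v)} := by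
        ext v
        simp only [Set.mem_setOf_eq]
        constructor
        · rintro (rfl | h)
          · exact Or.inl rfl
          · exact Or.inr ⟨Fin.pos_of_ne_zero (G.ne_of_adj h).symm, h⟩
        · rintro (rfl | ⟨-, h⟩)
          · exact Or.inl rfl
          · exact Or.inr h
      rw [hset]
      exact hPEO 0
    set CS : Finset (Fin (n+1)) := Finset.univ.filter (fun v => G.Adj 0 v) with hCSdef
    have hCSmem : ∀ v, v ∈ CS ↔ G.Adj 0 v := by intro v; simp [hCSdef]
    set CK : Finset (Fin (n+1)) := insert 0 CS with hCKdef
    have hCSclique : G.IsClique (CS : Set (Fin (n+1))) :=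
      hK.subset (fun v hv => Or.inr ((hCSmem v).mp hv))
    have hCKclique : G.IsClique (CK : Set (Fin (n+1))) := by
      refine hK.subset (fun v hv => ?_)
      rcases Finset.mem_insert.mp hv with rfl | h
      · exact Or.inl rfl
      · exact Or.inr ((hCSmem v).mp h)
    have hCSpd := hpd CS hCSclique
    set MS := M.submatrix (fun i : CS => (i : Fin (n+1))) (fun j : CS => (j : Fin (n+1)))
      with hMSdef
    set sol : CS → ℂ := MS⁻¹ *ᵥ (fun v : CS => M (v : Fin (n+1)) 0) with hsoldef
    have hsolve : MS *ᵥ sol = fun v : CS => M (v : Fin (n+1)) 0 := by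
      rw [hsoldef, Matrix.mulVec_mulVec,
        Matrix.mul_nonsing_inv _ ((Matrix.isUnit_iff_isUnit_det MS).mp hCSpd.isUnit),
        Matrix.one_mulVec]
    set b' : Fin n → ℂ := fun kk => if h : kk.succ ∈ CS then sol ⟨kk.succ, h⟩ else 0 with hb'def
    have hb'0 : ∀ kk, kk.succ ∉ CS → b' kk = 0 := fun kk h => dif_neg h
    have hsum : ∀ f : Fin (n+1) → ℂ,
        ∑ kk : Fin n, f kk.succ * b' kk = ∑ v : CS, f (v : Fin (n+1)) * sol v := by
      intro f
      have hfE : Function.Bijective (fun x : {kk : Fin n // kk.succ ∈ CS} =>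
          (⟨(x : Fin n).succ, x.2⟩ : {v // v ∈ CS})) := by
        constructor
        · intro x y hxy
          exact Subtype.ext (Fin.succ_injective n (congrArg Subtype.val hxy))
        · rintro ⟨v, hv⟩
          have hv0 : v ≠ 0 := (G.ne_of_adj ((hCSmem v).mp hv)).symm
          refine ⟨⟨v.pred hv0, by simpa [Fin.succ_pred] using hv⟩, ?_⟩
          simp [Fin.succ_pred]
        
      calc ∑ kk : Fin n, f kk.succ * b' kk
          = ∑ kk ∈ Finset.univ.filter (fun kk : Fin n => kk.succ ∈ CS), f kk.succ * b' kk := by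
            refine (Finset.sum_subset (Finset.filter_subset _ _) fun kk _ hkk => ?_).symm
            have : kk.succ ∉ CS := by simpa using hkk
            rw [hb'0 kk this, mul_zero]
        _ = ∑ x : {kk : Fin n // kk.succ ∈ CS}, f (x : Fin n).succ * b' (x : Fin n) :=
            Finset.sum_subtype _ (by simp) _
        _ = ∑ x : {kk : Fin n // kk.succ ∈ CS}, f (x : Fin n).succ * sol ⟨(x : Fin n).succ, x.2⟩ := by
            refine Finset.sum_congr rfl fun x _ => ?_
            congr 1
            simp only [hb'def]
            rw [dif_pos x.2]
        _ = ∑ v : CS, f (v : Fin (n+1)) * sol v := by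
            exact Fintype.sum_bijective _ hfE _ _ (fun x => rfl)
    have F2 : ∀ j : Fin n, j.succ ∈ CS →
        ∑ kk : Fin n, M j.succ kk.succ * b' kk = M j.succ 0 := by
      intro j hj
      rw [hsum (fun v => M j.succ v)]
      have h := congrFun hsolve ⟨j.succ, hj⟩
      simpa [hMSdef, Matrix.mulVec, dotProduct, Matrix.submatrix_apply] using h
    set c : Fin n → ℂ := B *ᵥ b' with hcdef
    have hcM : ∀ j : Fin n, j.succ ∈ CS → c j = M j.succ 0 := by
      intro j hj
      have : c j = ∑ kk : Fin n, M j.succ kk.succ * b' kk := by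
        rw [hcdef]
        show ∑ kk : Fin n, B j kk * b' kk = _
        refine Finset.sum_congr rfl fun kk _ => ?_
        by_cases hkk : kk.succ ∈ CS
        · congr 1
          rcases eq_or_ne j kk with rfl | hne
          · exact hBdiag j
          · refine hBedge j kk (hCSclique ?_ ?_ ?_)
            · exact hj
            · exact hkk
            · exact fun h => hne (Fin.succ_injective n h)
        · rw [hb'0 kk hkk, mul_zero, mul_zero]
      rw [this]
      exact F2 j hj
    set β : ℂ := star b' ⬝ᵥ B *ᵥ b' with hβdef
    have hβ0 : 0 ≤ β := hB.dotProduct_mulVec_nonneg b'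
    have hβreal : starRingEnd ℂ β = β := by
      rw [Complex.le_def] at hβ0
      exact Complex.conj_eq_iff_im.mpr (by simpa using hβ0.2.symm)
    have hβc : β = ∑ kk : Fin n, starRingEnd ℂ (b' kk) * c kk := by
      rw [hβdef]
      rfl
    set y : Fin (n+1) → ℂ := Fin.cases 1 (fun kk => -(b' kk)) with hydef
    have hy0 : y 0 = 1 := rfl
    have hys : ∀ kk : Fin n, y kk.succ = -(b' kk) := fun kk => by
      simp only [hydef, Fin.cases_succ]
    have hysupp : ∀ v, v ∉ CK → y v = 0 := by
      intro v hv
      induction v using Fin.cases with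
      | zero => exact absurd (Finset.mem_insert_self 0 CS) hv
      | succ kk =>
        rw [hys kk, hb'0 kk (fun h => hv (Finset.mem_insert_of_mem h)), neg_zero]
    have h0 := quadform_nonneg_of_support (hpd CK hCKclique).posSemidef y hysupp
    set γ : ℂ := ∑ kk : Fin n, starRingEnd ℂ (b' kk) * M kk.succ 0 with hγdef
    have hγβ : γ = β := by
      rw [hγdef, hβc]
      refine Finset.sum_congr rfl fun kk _ => ?_
      by_cases hkk : kk.succ ∈ CS
      · rw [hcM kk hkk]
      · rw [hb'0 kk hkk]
        simp
    have hyexp : star y ⬝ᵥ M *ᵥ y = M 0 0 - starRingEnd ℂ γ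
        - ∑ u : Fin n, starRingEnd ℂ (b' u)
            * (M u.succ 0 - ∑ v : Fin n, M u.succ v.succ * b' v) := by
      have e1 : star y ⬝ᵥ M *ᵥ y = star (y 0) * (M 0 0 * y 0 + ∑ v : Fin n, M 0 v.succ * y v.succ)
          + ∑ u : Fin n, star (y u.succ) * (M u.succ 0 * y 0
              + ∑ v : Fin n, M u.succ v.succ * y v.succ) := by
        simp only [dotProduct, Matrix.mulVec, Pi.star_apply, Fin.sum_univ_succ]
      rw [e1, hy0]
      have e2 : ∑ v : Fin n, M 0 v.succ * y v.succ = -(starRingEnd ℂ γ) := by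
        have hterm : ∀ v : Fin n, M 0 v.succ * y v.succ
            = -(starRingEnd ℂ (starRingEnd ℂ (b' v) * M v.succ 0)) := by
          intro v
          simp only [hys v, starRingEnd_apply, star_mul', star_star, hM.apply]
          ring
        rw [Finset.sum_congr rfl fun v _ => hterm v, hγdef, _root_.map_sum]
        simp
      rw [e2]
      have e3 : ∀ u : Fin n, star (y u.succ) * (M u.succ 0 * 1
          + ∑ v : Fin n, M u.succ v.succ * y v.succ)
          = -(starRingEnd ℂ (b' u) * (M u.succ 0 - ∑ v : Fin n, M u.succ v.succ * b' v)) := by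
        intro u
        have hsn : ∑ v : Fin n, M u.succ v.succ * y v.succ
            = -∑ v : Fin n, M u.succ v.succ * b' v := by
          rw [← Finset.sum_neg_distrib]
          exact Finset.sum_congr rfl fun v _ => by rw [hys v]; ring
        rw [hys u, hsn]
        simp only [starRingEnd_apply, star_neg]
        ring
      rw [Finset.sum_congr rfl (fun u _ => e3 u), Finset.sum_neg_distrib]
      have hstar1 : (star (1:ℂ)) = 1 := star_one ℂ
      rw [hstar1]
      ring
    have hD : ∑ u : Fin n, starRingEnd ℂ (b' u)
        * (M u.succ 0 - ∑ v : Fin n, M u.succ v.succ * b' v) = 0 := by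
      refine Finset.sum_eq_zero fun u _ => ?_
      by_cases hu : u.succ ∈ CS
      · rw [F2 u hu]
        simp
      · rw [hb'0 u hu]
        simp
    have hab : 0 ≤ M 0 0 - β := by
      have : star y ⬝ᵥ M *ᵥ y = M 0 0 - β := by
        rw [hyexp, hD, sub_zero, hγβ, hβreal]
      rwa [this] at h0
    -- the completion matrix
    set R0 : Matrix (Fin (n+1)) (Fin (n+1)) ℂ :=
      Matrix.of (fun u v => if u = 0 ∧ v = 0 then M 0 0 - β else 0) with hR0def
    have hM00 : starRingEnd ℂ (M 0 0) = M 0 0 := hM.apply 0 0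
    have hR0psd : R0.PosSemidef := by
      refine Matrix.PosSemidef.of_dotProduct_mulVec_nonneg ?_ ?_
      · ext u v
        simp only [Matrix.conjTranspose_apply, hR0def, Matrix.of_apply]
        by_cases hu : u = 0 <;> by_cases hv : v = 0 <;>
          simp [hu, hv, map_sub, hM00, hβreal]
      · intro x
        have hform : star x ⬝ᵥ R0 *ᵥ x = (M 0 0 - β) * (star (x 0) * x 0) := by
          simp only [dotProduct, Matrix.mulVec, hR0def, Matrix.of_apply, Pi.star_apply,
            ite_and]
          rw [Fin.sum_univ_succ, Fin.sum_univ_succ]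
          simp [Fin.succ_ne_zero]
          ring
        rw [hform]
        exact mul_nonneg hab (star_mul_self_nonneg (x 0))
    set L : Matrix (Fin n) (Fin (n+1)) ℂ :=
      Matrix.of (fun i j => Fin.cases (b' i) (fun jj => if jj = i then (1:ℂ) else 0) j) with hLdef
    set A := R0 + Lᴴ * B * L with hAdef
    have hApsd : A.PosSemidef := hR0psd.add (hB.conjTranspose_mul_mul_same L)
    have hLent : ∀ u v, (Lᴴ * B * L) u v
        = star (fun i => L i u) ⬝ᵥ B *ᵥ (fun i => L i v) := by
      intro u v
      simp only [Matrix.mul_apply, Matrix.conjTranspose_apply, dotProduct, Matrix.mulVec,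
        Pi.star_apply, Finset.sum_mul, Finset.mul_sum]
      rw [Finset.sum_comm]
      exact Finset.sum_congr rfl fun p _ => Finset.sum_congr rfl fun q _ => by ring
    have hcol0 : (fun i => L i 0) = b' := by
      funext i
      simp [hLdef]
    have hcols : ∀ j : Fin n, (fun i => L i j.succ) = (fun i => if j = i then (1:ℂ) else 0) := by
      intro j
      funext i
      simp [hLdef]
    have hedot : ∀ (j : Fin n) (w : Fin n → ℂ),
        star (fun i => if j = i then (1:ℂ) else 0) ⬝ᵥ w = w j := by
      intro j w
      simp only [dotProduct, Pi.star_apply, apply_ite, star_one, star_zero, ite_mul,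
        one_mul, zero_mul]
      exact (Finset.sum_ite_eq Finset.univ j w).trans (if_pos (Finset.mem_univ j))
    have hemul : ∀ (j : Fin n), B *ᵥ (fun i => if j = i then (1:ℂ) else 0) = fun p => B p j := by
      intro j
      funext p
      simp only [Matrix.mulVec, dotProduct, mul_ite, mul_one, mul_zero]
      exact (Finset.sum_ite_eq Finset.univ j (fun q => B p q)).trans (if_pos (Finset.mem_univ j))
    have hA00 : A 0 0 = M 0 0 := by
      rw [hAdef, Matrix.add_apply, hLent, hcol0]
      have : R0 0 0 = M 0 0 - β := by simp [hR0def]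
      rw [this, ← hβdef]
      exact sub_add_cancel (M 0 0) β
    have hAs0 : ∀ i : Fin n, A i.succ 0 = c i := by
      intro i
      rw [hAdef, Matrix.add_apply, hLent, hcol0, hcols i]
      have : R0 i.succ 0 = 0 := by simp [hR0def, Fin.succ_ne_zero i]
      rw [this, zero_add, hedot]
    have hA0s : ∀ j : Fin n, A 0 j.succ = starRingEnd ℂ (c j) := by
      intro j
      rw [hAdef, Matrix.add_apply, hLent, hcol0, hcols j]
      have h1 : R0 0 j.succ = 0 := by simp [hR0def, Fin.succ_ne_zero j]
      rw [h1, zero_add, hemul j]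
      have h2 : c j = ∑ q : Fin n, B j q * b' q := rfl
      rw [h2, _root_.map_sum]
      simp only [dotProduct, Pi.star_apply]
      refine Finset.sum_congr rfl fun q _ => ?_
      simp only [starRingEnd_apply, star_mul', hBH.apply]
      ring
    have hAss : ∀ i j : Fin n, A i.succ j.succ = B i j := by
      intro i j
      rw [hAdef, Matrix.add_apply, hLent, hcols i, hcols j]
      have h1 : R0 i.succ j.succ = 0 := by simp [hR0def, Fin.succ_ne_zero i]
      rw [h1, zero_add, hemul j, hedot]
    refine ⟨A - M, ?_, ?_⟩
    · intro i j hij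
      have hAM : A i j = M i j := by
        induction i using Fin.cases with
        | zero =>
          induction j using Fin.cases with
          | zero => exact hA00
          | succ jj =>
            rcases hij with h | h
            · exact absurd h.symm (Fin.succ_ne_zero jj)
            · have hjj : jj.succ ∈ CS := (hCSmem _).mpr h
              rw [hA0s jj, hcM jj hjj, starRingEnd_apply]
              exact hM.apply 0 jj.succ
        | succ ii =>
          induction j using Fin.cases with
          | zero =>
            rcases hij with h | h
            · exact absurd h (Fin.succ_ne_zero ii)
            · have hii : ii.succ ∈ CS := (hCSmem _).mpr h.symm
              rw [hAs0 ii, hcM ii hii]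
          | succ jj =>
            rcases hij with h | h
            · have hiijj : ii = jj := Fin.succ_injective n h
              subst hiijj
              rw [hAss ii ii, hBdiag ii]
            · rw [hAss ii jj, hBedge ii jj h]
      rw [Matrix.sub_apply, hAM, sub_self]
    · have : M + (A - M) = A := by abel
      rw [this]
      exact hApsd

lemma aux2_completion {k : ℕ} (G : SimpleGraph (Fin k)) (σ : Equiv.Perm (Fin k))
    (hσ : ∀ i : Fin k, G.IsClique {v | v = σ i ∨ (i < σ.symm v ∧ G.Adj (σ i) v)})
    (M : Matrix (Fin k) (Fin k) ℂ) (hM : M.IsHermitian)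
    (hpd : ∀ C : Finset (Fin k), G.IsClique (C : Set (Fin k)) →
      (M.submatrix (fun i : C => (i : Fin k)) (fun j : C => (j : Fin k))).PosDef) :
    ∃ N : Matrix (Fin k) (Fin k) ℂ,
      (∀ i j : Fin k, (i = j ∨ G.Adj i j) → N i j = 0) ∧ (M + N).PosSemidef := by
  classical
  set G' : SimpleGraph (Fin k) := SimpleGraph.comap σ G with hG'
  have hadj : ∀ i j, G'.Adj i j ↔ G.Adj (σ i) (σ j) := fun i j => Iff.rfl
  have hPEO' : ∀ i : Fin k, G'.IsClique {v | v = i ∨ (i < v ∧ G'.Adj i v)} := by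
    intro i a ha b hb hab
    have key : ∀ x, (x = i ∨ (i < x ∧ G'.Adj i x)) →
        (σ x = σ i ∨ (i < σ.symm (σ x) ∧ G.Adj (σ i) (σ x))) := by
      rintro x (rfl | ⟨hlt, hadjx⟩)
      · exact Or.inl rfl
      · exact Or.inr ⟨by simpa using hlt, hadjx⟩
    exact hσ i (key a ha) (key b hb) (fun h => hab (σ.injective h))
  set M' := M.submatrix σ σ with hM'def
  have hM' : M'.IsHermitian := hM.submatrix σ
  have hpd' : ∀ C : Finset (Fin k), G'.IsClique (C : Set (Fin k)) →
      (M'.submatrix (fun i : C => (i : Fin k)) (fun j : C => (j : Fin k))).PosDef := by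
    intro C' hC'
    set C : Finset (Fin k) := C'.map σ.toEmbedding with hCdef
    have hmemC : ∀ x, x ∈ C ↔ ∃ y ∈ C', σ y = x := by
      intro x
      simp only [hCdef, Finset.mem_map, Equiv.coe_toEmbedding]
    have hC : G.IsClique (C : Set (Fin k)) := by
      intro a ha b hb hab
      obtain ⟨x, hx, rfl⟩ := (hmemC a).mp ha
      obtain ⟨y, hy, rfl⟩ := (hmemC b).mp hb
      exact hC' hx hy (fun h => hab (by rw [h]))
    have hpdC := hpd C hC
    have hf : Function.Bijective (fun x : {x // x ∈ C'} =>
        (⟨σ (x : Fin k), (hmemC _).mpr ⟨x, x.2, rfl⟩⟩ : {x // x ∈ C})) := by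
      constructor
      · intro x y hxy
        exact Subtype.ext (σ.injective (congrArg Subtype.val hxy))
      · rintro ⟨y, hy⟩
        obtain ⟨x, hx, rfl⟩ := (hmemC y).mp hy
        exact ⟨⟨x, hx⟩, rfl⟩
    set e := Equiv.ofBijective _ hf with hedef
    have heq : (M'.submatrix (fun i : C' => (i : Fin k)) (fun j : C' => (j : Fin k)))
        = (M.submatrix (fun i : C => (i : Fin k)) (fun j : C => (j : Fin k))).submatrix e e := by
      ext x y
      rfl
    rw [heq]
    exact myPosDef_submatrix_equiv hpdC e
  obtain ⟨N', hN'zero, hpsd⟩ := aux_completion k G' hPEO' M' hM' hpd'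
  refine ⟨N'.submatrix σ.symm σ.symm, ?_, ?_⟩
  · intro i j hij
    apply hN'zero
    rcases hij with rfl | h
    · exact Or.inl rfl
    · right
      show G.Adj (σ (σ.symm i)) (σ (σ.symm j))
      simpa using h
  · have heq : M + N'.submatrix σ.symm σ.symm = (M' + N').submatrix σ.symm σ.symm := by
      ext i j
      simp [hM'def, Matrix.submatrix_apply, Matrix.add_apply]
    rw [heq]
    exact hpsd.submatrix σ.symm

def IsPerfectElimOrdering {n : ℕ} (G : SimpleGraph (Fin n)) (σ : Equiv.Perm (Fin n)) : Prop :=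
  ∀ i : Fin n, G.IsClique {v | v = σ i ∨ (i < σ.symm v ∧ G.Adj (σ i) v)}

/-- A finite graph is chordal iff it admits a perfect elimination ordering. -/
def IsChordal {n : ℕ} (G : SimpleGraph (Fin n)) : Prop :=
  ∃ σ : Equiv.Perm (Fin n), IsPerfectElimOrdering G σ

set_option maxHeartbeats 1000000 in
/-- Positive completion for partially positive matrices on a chordal graph:
if every clique-indexed principal submatrix of a Hermitian `M` is PSD, then
`M` can be corrected off the edges of `G` to a PSD matrix. -/
theorem chordal_positive_completion {n : ℕ} (G : SimpleGraph (Fin n))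
    (hG : IsChordal G) (M : Matrix (Fin n) (Fin n) ℂ) (hM : M.IsHermitian)
    (hpos : ∀ C : Finset (Fin n), G.IsClique (C : Set (Fin n)) →
      (M.submatrix (fun i : C => (i : Fin n)) (fun j : C => (j : Fin n))).PosSemidef) :
    ∃ N : Matrix (Fin n) (Fin n) ℂ, N.IsHermitian ∧
      (∀ i j : Fin n, (i = j ∨ G.Adj i j) → N i j = 0) ∧ (M + N).PosSemidef := by
  classical
  obtain ⟨σ, hσ⟩ := hG
  -- step 1: for each m, a completion of the perturbed matrix
  have key : ∀ m : ℕ, ∃ N : Matrix (Fin n) (Fin n) ℂ,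
      (∀ i j, (i = j ∨ G.Adj i j) → N i j = 0) ∧
      (M + (((1:ℝ)/(m+1) : ℝ) : ℂ) • 1 + N).PosSemidef := by
    intro m
    set ε : ℝ := (1:ℝ)/(m+1) with hεdef
    have hεpos : 0 < ε := by positivity
    set Mm := M + (ε : ℂ) • (1 : Matrix (Fin n) (Fin n) ℂ) with hMmdef
    have h1H : ((ε:ℂ) • (1 : Matrix (Fin n) (Fin n) ℂ)).IsHermitian := by
      show _ᴴ = _
      rw [Matrix.conjTranspose_smul, Matrix.conjTranspose_one]
      congr 1
      exact Complex.conj_ofReal ε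
    have hMmH : Mm.IsHermitian := hM.add h1H
    have hpdm : ∀ C : Finset (Fin n), G.IsClique (C : Set (Fin n)) →
        (Mm.submatrix (fun i : C => (i : Fin n)) (fun j : C => (j : Fin n))).PosDef := by
      intro C hC
      have hsub : Mm.submatrix (fun i : C => (i : Fin n)) (fun j : C => (j : Fin n))
          = M.submatrix (fun i : C => (i : Fin n)) (fun j : C => (j : Fin n))
            + (ε:ℂ) • (1 : Matrix C C ℂ) := by
        ext i j
        rcases eq_or_ne i j with rfl | hij
        · simp [hMmdef, Matrix.one_apply]
        · have hne : (i : Fin n) ≠ (j : Fin n) := fun hh => hij (Subtype.ext hh)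
          simp [hMmdef, Matrix.one_apply, hne, hij]
      rw [hsub]
      refine Matrix.PosDef.posSemidef_add (hpos C hC) ?_
      have hdiag : (ε:ℂ) • (1 : Matrix C C ℂ) = Matrix.diagonal (fun _ => (ε:ℂ)) := by
        ext i j
        rcases eq_or_ne i j with rfl | hij
        · simp [Matrix.one_apply]
        · simp [Matrix.one_apply, hij, Matrix.diagonal_apply_ne _ hij]
      rw [hdiag]
      exact Matrix.PosDef.diagonal (fun _ => by positivity)
    exact aux2_completion G σ hσ Mm hMmH hpdm
  choose N hNzero hNpsd using key
  have hNherm : ∀ m, (N m).IsHermitian := by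
    intro m
    have h1 : (M + (((1:ℝ)/(m+1) : ℝ) : ℂ) • 1 + N m).IsHermitian := (hNpsd m).1
    have h2 : ((((1:ℝ)/(m+1) : ℝ) : ℂ) • (1 : Matrix (Fin n) (Fin n) ℂ)).IsHermitian := by
      show _ᴴ = _
      rw [Matrix.conjTranspose_smul, Matrix.conjTranspose_one]
      congr 1
      exact Complex.conj_ofReal _
    have : N m = (M + (((1:ℝ)/(m+1) : ℝ) : ℂ) • 1 + N m)
        - (M + (((1:ℝ)/(m+1) : ℝ) : ℂ) • 1) := by abel
    rw [this]
    exact h1.sub (hM.add h2)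
  -- step 2: uniform bound on the entries of N m
  set S1 : ℝ := ∑ i : Fin n, ‖M i i‖ with hS1def
  set S2 : ℝ := ∑ p : Fin n × Fin n, ‖M p.1 p.2‖ with hS2def
  have hS1nn : 0 ≤ S1 := Finset.sum_nonneg fun i _ => norm_nonneg _
  have hS2nn : 0 ≤ S2 := Finset.sum_nonneg fun p _ => norm_nonneg _
  set R : ℝ := 2*S1 + S2 + 3 with hRdef
  have hRnn : 0 ≤ R := by linarith
  have hbound : ∀ m i j, ‖N m i j‖ ≤ R := by
    intro m i j
    set ε : ℝ := (1:ℝ)/(m+1) with hεdef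
    have hεpos : 0 < ε := by positivity
    have hεle : ε ≤ 1 := by
      rw [hεdef]
      rw [div_le_one (by positivity)]
      linarith [Nat.cast_nonneg (α := ℝ) m]
    set P := M + (ε : ℂ) • (1 : Matrix (Fin n) (Fin n) ℂ) + N m with hPdef
    have hPpsd : P.PosSemidef := hNpsd m
    have hdiagP : ∀ u : Fin n, P u u = M u u + (ε:ℂ) := by
      intro u
      simp [hPdef, Matrix.one_apply, hNzero m u u (Or.inl rfl)]
    have hdre : ∀ u : Fin n, (P u u).re ≤ S1 + 1 := by
      intro u
      rw [hdiagP u]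
      have h1 : (M u u + (ε:ℂ)).re = (M u u).re + ε := by simp
      rw [h1]
      have h2 : (M u u).re ≤ ‖M u u‖ := Complex.re_le_norm _
      have h3 : ‖M u u‖ ≤ S1 :=
        Finset.single_le_sum (f := fun i => ‖M i i‖)
          (fun _ _ => norm_nonneg _) (Finset.mem_univ u)
      linarith
    have hPij : ‖P i j‖ ≤ 2*S1 + 2 := by
      have := psd_entry_bound hPpsd i j
      have h1 := hdre i
      have h2 := hdre j
      linarith
    have hNij : N m i j = P i j - M i j - (ε:ℂ) * (1 : Matrix (Fin n) (Fin n) ℂ) i j := by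
      simp only [hPdef, Matrix.add_apply, Matrix.smul_apply, smul_eq_mul]
      ring
    have habs3 : ‖N m i j‖ ≤ ‖P i j‖ + ‖M i j‖
        + ‖(ε:ℂ) * (1 : Matrix (Fin n) (Fin n) ℂ) i j‖ := by
      rw [hNij, sub_sub]
      calc ‖P i j - (M i j + (ε:ℂ) * (1 : Matrix (Fin n) (Fin n) ℂ) i j)‖
          ≤ ‖P i j‖ + ‖M i j + (ε:ℂ) * (1 : Matrix (Fin n) (Fin n) ℂ) i j‖ := by
            exact (norm_sub_le _ _)
        _ ≤ _ := by
            have := norm_add_le (M i j) ((ε:ℂ) * (1 : Matrix (Fin n) (Fin n) ℂ) i j)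
            linarith
    have hMij : ‖M i j‖ ≤ S2 :=
      Finset.single_le_sum (f := fun p : Fin n × Fin n => ‖M p.1 p.2‖)
        (fun _ _ => norm_nonneg _) (Finset.mem_univ (i, j))
    have hεterm : ‖(ε:ℂ) * (1 : Matrix (Fin n) (Fin n) ℂ) i j‖ ≤ 1 := by
      rcases eq_or_ne i j with rfl | hij
      · simp only [Matrix.one_apply_eq, mul_one]
        rw [Complex.norm_real, Real.norm_eq_abs]
        rw [abs_of_pos hεpos]
        exact hεle
      · simp [Matrix.one_apply_ne hij]
    rw [hRdef]
    linarith
  -- step 3: extract a convergent subsequence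
  set seq : ℕ → (Fin n → Fin n → ℂ) := fun m i j => N m i j with hseqdef
  have hseqmem : ∀ m, seq m ∈ Metric.closedBall (0 : Fin n → Fin n → ℂ) R := by
    intro m
    rw [Metric.mem_closedBall, dist_zero_right]
    refine (pi_norm_le_iff_of_nonneg hRnn).mpr fun i => ?_
    refine (pi_norm_le_iff_of_nonneg hRnn).mpr fun j => ?_
    simpa using hbound m i j
  obtain ⟨Nlim, -, φ, hφ, hconv⟩ :=
    tendsto_subseq_of_bounded Metric.isBounded_closedBall hseqmem
  have hptwise : ∀ i j, Filter.Tendsto (fun m => N (φ m) i j) Filter.atTop (nhds (Nlim i j)) := by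
    intro i j
    have h1 := (tendsto_pi_nhds.mp hconv) i
    exact (tendsto_pi_nhds.mp h1) j
  have hlimherm : (Matrix.of Nlim).IsHermitian := by
    show _ᴴ = _
    ext i j
    rw [Matrix.conjTranspose_apply, Matrix.of_apply, Matrix.of_apply]
    have h1 : Filter.Tendsto (fun m => star (N (φ m) j i)) Filter.atTop
        (nhds (star (Nlim j i))) := (hptwise j i).star
    have h2 : (fun m => star (N (φ m) j i)) = fun m => N (φ m) i j :=
      funext fun m => (hNherm (φ m)).apply i j
    rw [h2] at h1
    exact tendsto_nhds_unique h1 (hptwise i j)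
  refine ⟨Matrix.of Nlim, hlimherm, ?_, ?_⟩
  · intro i j hij
    have h2 : (fun m => N (φ m) i j) = fun _ => (0:ℂ) :=
      funext fun m => hNzero (φ m) i j hij
    have h1 := hptwise i j
    rw [h2] at h1
    exact (tendsto_nhds_unique h1 tendsto_const_nhds).symm ▸ rfl
  · refine Matrix.PosSemidef.of_dotProduct_mulVec_nonneg ?_ ?_
    · exact hM.add hlimherm
    · intro x
      set Q : (Fin n → Fin n → ℂ) → ℂ :=
        fun A => ∑ u, star (x u) * ∑ v, A u v * x v with hQdef
      have hQform : ∀ A : Matrix (Fin n) (Fin n) ℂ,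
          star x ⬝ᵥ A *ᵥ x = Q (fun u v => A u v) := fun A => rfl
      have hQcont : Continuous Q := by
        refine continuous_finset_sum _ fun u _ => Continuous.mul continuous_const ?_
        refine continuous_finset_sum _ fun v _ => ?_
        exact ((_root_.continuous_apply (A := fun _ : Fin n => ℂ) v).comp
          (_root_.continuous_apply (A := fun _ : Fin n => Fin n → ℂ) u)).mul continuous_const
      have hεtend : Filter.Tendsto (fun m : ℕ => (((1:ℝ)/(φ m+1) : ℝ) : ℂ))
          Filter.atTop (nhds 0) := by
        have h1 : Filter.Tendsto (fun m : ℕ => ((1:ℝ)/(m+1))) Filter.atTop (nhds 0) :=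
          tendsto_one_div_add_atTop_nhds_zero_nat
        have h2 := h1.comp hφ.tendsto_atTop
        have h3 := (Complex.continuous_ofReal.tendsto 0).comp h2
        simp only [Function.comp_def] at h3
        simpa using h3
      have hmat : Filter.Tendsto
          (fun m => (fun u v => (M + (((1:ℝ)/(φ m+1) : ℝ) : ℂ) • 1 + N (φ m)) u v))
          Filter.atTop (nhds (fun u v => (M + Matrix.of Nlim) u v)) := by
        rw [tendsto_pi_nhds]
        intro u
        rw [tendsto_pi_nhds]
        intro v
        have hterm : ∀ m, (M + (((1:ℝ)/(φ m+1) : ℝ) : ℂ) • 1 + N (φ m)) u v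
            = M u v + (((1:ℝ)/(φ m+1) : ℝ) : ℂ) * (1 : Matrix (Fin n) (Fin n) ℂ) u v
              + N (φ m) u v := by
          intro m
          simp [Matrix.add_apply, Matrix.smul_apply]
        rw [funext hterm]
        have h1 : Filter.Tendsto
            (fun m => (((1:ℝ)/(φ m+1) : ℝ) : ℂ) * (1 : Matrix (Fin n) (Fin n) ℂ) u v)
            Filter.atTop (nhds 0) := by
          have := hεtend.mul_const ((1 : Matrix (Fin n) (Fin n) ℂ) u v)
          simpa using this
        have h2 := (tendsto_const_nhds (x := M u v) (f := Filter.atTop (α := ℕ))).add h1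
        have h3 := h2.add (hptwise u v)
        simpa using h3
      have hQtend := (hQcont.tendsto _).comp hmat
      have hterm0 : ∀ m, 0 ≤ Q (fun u v => (M + (((1:ℝ)/(φ m+1) : ℝ) : ℂ) • 1 + N (φ m)) u v) := by
        intro m
        rw [← hQform]
        exact (hNpsd (φ m)).dotProduct_mulVec_nonneg x
      set L := Q (fun u v => (M + Matrix.of Nlim) u v) with hLdef
      have hre : 0 ≤ L.re := by
        have h1 := (Complex.continuous_re.tendsto L).comp hQtend
        refine ge_of_tendsto' h1 fun m => ?_
        have := hterm0 m
        rw [Complex.le_def] at this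
        simpa using this.1
      have him : L.im = 0 := by
        have h1 := (Complex.continuous_im.tendsto L).comp hQtend
        have h2 : (fun m => (Q (fun u v => (M + (((1:ℝ)/(φ m+1) : ℝ) : ℂ) • 1 + N (φ m)) u v)).im)
            = fun _ => (0:ℝ) := by
          funext m
          have := hterm0 m
          rw [Complex.le_def] at this
          simpa using this.2.symm
        have h1' : Filter.Tendsto (fun _ : ℕ => (0:ℝ)) Filter.atTop (nhds L.im) := by
          have hcomp : ((fun z => Complex.im z) ∘ (fun m => Q (fun u v =>
              (M + (((1:ℝ)/(φ m+1) : ℝ) : ℂ) • 1 + N (φ m)) u v))) = fun _ => (0:ℝ) := h2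
          rw [← hcomp]
          exact h1
        exact tendsto_nhds_unique h1' tendsto_const_nhds
      rw [hQform]
      show (0:ℂ) ≤ L
      rw [Complex.le_def]
      constructor
      · simpa using hre
      · simp [him]
end

section
/- For a chordal graph G on {1,…,n}, a Hermitian matrix M supported on G (M_{ij} = 0 unless i = j or {i,j} ∈ E(G)) is the projection (entrywise restriction to positions of G and the diagonal) of some positive semidefinite matrix if and only if the principal submatrix (M_{ij})_{i,j∈C} is positive semidefinite for every maximal clique C of G. -/
open ComplexOrder

open Classical in
/-- Entrywise projection onto the positions of `G` (edges and the diagonal). -/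
noncomputable def projOn {n : ℕ} (G : SimpleGraph (Fin n)) (M : Matrix (Fin n) (Fin n) ℂ) :
    Matrix (Fin n) (Fin n) ℂ :=
  fun i j => if i = j ∨ G.Adj i j then M i j else 0

open Matrix Filter Topology

namespace ChordalAux
variable {n : ℕ}

lemma vecMulVec_mulVec' (u v x : Fin n → ℂ) :
    (vecMulVec u v) *ᵥ x = (v ⬝ᵥ x) • u := by
  funext i
  simp only [mulVec, dotProduct, vecMulVec_apply, Pi.smul_apply, smul_eq_mul, Finset.sum_mul]
  exact Finset.sum_congr rfl fun j _ => by ring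

lemma vecMulVec_conjT (u v : Fin n → ℂ) :
    (vecMulVec u v)ᴴ = vecMulVec (star v) (star u) := by
  funext i j
  simp [conjTranspose_apply, vecMulVec_apply, mul_comm]

lemma dotProduct_supported (v g : Fin n → ℂ) (D : Finset (Fin n))
    (hv : ∀ i ∉ D, v i = 0) : v ⬝ᵥ g = ∑ i : D, v (i : Fin n) * g (i : Fin n) := by
  rw [Finset.sum_coe_sort D (fun i => v i * g i)]
  rw [dotProduct]
  refine (Finset.sum_subset (Finset.subset_univ D) ?_).symm
  intro i _ hi
  rw [hv i hi, zero_mul]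

lemma quadform_submatrix (M : Matrix (Fin n) (Fin n) ℂ) (D : Finset (Fin n))
    (x : Fin n → ℂ) (hx : ∀ i ∉ D, x i = 0) :
    star x ⬝ᵥ M *ᵥ x
      = star (fun i : D => x (i : Fin n)) ⬝ᵥ
        (M.submatrix (fun i : D => (i : Fin n)) (fun j : D => (j : Fin n))) *ᵥ
        (fun i : D => x (i : Fin n)) := by
  have hstar : ∀ i ∉ D, star x i = 0 := fun i hi => by
    simp [Pi.star_apply, hx i hi]
  rw [dotProduct_supported (star x) (M *ᵥ x) D hstar]
  simp only [dotProduct, mulVec, submatrix_apply, Pi.star_apply]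
  refine Finset.sum_congr rfl fun i _ => ?_
  congr 1
  have := dotProduct_supported x (fun j => M (i : Fin n) j) D hx
  rw [dotProduct_comm] at this
  rw [show (∑ x_1 : Fin n, M (i:Fin n) x_1 * x x_1) = (fun j => M (i:Fin n) j) ⬝ᵥ x from rfl, this]
  exact Finset.sum_congr rfl fun j _ => by ring

lemma exists_maximal_clique (G : SimpleGraph (Fin n)) (C : Finset (Fin n))
    (hC : G.IsClique (C : Set (Fin n))) :
    ∃ D : Finset (Fin n), (G.IsClique (D : Set (Fin n)) ∧
      ∀ E : Finset (Fin n), G.IsClique (E : Set (Fin n)) → D ⊆ E → D = E) ∧ C ⊆ D := by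
  classical
  let s : Finset (Finset (Fin n)) :=
    Finset.univ.filter (fun D => G.IsClique (D : Set (Fin n)) ∧ C ⊆ D)
  have hCs : C ∈ s := by simp [s, hC]
  obtain ⟨m, hm, hmax⟩ := Finset.exists_maximal (s := s) ⟨C, hCs⟩
  simp only [s, Finset.mem_filter] at hm
  refine ⟨m, ⟨hm.2.1, ?_⟩, hm.2.2⟩
  intro E hE hmE
  by_contra hne
  exact hne (le_antisymm hmE (hmax (by simp [s, hE, hm.2.2.trans hmE]) hmE))



lemma star_mul_self_pos' {s : ℂ} (hs : s ≠ 0) : 0 < star s * s := by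
  rcases (star_mul_self_nonneg s).lt_or_eq with h | h
  · exact h
  · exfalso; apply hs
    have h0 : (starRingEnd ℂ) s * s = 0 := h.symm
    simpa [Complex.ext_iff, Complex.normSq_eq_zero] using congrArg Complex.normSq h0

lemma conj_eq_of_nonneg' {z : ℂ} (h : 0 ≤ z) : star z = z := by
  rw [Complex.star_def, Complex.conj_eq_iff_im]
  exact ((Complex.le_def).mp h).2.symm



lemma quad_two (P : Matrix (Fin n) (Fin n) ℂ) (i j : Fin n) (c : ℂ) :
    star ((Pi.single i 1 : Fin n → ℂ) + c • (Pi.single j 1 : Fin n → ℂ)) ⬝ᵥ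
      P *ᵥ ((Pi.single i 1 : Fin n → ℂ) + c • (Pi.single j 1 : Fin n → ℂ))
    = P i i + c * P i j + star c * P j i + star c * c * P j j := by
  have hs : star ((Pi.single i 1 : Fin n → ℂ) + c • (Pi.single j 1 : Fin n → ℂ))
      = (Pi.single i 1 : Fin n → ℂ) + star c • (Pi.single j 1 : Fin n → ℂ) := by
    funext l
    simp only [Pi.star_apply, Pi.add_apply, Pi.smul_apply, smul_eq_mul, star_add, star_mul']
    by_cases hl : l = i <;> by_cases hl2 : l = j <;>
      simp [Pi.single_apply, hl, hl2]
  rw [hs, mulVec_add, mulVec_smul, mulVec_single_one, mulVec_single_one,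
    dotProduct_add, add_dotProduct, add_dotProduct, dotProduct_smul,
    dotProduct_smul, smul_dotProduct, smul_dotProduct]
  simp only [single_dotProduct, dotProduct_single, smul_eq_mul, one_mul, mul_one, col_apply]
  ring

lemma psd_entry_bound (P : Matrix (Fin n) (Fin n) ℂ) (hP : P.PosSemidef) (i j : Fin n) :
    ‖P i j‖ ≤ ‖P i i‖ + ‖P j j‖ := by
  by_cases hz : P i j = 0
  · simp [hz]; positivity
  set z := P i j with hzdef
  set c : ℂ := -((starRingEnd ℂ) z) / ‖z‖ with hc
  have hq := hP.dotProduct_mulVec_nonneg ((Pi.single i 1 : Fin n → ℂ) + c • (Pi.single j 1 : Fin n → ℂ))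
  rw [quad_two] at hq
  have hji : P j i = (starRingEnd ℂ) z := by
    have := hP.1.apply i j
    rw [hzdef, ← this]
    simp [Complex.star_def]
  have hnz : (‖z‖ : ℂ) ≠ 0 := by
    simp [Complex.ofReal_ne_zero, norm_ne_zero_iff, hz]
  have hzz : (starRingEnd ℂ) z * z = (‖z‖ : ℂ) * ‖z‖ := by
    rw [mul_comm, Complex.mul_conj']
    · norm_cast
      ring
  have hstarc : star c = -z / ‖z‖ := by
    rw [hc]
    simp [star_div₀, Complex.star_def, Complex.conj_conj, Complex.conj_ofReal]
  have key : P i i + c * z + star c * ((starRingEnd ℂ) z) + star c * c * P j j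
      = P i i + P j j - 2 * (‖z‖ : ℂ) := by
    rw [hstarc, hc]
    field_simp
    rw [hzz]
    field_simp
    ring
  rw [hji, key] at hq
  have hre := (Complex.le_def.mp hq).1
  simp only [Complex.sub_re, Complex.add_re, Complex.mul_re, Complex.ofReal_re,
    Complex.ofReal_im, Complex.zero_re] at hre
  have h1 : (P i i).re ≤ ‖P i i‖ := Complex.re_le_norm _
  have h2 : (P j j).re ≤ ‖P j j‖ := Complex.re_le_norm _
  have h3 : 0 ≤ ‖z‖ := norm_nonneg _
  norm_num at hre
  linarith


lemma completion_of_identity_peo (G : SimpleGraph (Fin n))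
    (hPEO : ∀ i : Fin n, G.IsClique {v | v = i ∨ (i < v ∧ G.Adj i v)})
    (M : Matrix (Fin n) (Fin n) ℂ) (hM : M.IsHermitian)
    (hPD : ∀ C : Finset (Fin n), G.IsClique (C : Set (Fin n)) →
      ∀ x : Fin n → ℂ, (∀ i, i ∉ C → x i = 0) → x ≠ 0 → 0 < star x ⬝ᵥ M *ᵥ x) :
    ∃ P : Matrix (Fin n) (Fin n) ℂ, P.PosSemidef ∧
      ∀ i j : Fin n, (i = j ∨ G.Adj i j) → P i j = M i j := by
  classical
  suffices h : ∀ d : ℕ, ∃ P : Matrix (Fin n) (Fin n) ℂ, P.PosSemidef ∧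
      (∀ i j : Fin n, (i : ℕ) < n - d → P i j = 0) ∧
      (∀ x : Fin n → ℂ, (∀ i : Fin n, (i : ℕ) < n - d → x i = 0) → x ≠ 0 →
        0 < star x ⬝ᵥ P *ᵥ x) ∧
      (∀ i j : Fin n, n - d ≤ (i : ℕ) → n - d ≤ (j : ℕ) → (i = j ∨ G.Adj i j) →
        P i j = M i j) by
    obtain ⟨P, h1, _, _, h4⟩ := h n
    exact ⟨P, h1, fun i j hij => h4 i j (by simp) (by simp) hij⟩
  intro d
  induction d with
  | zero =>
      refine ⟨0, Matrix.PosSemidef.zero, fun i j _ => rfl, ?_, ?_⟩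
      · intro x hx hxne
        exact absurd (funext fun i => hx i (by simpa using i.isLt)) hxne
      · intro i j hi _ _
        exact absurd i.isLt (by omega)
  | succ d IH =>
      obtain ⟨P, hPSD, hrow, hstrict, hagree⟩ := IH
      by_cases hd : d < n
      swap
      · have heq : n - (d + 1) = n - d := by omega
        rw [heq]
        exact ⟨P, hPSD, hrow, hstrict, hagree⟩
      set k : ℕ := n - (d + 1) with hkdef
      have hkn : k < n := by omega
      have hk1 : n - d = k + 1 := by omega
      rw [hk1] at hrow hstrict hagree
      set κ : Fin n := ⟨k, hkn⟩ with hκdef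
      set S : Finset (Fin n) := Finset.univ.filter (fun j => κ < j ∧ G.Adj κ j) with hSdef
      have hmemS : ∀ j : Fin n, j ∈ S ↔ κ < j ∧ G.Adj κ j := by
        intro j; simp [hSdef]
      have hSval : ∀ j : Fin n, j ∈ S → k + 1 ≤ (j : ℕ) := by
        intro j hj
        have := ((hmemS j).mp hj).1
        rw [Fin.lt_def] at this
        exact this
      have hκS : κ ∉ S := fun h => lt_irrefl κ ((hmemS κ).mp h).1
      have hPcol : ∀ i j : Fin n, (j : ℕ) < k + 1 → P i j = 0 := by
        intro i j hj
        rw [← hPSD.1.apply i j, hrow j i hj, star_zero]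
      have hPκrow : ∀ j, P κ j = 0 := fun j => hrow κ j (Nat.lt_succ_self k)
      have hPκcol : ∀ i, P i κ = 0 := fun i => hPcol i κ (Nat.lt_succ_self k)
      -- clique
      have hCset : (↑(insert κ S) : Set (Fin n)) = {v | v = κ ∨ (κ < v ∧ G.Adj κ v)} := by
        ext v
        simp only [Finset.coe_insert, Set.mem_insert_iff, Finset.mem_coe, hmemS v,
          Set.mem_setOf_eq]
      have hCclique : G.IsClique (↑(insert κ S) : Set (Fin n)) := by
        rw [hCset]; exact hPEO κ
      have hMP : ∀ i j : Fin n, i ∈ S → j ∈ S → M i j = P i j := by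
        intro i j hi hj
        by_cases hij : i = j
        · subst hij
          exact (hagree i i (hSval i hi) (hSval i hi) (Or.inl rfl)).symm
        · have hadj : G.Adj i j := hCclique (by simp [hi]) (by simp [hj]) hij
          exact (hagree i j (hSval i hi) (hSval j hj) (Or.inr hadj)).symm
      -- solve for w
      let ext : (↥S → ℂ) → (Fin n → ℂ) := fun u i => if h : i ∈ S then u ⟨i, h⟩ else 0
      have hext_supp : ∀ u (i : Fin n), i ∉ S → ext u i = 0 := by
        intro u i hi; simp [ext, hi]
      have hext_supp' : ∀ u (i : Fin n), (i : ℕ) < k + 1 → ext u i = 0 := by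
        intro u i hi
        refine hext_supp u i (fun hmem => ?_)
        have := hSval i hmem; omega
      have hext_add : ∀ u v, ext (u + v) = ext u + ext v := by
        intro u v; funext i; by_cases h : i ∈ S <;> simp [ext, h]
      have hext_smul : ∀ (r : ℂ) u, ext (r • u) = r • ext u := by
        intro r u; funext i; by_cases h : i ∈ S <;> simp [ext, h]
      let f : (↥S → ℂ) →ₗ[ℂ] (↥S → ℂ) :=
        { toFun := fun u => fun j => P.mulVec (ext u) (j : Fin n)
          map_add' := fun u v => by
            funext j
            simp only [hext_add, mulVec_add, Pi.add_apply]
          map_smul' := fun r u => by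
            funext j
            simp only [hext_smul, mulVec_smul, Pi.smul_apply, RingHom.id_apply] }
      have hker : ∀ u, f u = 0 → u = 0 := by
        intro u hu
        by_contra hne
        have hyne : ext u ≠ 0 := by
          intro h0
          apply hne
          funext j
          have := congrFun h0 (j : Fin n)
          simpa [ext, j.2] using this
        have hq := hstrict (ext u) (hext_supp' u) hyne
        have hzero : star (ext u) ⬝ᵥ P *ᵥ (ext u) = 0 := by
          rw [dotProduct]
          apply Finset.sum_eq_zero
          intro i _
          by_cases hiS : i ∈ S
          · have h0 : P.mulVec (ext u) i = 0 := by
              have := congrFun hu ⟨i, hiS⟩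
              exact this
            rw [h0, mul_zero]
          · simp [Pi.star_apply, hext_supp u i hiS]
        rw [hzero] at hq
        exact lt_irrefl 0 hq
      have hinj : Function.Injective f := by
        intro u v huv
        have := hker (u - v) (by rw [map_sub, huv, sub_self])
        exact sub_eq_zero.mp this
      obtain ⟨u₀, hu₀⟩ := (LinearMap.injective_iff_surjective.mp hinj)
        (fun j : ↥S => M (j : Fin n) κ)
      set w : Fin n → ℂ := ext u₀ with hwdef
      have hw_supp : ∀ i, i ∉ S → w i = 0 := hext_supp u₀
      have hw_supp' : ∀ i : Fin n, (i : ℕ) < k + 1 → w i = 0 := hext_supp' u₀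
      have hw : ∀ j : Fin n, j ∈ S → P.mulVec w j = M j κ := by
        intro j hj
        exact congrFun hu₀ ⟨j, hj⟩
      have hwκ : w κ = 0 := hw_supp κ hκS
      set c : Fin n → ℂ := P.mulVec w with hcdef
      set e : Fin n → ℂ := Pi.single κ 1 with hedef
      set a : ℂ := M κ κ with hadef
      set β : ℂ := star w ⬝ᵥ c with hβdef
      set t : ℂ := a - β with htdef
      have hstare : star e = e := by
        funext i; by_cases h : i = κ <;> simp [hedef, Pi.single_apply, h]
      have hcκ : c κ = 0 := by
        rw [hcdef]
        show (fun i => P i ⬝ᵥ w) κ = 0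
        show P κ ⬝ᵥ w = 0
        rw [dotProduct]
        exact Finset.sum_eq_zero fun j _ => by rw [hPκrow j, zero_mul]
      have hcrow : ∀ i : Fin n, (i : ℕ) < k → c i = 0 := by
        intro i hi
        show P i ⬝ᵥ w = 0
        rw [dotProduct]
        exact Finset.sum_eq_zero fun j _ => by rw [hrow i j (by omega), zero_mul]
      have hβ0 : (0 : ℂ) ≤ β := hPSD.dotProduct_mulVec_nonneg w
      have hβc : star β = β := conj_eq_of_nonneg' hβ0
      have hastar : star a = a := hM.apply κ κ
      -- strict positivity of t
      set z₀ : Fin n → ℂ := e - w with hz₀def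
      have hz₀κ : z₀ κ = 1 := by
        simp [hz₀def, hedef, hwκ]
      have hz₀ne : z₀ ≠ 0 := by
        intro h
        have := congrFun h κ
        rw [hz₀κ] at this
        exact one_ne_zero this
      have hz₀supp : ∀ i, i ∉ insert κ S → z₀ i = 0 := by
        intro i hi
        have hiκ : i ≠ κ := fun h => hi (by simp [h])
        have hiS : i ∉ S := fun h => hi (by simp [h])
        simp [hz₀def, hedef, Pi.single_eq_of_ne hiκ, hw_supp i hiS]
      have hpos := hPD (insert κ S) hCclique z₀ hz₀supp hz₀ne
      have hT1 : e ⬝ᵥ M *ᵥ e = a := by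
        rw [hedef, mulVec_single_one, single_dotProduct]
        simp [hadef]
      have hT2 : e ⬝ᵥ M *ᵥ w = star β := by
        rw [hedef, single_dotProduct, one_mul]
        show (M *ᵥ w) κ = star β
        rw [hβdef, dotProduct, star_sum]
        show M κ ⬝ᵥ w = _
        rw [dotProduct]
        refine Finset.sum_congr rfl fun j _ => ?_
        by_cases hjS : j ∈ S
        · simp only [Pi.star_apply, StarMul.star_mul, star_star, hw j hjS,
            hM.apply κ j]
        · simp [Pi.star_apply, hw_supp j hjS]
      have hT3 : star w ⬝ᵥ M *ᵥ e = β := by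
        rw [hedef, mulVec_single_one, hβdef]
        show star w ⬝ᵥ (fun i => M i κ) = star w ⬝ᵥ c
        rw [dotProduct, dotProduct]
        refine Finset.sum_congr rfl fun i _ => ?_
        by_cases hiS : i ∈ S
        · rw [hw i hiS]
        · simp [Pi.star_apply, hw_supp i hiS]
      have hT4 : star w ⬝ᵥ M *ᵥ w = β := by
        rw [hβdef, dotProduct, dotProduct]
        refine Finset.sum_congr rfl fun i _ => ?_
        by_cases hiS : i ∈ S
        · congr 1
          show (M *ᵥ w) i = (P *ᵥ w) i
          show M i ⬝ᵥ w = P i ⬝ᵥ w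
          rw [dotProduct, dotProduct]
          refine Finset.sum_congr rfl fun j _ => ?_
          by_cases hjS : j ∈ S
          · rw [hMP i j hiS hjS]
          · rw [hw_supp j hjS, mul_zero, mul_zero]
        · simp [Pi.star_apply, hw_supp i hiS]
      have hval : star z₀ ⬝ᵥ M *ᵥ z₀ = t := by
        rw [hz₀def, star_sub, hstare, mulVec_sub, sub_dotProduct, dotProduct_sub,
          dotProduct_sub, hT1, hT2, hT3, hT4, htdef, hβc]
        ring
      have h0t : (0 : ℂ) < t := hval ▸ hpos
      have ht0 : (0 : ℂ) ≤ t := le_of_lt h0t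
      -- the bordered matrix
      set u : Fin n → ℂ := w - e with hudef
      have hPe : P *ᵥ e = 0 := by
        rw [hedef, mulVec_single_one]
        funext i
        rw [col_apply, hPκcol i]
        rfl
      have hPu : P *ᵥ u = c := by
        rw [hudef, mulVec_sub, hPe, sub_zero, hcdef]
      have hstaruP : star u ᵥ* P = star c := by
        have h1 := star_mulVec P u
        rw [hPu, hPSD.1] at h1
        exact h1.symm
      have hucP : ∀ x : Fin n → ℂ, star u ⬝ᵥ P *ᵥ x = star c ⬝ᵥ x := by
        intro x
        rw [dotProduct_mulVec, hstaruP]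
      have huc : star u ⬝ᵥ c = β := by
        rw [hudef, star_sub, sub_dotProduct, hstare, hedef, single_dotProduct,
          one_mul, hcκ, sub_zero, hβdef]
      set P' : Matrix (Fin n) (Fin n) ℂ :=
        P + vecMulVec c e + vecMulVec e (star c) + vecMulVec (a • e) e with hP'def
      have hP'app : ∀ i j, P' i j = P i j + c i * e j + e i * star (c j) + a * e i * e j := by
        intro i j
        rw [hP'def]
        simp [Matrix.add_apply, vecMulVec_apply, Pi.smul_apply, Pi.star_apply, smul_eq_mul]
        ring
      have hquad : ∀ x : Fin n → ℂ, star x ⬝ᵥ P' *ᵥ x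
          = t * (star (x κ) * x κ) + star (x + x κ • u) ⬝ᵥ P *ᵥ (x + x κ • u) := by
        intro x
        have hex : e ⬝ᵥ x = x κ := by rw [hedef, single_dotProduct, one_mul]
        have hxe : star x ⬝ᵥ e = star (x κ) := by
          rw [hedef, dotProduct_single, mul_one]
          rfl
        have hL : P' *ᵥ x = P *ᵥ x + (x κ) • c + (star c ⬝ᵥ x) • e + ((x κ) * a) • e := by
          rw [hP'def, add_mulVec, add_mulVec, add_mulVec, vecMulVec_mulVec',
            vecMulVec_mulVec', vecMulVec_mulVec', hex]
          congr 1
          rw [smul_smul, mul_comm]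
        rw [hL]
        simp only [dotProduct_add, dotProduct_smul, smul_eq_mul]
        rw [hxe]
        have hR : star (x + x κ • u) ⬝ᵥ P *ᵥ (x + x κ • u)
            = star x ⬝ᵥ P *ᵥ x + (x κ) * (star x ⬝ᵥ c) + star (x κ) * (star c ⬝ᵥ x)
              + star (x κ) * (x κ) * β := by
          rw [star_add, star_smul, mulVec_add, mulVec_smul, hPu]
          simp only [add_dotProduct, dotProduct_add, dotProduct_smul,
            smul_dotProduct, smul_eq_mul]
          rw [hucP x, huc]
          ring
        rw [hR, htdef]
        ring
      have hestar : ∀ i, star (e i) = e i := by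
        intro i
        have := congrFun hstare i
        simpa [Pi.star_apply] using this
      have heκ1 : e κ = 1 := by rw [hedef]; simp
      have hei0 : ∀ i : Fin n, i ≠ κ → e i = 0 := by
        intro i hi
        rw [hedef]
        exact Pi.single_eq_of_ne hi 1
      have hP'herm : P'.IsHermitian := by
        show P'ᴴ = P'
        ext i j
        rw [conjTranspose_apply, hP'app j i, hP'app i j]
        simp only [star_add, star_mul']
        rw [hPSD.1.apply i j, hestar i, hestar j, star_star, hastar]
        ring
      have hP'psd : P'.PosSemidef :=
        PosSemidef.of_dotProduct_mulVec_nonneg hP'herm fun x => by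
          rw [hquad x]
          exact add_nonneg (mul_nonneg ht0 (star_mul_self_nonneg _)) (hPSD.dotProduct_mulVec_nonneg _)
      have hvκ : (κ : ℕ) = k := rfl
      refine ⟨P', hP'psd, ?_, ?_, ?_⟩
      · intro i j hi
        have hiκ : i ≠ κ := by
          intro h
          rw [h, hvκ] at hi
          omega
        rw [hP'app i j, hrow i j (by omega), hcrow i hi, hei0 i hiκ]
        ring
      · intro x hx hxne
        rw [hquad x]
        by_cases hs : x κ = 0
        · have hxu : x + x κ • u = x := by rw [hs, zero_smul, add_zero]
          rw [hxu, hs, star_zero, mul_zero, mul_zero, zero_add]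
          refine hstrict x ?_ hxne
          intro i hi
          rcases Nat.lt_succ_iff_lt_or_eq.mp hi with h | h
          · exact hx i h
          · have hik : i = κ := Fin.ext h
            rw [hik]; exact hs
        · exact add_pos_of_pos_of_nonneg (mul_pos h0t (star_mul_self_pos' hs)) (hPSD.dotProduct_mulVec_nonneg _)
      · intro i j hi hj hadj
        by_cases hiκ : i = κ <;> by_cases hjκ : j = κ
        · subst hiκ; subst hjκ
          rw [hP'app, hPκrow, hcκ, heκ1, hadef]
          simp
        · subst hiκ
          have hadj' : G.Adj κ j := by
            rcases hadj with h | h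
            · exact absurd h.symm hjκ
            · exact h
          have hjk : k < (j : ℕ) := by
            have : (j : ℕ) ≠ k := fun h => hjκ (Fin.ext (h.trans hvκ.symm))
            omega
          have hjS : j ∈ S := (hmemS j).mpr ⟨by rw [Fin.lt_def]; exact hjk, hadj'⟩
          rw [hP'app, hPκrow, hcκ, hei0 j hjκ, heκ1, hw j hjS]
          rw [show star (M j κ) = M κ j from hM.apply κ j]
          ring
        · subst hjκ
          have hadj' : G.Adj κ i := by
            rcases hadj with h | h
            · exact absurd h hiκ
            · exact h.symm
          have hik : k < (i : ℕ) := by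
            have : (i : ℕ) ≠ k := fun h => hiκ (Fin.ext (h.trans hvκ.symm))
            omega
          have hiS : i ∈ S := (hmemS i).mpr ⟨by rw [Fin.lt_def]; exact hik, hadj'⟩
          rw [hP'app, hPκcol, hcκ, hei0 i hiκ, heκ1, hw i hiS]
          simp
        · have hi' : k + 1 ≤ (i : ℕ) := by
            have : (i : ℕ) ≠ k := fun h => hiκ (Fin.ext (h.trans hvκ.symm))
            omega
          have hj' : k + 1 ≤ (j : ℕ) := by
            have : (j : ℕ) ≠ k := fun h => hjκ (Fin.ext (h.trans hvκ.symm))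
            omega
          rw [hP'app, hei0 i hiκ, hei0 j hjκ, hagree i j hi' hj' hadj]
          ring

lemma completion_of_chordal (G : SimpleGraph (Fin n))
    (hG : ∃ σ : Equiv.Perm (Fin n), ∀ i : Fin n,
      G.IsClique {v | v = σ i ∨ (i < σ.symm v ∧ G.Adj (σ i) v)})
    (M : Matrix (Fin n) (Fin n) ℂ) (hM : M.IsHermitian)
    (hPD : ∀ C : Finset (Fin n), G.IsClique (C : Set (Fin n)) →
      ∀ x : Fin n → ℂ, (∀ i, i ∉ C → x i = 0) → x ≠ 0 → 0 < star x ⬝ᵥ M *ᵥ x) :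
    ∃ P : Matrix (Fin n) (Fin n) ℂ, P.PosSemidef ∧
      ∀ i j : Fin n, (i = j ∨ G.Adj i j) → P i j = M i j := by
  classical
  obtain ⟨σ, hσ⟩ := hG
  set G' : SimpleGraph (Fin n) := G.comap σ with hG'def
  have hG'adj : ∀ i j : Fin n, G'.Adj i j ↔ G.Adj (σ i) (σ j) := fun i j => Iff.rfl
  set M' : Matrix (Fin n) (Fin n) ℂ := M.submatrix σ σ with hM'def
  have hM' : M'.IsHermitian := by
    show M'ᴴ = M'
    ext i j
    rw [conjTranspose_apply]
    show star (M (σ j) (σ i)) = M (σ i) (σ j)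
    exact hM.apply (σ i) (σ j)
  have hPEO' : ∀ i : Fin n, G'.IsClique {v | v = i ∨ (i < v ∧ G'.Adj i v)} := by
    intro i
    intro x hx y hy hxy
    have hmem : ∀ z : Fin n, (z = i ∨ (i < z ∧ G'.Adj i z)) →
        (σ z = σ i ∨ (i < σ.symm (σ z) ∧ G.Adj (σ i) (σ z))) := by
      intro z hz
      rcases hz with h | ⟨h1, h2⟩
      · exact Or.inl (by rw [h])
      · exact Or.inr ⟨by rwa [Equiv.symm_apply_apply], h2⟩
    have := hσ i (hmem x hx) (hmem y hy) (fun h => hxy (σ.injective h))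
    exact this
  have hPD' : ∀ C : Finset (Fin n), G'.IsClique (C : Set (Fin n)) →
      ∀ x : Fin n → ℂ, (∀ i, i ∉ C → x i = 0) → x ≠ 0 → 0 < star x ⬝ᵥ M' *ᵥ x := by
    intro C hC x hx hxne
    set x' : Fin n → ℂ := x ∘ σ.symm with hx'def
    have hquadeq : star x' ⬝ᵥ M *ᵥ x' = star x ⬝ᵥ M' *ᵥ x := by
      rw [dotProduct, dotProduct]
      refine (Fintype.sum_equiv σ _ _ ?_).symm
      intro i
      have h1 : star x' (σ i) = star x i := by
        show star (x' (σ i)) = star (x i)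
        simp [hx'def, Equiv.symm_apply_apply]
      rw [h1]
      congr 1
      show (M' *ᵥ x) i = (M *ᵥ x') (σ i)
      rw [mulVec, mulVec, dotProduct, dotProduct]
      refine Fintype.sum_equiv σ _ _ ?_
      intro j
      simp [hx'def, hM'def, Equiv.symm_apply_apply]
    have hCim : G.IsClique ((C.image σ : Finset (Fin n)) : Set (Fin n)) := by
      intro a ha b hb hab
      simp only [Finset.coe_image, Set.mem_image, Finset.mem_coe] at ha hb
      obtain ⟨a', ha', rfl⟩ := ha
      obtain ⟨b', hb', rfl⟩ := hb
      exact hC ha' hb' (fun h => hab (by rw [h]))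
    have hx'supp : ∀ i, i ∉ C.image σ → x' i = 0 := by
      intro i hi
      by_contra hne
      apply hi
      have hmem : σ.symm i ∈ C := by
        by_contra hmem
        exact hne (by simp [hx'def, hx _ hmem])
      exact Finset.mem_image.mpr ⟨σ.symm i, hmem, by simp⟩
    have hx'ne : x' ≠ 0 := by
      intro h
      apply hxne
      funext v
      have := congrFun h (σ v)
      simpa [hx'def] using this
    have := hPD (C.image σ) hCim x' hx'supp hx'ne
    rwa [hquadeq] at this
  obtain ⟨P₀, hP₀psd, hP₀ent⟩ := completion_of_identity_peo G' hPEO' M' hM' hPD'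
  refine ⟨P₀.submatrix σ.symm σ.symm, hP₀psd.submatrix σ.symm, ?_⟩
  intro i j hij
  have hcond : (σ.symm i = σ.symm j ∨ G'.Adj (σ.symm i) (σ.symm j)) := by
    rcases hij with h | h
    · exact Or.inl (by rw [h])
    · refine Or.inr ?_
      rw [hG'adj]
      simpa [Equiv.apply_symm_apply] using h
  have := hP₀ent (σ.symm i) (σ.symm j) hcond
  show P₀ (σ.symm i) (σ.symm j) = M i j
  rw [this]
  simp [hM'def, Equiv.apply_symm_apply]

lemma dotProduct_star_self_pos {x : Fin n → ℂ} (h : x ≠ 0) : (0:ℂ) < star x ⬝ᵥ x := by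
  have h1 : (0:ℂ) ≤ star x ⬝ᵥ x := by
    rw [dotProduct]
    exact Finset.sum_nonneg fun i _ => star_mul_self_nonneg (x i)
  rcases h1.lt_or_eq with hlt | heq
  · exact hlt
  · exact absurd (dotProduct_star_self_eq_zero.mp heq.symm) h

end ChordalAux

open ChordalAux in
theorem main' {n : ℕ} (G : SimpleGraph (Fin n))
    (hG : ∃ σ : Equiv.Perm (Fin n), ∀ i : Fin n,
      G.IsClique {v | v = σ i ∨ (i < σ.symm v ∧ G.Adj (σ i) v)})
    (M : Matrix (Fin n) (Fin n) ℂ) (hM : M.IsHermitian)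
    (hsupp : ∀ i j : Fin n, i ≠ j → ¬ G.Adj i j → M i j = 0) :
    (∃ P : Matrix (Fin n) (Fin n) ℂ, P.PosSemidef ∧ projOn G P = M) ↔
      ∀ C : Finset (Fin n),
        (G.IsClique (C : Set (Fin n)) ∧
          ∀ D : Finset (Fin n), G.IsClique (D : Set (Fin n)) → C ⊆ D → C = D) →
        (M.submatrix (fun i : C => (i : Fin n)) (fun j : C => (j : Fin n))).PosSemidef := by
  classical
  constructor
  · rintro ⟨P, hP, hproj⟩ C ⟨hCcl, _⟩
    have hsub : M.submatrix (fun i : C => (i : Fin n)) (fun j : C => (j : Fin n))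
        = P.submatrix (fun i : C => (i : Fin n)) (fun j : C => (j : Fin n)) := by
      ext i j
      show M (i : Fin n) (j : Fin n) = P (i : Fin n) (j : Fin n)
      have hpos : ((i : Fin n) = (j : Fin n)) ∨ G.Adj (i : Fin n) (j : Fin n) := by
        by_cases h : (i : Fin n) = (j : Fin n)
        · exact Or.inl h
        · exact Or.inr (hCcl i.2 j.2 h)
      have := congrFun (congrFun hproj (i : Fin n)) (j : Fin n)
      rw [← this]
      simp only [projOn, if_pos hpos]
    rw [hsub]
    exact hP.submatrix _
  · intro hmax
    have hclq : ∀ C : Finset (Fin n), G.IsClique (C : Set (Fin n)) →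
        ∀ x : Fin n → ℂ, (∀ i, i ∉ C → x i = 0) → 0 ≤ star x ⬝ᵥ M *ᵥ x := by
      intro C hC x hx
      obtain ⟨D, hDmax, hCD⟩ := exists_maximal_clique G C hC
      have hxD : ∀ i, i ∉ D → x i = 0 := fun i hi => hx i (fun h => hi (hCD h))
      rw [quadform_submatrix M D x hxD]
      exact (hmax D hDmax).dotProduct_mulVec_nonneg _
    have hex : ∀ m : ℕ, ∃ P : Matrix (Fin n) (Fin n) ℂ, P.PosSemidef ∧
        ∀ i j : Fin n, (i = j ∨ G.Adj i j) →
          P i j = M i j + ((((m:ℝ)+1)⁻¹ : ℝ) : ℂ) * (1 : Matrix (Fin n) (Fin n) ℂ) i j := by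
      intro m
      set r : ℝ := ((m:ℝ)+1)⁻¹ with hrdef
      have hr0 : (0:ℝ) < r := by positivity
      have hrC : (0:ℂ) < (r:ℂ) := by
        rw [Complex.lt_def]; constructor <;> simp [hr0]
      set Mm : Matrix (Fin n) (Fin n) ℂ := M + (r:ℂ) • 1 with hMmdef
      have hMm : Mm.IsHermitian := by
        refine hM.add ?_
        show ((r:ℂ) • (1 : Matrix (Fin n) (Fin n) ℂ))ᴴ = _
        rw [conjTranspose_smul, conjTranspose_one]
        congr 1
        exact Complex.conj_ofReal r
      have hPDm : ∀ C : Finset (Fin n), G.IsClique (C : Set (Fin n)) →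
          ∀ x : Fin n → ℂ, (∀ i, i ∉ C → x i = 0) → x ≠ 0 → 0 < star x ⬝ᵥ Mm *ᵥ x := by
        intro C hC x hx hxne
        have heq : star x ⬝ᵥ Mm *ᵥ x = star x ⬝ᵥ M *ᵥ x + (r:ℂ) * (star x ⬝ᵥ x) := by
          rw [hMmdef, add_mulVec, dotProduct_add, smul_mulVec, one_mulVec,
            dotProduct_smul, smul_eq_mul]
        rw [heq]
        exact add_pos_of_nonneg_of_pos (hclq C hC x hx)
          (mul_pos hrC (dotProduct_star_self_pos hxne))
      obtain ⟨P, hP, hPent⟩ := completion_of_chordal G hG Mm hMm hPDm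
      exact ⟨P, hP, fun i j hij => by rw [hPent i j hij, hMmdef]; simp⟩
    choose Pseq hPSDseq hEnt using hex
    set B : ℝ := 1 + ∑ i : Fin n, ‖M i i‖ with hBdef
    have hB1 : (1:ℝ) ≤ B := by
      rw [hBdef]
      have : (0:ℝ) ≤ ∑ i : Fin n, ‖M i i‖ :=
        Finset.sum_nonneg fun i _ => norm_nonneg _
      linarith
    have hdiag : ∀ m (i : Fin n), ‖Pseq m i i‖ ≤ B := by
      intro m i
      rw [hEnt m i i (Or.inl rfl)]
      have h1 : ‖M i i + ((((m:ℝ)+1)⁻¹ : ℝ) : ℂ) * (1 : Matrix (Fin n) (Fin n) ℂ) i i‖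
          ≤ ‖M i i‖ + ((m:ℝ)+1)⁻¹ := by
        refine (norm_add_le _ _).trans ?_
        gcongr
        rw [Matrix.one_apply_eq, mul_one, Complex.norm_real]
        exact le_of_eq (abs_of_nonneg (by positivity))
      have h2 : ((m:ℝ)+1)⁻¹ ≤ 1 := by
        rw [inv_le_one_iff₀]
        right; linarith [Nat.cast_nonneg (α := ℝ) m]
      have h3 : ‖M i i‖ ≤ ∑ j : Fin n, ‖M j j‖ :=
        Finset.single_le_sum (fun j _ => norm_nonneg (M j j)) (Finset.mem_univ i)
      rw [hBdef]
      linarith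
    have hbound : ∀ m (i j : Fin n), ‖Pseq m i j‖ ≤ 2 * B := by
      intro m i j
      have := psd_entry_bound (Pseq m) (hPSDseq m) i j
      linarith [hdiag m i, hdiag m j]
    let Fseq : ℕ → (Fin n → Fin n → ℂ) := Pseq
    have hFeq : ∀ m (i j : Fin n), Fseq m i j = Pseq m i j := fun m i j => rfl
    have hmem : ∀ m, Fseq m ∈
        Metric.closedBall (0 : Fin n → Fin n → ℂ) (2 * B) := by
      intro m
      rw [Metric.mem_closedBall, dist_zero_right]
      refine (pi_norm_le_iff_of_nonneg (by linarith)).mpr fun i => ?_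
      refine (pi_norm_le_iff_of_nonneg (by linarith)).mpr fun j => ?_
      rw [hFeq]
      exact hbound m i j
    obtain ⟨Q, hQmem, φ, hφ, hlim⟩ :=
      (isCompact_closedBall (0 : Fin n → Fin n → ℂ) (2 * B)).tendsto_subseq hmem
    have hent : ∀ i j : Fin n,
        Tendsto (fun m => Pseq (φ m) i j) atTop (𝓝 (Q i j)) := by
      intro i j
      exact (((continuous_apply j).comp (continuous_apply i)).tendsto Q).comp hlim
    have hrlim : Tendsto (fun m : ℕ => (((φ m : ℝ) + 1)⁻¹ : ℝ)) atTop (𝓝 0) := by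
      have h1 : Tendsto (fun m : ℕ => (((m : ℝ) + 1)⁻¹ : ℝ)) atTop (𝓝 0) := by
        have := tendsto_one_div_add_atTop_nhds_zero_nat (𝕜 := ℝ)
        simpa [one_div] using this
      exact h1.comp hφ.tendsto_atTop
    have hQent : ∀ i j : Fin n, (i = j ∨ G.Adj i j) → Q i j = M i j := by
      intro i j hij
      have h2 : Tendsto (fun m => Pseq (φ m) i j) atTop
          (𝓝 (M i j + ((0:ℝ):ℂ) * (1 : Matrix (Fin n) (Fin n) ℂ) i j)) := by
        have hcast : Tendsto (fun m : ℕ => ((((φ m : ℝ) + 1)⁻¹ : ℝ) : ℂ)) atTop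
            (𝓝 ((0:ℝ):ℂ)) := (Complex.continuous_ofReal.tendsto 0).comp hrlim
        have hconst : Tendsto (fun _ : ℕ => M i j) atTop (𝓝 (M i j)) := tendsto_const_nhds
        have := hconst.add (hcast.mul_const ((1 : Matrix (Fin n) (Fin n) ℂ) i j))
        refine this.congr fun m => ?_
        rw [hEnt (φ m) i j hij]
      have := tendsto_nhds_unique (hent i j) h2
      rw [this]
      simp
    have hQpsd : Matrix.PosSemidef (Q : Matrix (Fin n) (Fin n) ℂ) := by
      refine PosSemidef.of_dotProduct_mulVec_nonneg ?_ ?_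
      · show (Q : Matrix (Fin n) (Fin n) ℂ)ᴴ = Q
        ext i j
        show star (Q j i) = Q i j
        have h1 : Tendsto (fun m => star (Pseq (φ m) j i)) atTop (𝓝 (star (Q j i))) :=
          (continuous_star.tendsto _).comp (hent j i)
        have h2 : ∀ m, star (Pseq (φ m) j i) = Pseq (φ m) i j :=
          fun m => (hPSDseq (φ m)).1.apply i j
        simp only [h2] at h1
        exact tendsto_nhds_unique h1 (hent i j)
      · intro x
        have hq : Tendsto (fun m => star x ⬝ᵥ (Pseq (φ m)) *ᵥ x) atTop
            (𝓝 (star x ⬝ᵥ (Q : Matrix (Fin n) (Fin n) ℂ) *ᵥ x)) := by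
          simp only [dotProduct, mulVec]
          refine tendsto_finset_sum _ fun i _ => ?_
          refine Filter.Tendsto.mul tendsto_const_nhds ?_
          refine tendsto_finset_sum _ fun j _ => ?_
          exact (hent i j).mul_const _
        have hcl : IsClosed {z : ℂ | 0 ≤ z} := by
          have hset : {z : ℂ | 0 ≤ z}
              = Complex.re ⁻¹' Set.Ici 0 ∩ Complex.im ⁻¹' {0} := by
            ext z
            simp only [Set.mem_setOf_eq, Complex.le_def, Set.mem_inter_iff, Set.mem_preimage,
              Set.mem_Ici, Set.mem_singleton_iff, Complex.zero_re, Complex.zero_im]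
            tauto
          rw [hset]
          exact (isClosed_Ici.preimage Complex.continuous_re).inter
            (isClosed_singleton.preimage Complex.continuous_im)
        exact hcl.mem_of_tendsto hq
          (Filter.Eventually.of_forall fun m => (hPSDseq (φ m)).dotProduct_mulVec_nonneg x)
    refine ⟨Q, hQpsd, ?_⟩
    ext i j
    show (if i = j ∨ G.Adj i j then Q i j else 0) = M i j
    split_ifs with h
    · exact hQent i j h
    · push_neg at h
      exact (hsupp i j h.1 h.2).symm


/-- For chordal `G`, a Hermitian matrix supported on `G` is the projection of a PSD matrix
iff all its maximal-clique principal submatrices are PSD. -/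
theorem chordal_proj_psd_iff_maximal_cliques_psd {n : ℕ} (G : SimpleGraph (Fin n))
    (hG : IsChordal G) (M : Matrix (Fin n) (Fin n) ℂ) (hM : M.IsHermitian)
    (hsupp : ∀ i j : Fin n, i ≠ j → ¬ G.Adj i j → M i j = 0) :
    (∃ P : Matrix (Fin n) (Fin n) ℂ, P.PosSemidef ∧ projOn G P = M) ↔
      ∀ C : Finset (Fin n),
        (G.IsClique (C : Set (Fin n)) ∧
          ∀ D : Finset (Fin n), G.IsClique (D : Set (Fin n)) → C ⊆ D → C = D) →
        (M.submatrix (fun i : C => (i : Fin n)) (fun j : C => (j : Fin n))).PosSemidef := by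
  obtain ⟨σ, hσ⟩ := hG
  exact main' G ⟨σ, hσ⟩ M hM hsupp
end

section
/- Let G be a chordal graph on {1,…,n} and let M be a nonzero partially positive Hermitian matrix supported on G (i.e., (M_{ij})_{i,j∈C} is PSD for each maximal clique C) such that: (1) for every maximal clique C, the submatrix (M_{ij})_{i,j∈C} has rank at most one, and (2) the induced subgraph of G on the vertices i with M_{ii} ≠ 0 is connected. Then M generates an extremal ray of the cone of partially positive matrices supported on G: whenever M = A + B with A and B partially positive matrices supported on G, both A and B are scalar multiples of M. -/
open ComplexOrder

/-- `M` is supported on the graph `G` (its edges and the diagonal). -/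
def SupportedOn {n : ℕ} (G : SimpleGraph (Fin n)) (M : Matrix (Fin n) (Fin n) ℂ) : Prop :=
  ∀ i j : Fin n, i ≠ j → ¬ G.Adj i j → M i j = 0

/-- `M` is a partially positive Hermitian matrix supported on `G`: every principal
submatrix indexed by a clique of `G` is positive semidefinite. -/
def PartiallyPos {n : ℕ} (G : SimpleGraph (Fin n)) (M : Matrix (Fin n) (Fin n) ℂ) : Prop :=
  M.IsHermitian ∧ SupportedOn G M ∧
    ∀ C : Finset (Fin n), G.IsClique (C : Set (Fin n)) →
      (M.submatrix (fun i : C => (i : Fin n)) (fun j : C => (j : Fin n))).PosSemidef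

section Helpers

open Matrix

lemma pp_pair {n : ℕ} {G : SimpleGraph (Fin n)} {P : Matrix (Fin n) (Fin n) ℂ}
    (hP : PartiallyPos G P) {i j : Fin n} (hij : G.Adj i j ∨ j = i) :
    (!![P i i, P i j; P j i, P j j] : Matrix (Fin 2) (Fin 2) ℂ).PosSemidef := by
  classical
  have hclique : G.IsClique (({i, j} : Finset (Fin n)) : Set (Fin n)) := by
    rw [Finset.coe_insert, Finset.coe_singleton]
    exact SimpleGraph.isClique_pair.2 (fun h => hij.resolve_right (fun e => h e.symm))
  have hpsd := hP.2.2 {i, j} hclique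
  have hi : i ∈ ({i, j} : Finset (Fin n)) := by simp
  have hj : j ∈ ({i, j} : Finset (Fin n)) := by simp
  have h2 := hpsd.submatrix (![⟨i, hi⟩, ⟨j, hj⟩] : Fin 2 → ({i, j} : Finset (Fin n)))
  convert h2 using 1
  ext a b
  fin_cases a <;> fin_cases b <;> simp [Matrix.submatrix_apply]

lemma psd_00 {Q : Matrix (Fin 2) (Fin 2) ℂ} (hQ : Q.PosSemidef) : 0 ≤ Q 0 0 := by
  have := hQ.dotProduct_mulVec_nonneg ![1, 0]
  simpa [Matrix.mulVec, dotProduct, Fin.sum_univ_two] using this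

lemma psd_offdiag_zero {Q : Matrix (Fin 2) (Fin 2) ℂ} (hQ : Q.PosSemidef) (h0 : Q 0 0 = 0) :
    Q 0 1 = 0 := by
  have hz : dotProduct (star (![1, 0] : Fin 2 → ℂ)) (Q *ᵥ ![1, 0]) = 0 := by
    simp [Matrix.mulVec, dotProduct, Fin.sum_univ_two, h0]
  have := (hQ.dotProduct_mulVec_zero_iff ![1, 0]).1 hz
  have h10 : Q 1 0 = 0 := by
    have := congrFun this 1
    simpa [Matrix.mulVec, dotProduct, Fin.sum_univ_two] using this
  have := hQ.1.apply 0 1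
  rw [h10] at this
  simpa using this.symm

lemma key2 {R A : Matrix (Fin 2) (Fin 2) ℂ} (hR : R.PosSemidef) (hA : A.PosSemidef)
    (hB : (R - A).PosSemidef) (hdet : R 0 0 * R 1 1 = R 0 1 * R 1 0) (h00 : R 0 0 ≠ 0) :
    A 0 1 = A 0 0 / R 0 0 * R 0 1 ∧ A 1 1 = A 0 0 / R 0 0 * R 1 1 := by
  set y : Fin 2 → ℂ := ![-(R 0 1), R 0 0] with hy
  have hRy : R *ᵥ y = 0 := by
    funext k
    fin_cases k
    · show (R *ᵥ y) 0 = (0 : Fin 2 → ℂ) 0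
      simp only [hy, Matrix.mulVec, dotProduct, Fin.sum_univ_two, Matrix.cons_val_zero,
        Matrix.cons_val_one, Matrix.head_cons, Pi.zero_apply]
      ring
    · show (R *ᵥ y) 1 = (0 : Fin 2 → ℂ) 1
      simp only [hy, Matrix.mulVec, dotProduct, Fin.sum_univ_two, Matrix.cons_val_zero,
        Matrix.cons_val_one, Matrix.head_cons, Pi.zero_apply]
      linear_combination hdet
  have h3 : dotProduct (star y) (R *ᵥ y) = 0 := by rw [hRy, dotProduct_zero]
  have hsum : dotProduct (star y) (A *ᵥ y)
      + dotProduct (star y) ((R - A) *ᵥ y) = 0 := by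
    rw [← dotProduct_add, ← Matrix.add_mulVec]
    simpa using h3
  have hAy0 : dotProduct (star y) (A *ᵥ y) = 0 := by
    have h1 := hA.dotProduct_mulVec_nonneg y
    have h2 := hB.dotProduct_mulVec_nonneg y
    have hle : dotProduct (star y) (A *ᵥ y) ≤ 0 := by
      have heq : dotProduct (star y) (A *ᵥ y)
          = -(dotProduct (star y) ((R - A) *ᵥ y)) := by linear_combination hsum
      rw [heq]
      exact neg_nonpos_of_nonneg h2
    exact le_antisymm hle h1
  have hAyz := (hA.dotProduct_mulVec_zero_iff y).1 hAy0
  have e0 : A 0 0 * -(R 0 1) + A 0 1 * R 0 0 = 0 := by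
    have := congrFun hAyz 0
    simpa only [hy, Matrix.mulVec, dotProduct, Fin.sum_univ_two, Matrix.cons_val_zero,
      Matrix.cons_val_one, Matrix.head_cons, Pi.zero_apply] using this
  have e1 : A 1 0 * -(R 0 1) + A 1 1 * R 0 0 = 0 := by
    have := congrFun hAyz 1
    simpa only [hy, Matrix.mulVec, dotProduct, Fin.sum_univ_two, Matrix.cons_val_zero,
      Matrix.cons_val_one, Matrix.head_cons, Pi.zero_apply] using this
  have hA01 : A 0 1 = A 0 0 / R 0 0 * R 0 1 := by
    rw [div_mul_eq_mul_div, eq_div_iff h00]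
    linear_combination e0
  refine ⟨hA01, ?_⟩
  have hA10 : A 1 0 = (starRingEnd ℂ) (A 0 1) := (hA.1.apply 1 0).symm
  have hR10 : R 1 0 = (starRingEnd ℂ) (R 0 1) := (hR.1.apply 1 0).symm
  have hA00 : (starRingEnd ℂ) (A 0 0) = A 0 0 := hA.1.apply 0 0
  have hR00 : (starRingEnd ℂ) (R 0 0) = R 0 0 := hR.1.apply 0 0
  have hA10' : A 1 0 = A 0 0 / R 0 0 * R 1 0 := by
    rw [hA10, hA01, _root_.map_mul, map_div₀, hA00, hR00, hR10]
  rw [hA10'] at e1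
  field_simp at e1
  rw [div_mul_eq_mul_div, eq_div_iff h00]
  exact mul_right_cancel₀ h00 (by linear_combination e1 - A 0 0 * hdet)

lemma det2_zero {n : ℕ} {G : SimpleGraph (Fin n)} {M : Matrix (Fin n) (Fin n) ℂ}
    (hrank : ∀ C : Finset (Fin n),
      (G.IsClique (C : Set (Fin n)) ∧
        ∀ D : Finset (Fin n), G.IsClique (D : Set (Fin n)) → C ⊆ D → C = D) →
      (M.submatrix (fun i : C => (i : Fin n)) (fun j : C => (j : Fin n))).rank ≤ 1)
    {i j : Fin n} (hij : G.Adj i j) :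
    M i i * M j j = M i j * M j i := by
  classical
  have hpair : G.IsClique (({i, j} : Finset (Fin n)) : Set (Fin n)) := by
    rw [Finset.coe_insert, Finset.coe_singleton]
    exact SimpleGraph.isClique_pair.2 (fun _ => hij)
  obtain ⟨D, ⟨hDcl, hijD⟩, hDmax⟩ :=
    Set.Finite.exists_maximalFor Finset.card
      {D : Finset (Fin n) | G.IsClique (D : Set (Fin n)) ∧ {i, j} ⊆ D}
      (Set.toFinite _) ⟨{i, j}, hpair, subset_refl _⟩
  have hDmax' : ∀ D' : Finset (Fin n), G.IsClique (D' : Set (Fin n)) → D ⊆ D' → D = D' := by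
    intro D' hcl hsub
    have hmem : D' ∈ {D : Finset (Fin n) | G.IsClique (D : Set (Fin n)) ∧ {i, j} ⊆ D} :=
      ⟨hcl, hijD.trans hsub⟩
    exact Finset.eq_of_subset_of_card_le hsub
      (hDmax hmem (Finset.card_le_card hsub))
  have hr := hrank D ⟨hDcl, hDmax'⟩
  set N : Matrix D D ℂ := M.submatrix (fun i : D => (i : Fin n)) (fun j : D => (j : Fin n))
    with hN
  have hiD : i ∈ D := hijD (by simp)
  have hjD : j ∈ D := hijD (by simp)
  set u : D → ℂ := N *ᵥ Pi.single ⟨i, hiD⟩ 1 with hu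
  set v : D → ℂ := N *ᵥ Pi.single ⟨j, hjD⟩ 1 with hv
  have hdep : ¬ LinearIndependent ℂ ![u, v] := by
    intro hli
    have h1 : Submodule.span ℂ (Set.range ![u, v]) ≤ LinearMap.range N.mulVecLin := by
      rw [Submodule.span_le]
      rintro x ⟨k, rfl⟩
      fin_cases k
      · exact ⟨Pi.single ⟨i, hiD⟩ 1, by simp [Matrix.mulVecLin_apply, hu]⟩
      · exact ⟨Pi.single ⟨j, hjD⟩ 1, by simp [Matrix.mulVecLin_apply, hv]⟩
    have h2 := Submodule.finrank_mono h1
    rw [finrank_span_eq_card hli] at h2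
    rw [Matrix.rank] at hr
    simp at h2
    omega
  rw [LinearIndependent.pair_iff] at hdep
  push_neg at hdep
  obtain ⟨s, t, hst, hne⟩ := hdep
  have eu : ∀ (k : D), u k = M (k : Fin n) i := by
    intro k; simp [hu, hN, Matrix.mulVec_single]
  have ev : ∀ (k : D), v k = M (k : Fin n) j := by
    intro k; simp [hv, hN, Matrix.mulVec_single]
  have e1 : s * M i i + t * M i j = 0 := by
    have := congrFun hst ⟨i, hiD⟩
    simpa [eu, ev] using this
  have e2 : s * M j i + t * M j j = 0 := by
    have := congrFun hst ⟨j, hjD⟩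
    simpa [eu, ev] using this
  by_cases hs : s = 0
  · have ht : t ≠ 0 := hne hs
    exact mul_left_cancel₀ ht (by linear_combination M i i * e2 - M j i * e1)
  · exact mul_left_cancel₀ hs (by linear_combination M j j * e1 - M i j * e2)

lemma real_of_nonneg {z : ℂ} (hz : 0 ≤ z) : ∃ r : ℝ, 0 ≤ r ∧ z = (r : ℂ) := by
  obtain ⟨h1, h2⟩ := Complex.le_def.1 hz
  refine ⟨z.re, by simpa using h1, ?_⟩
  exact (Complex.ext (by simp) (by simp [← h2])).symm

/-- The key "one half" of the main theorem. -/
lemma scalar_of_summand {n : ℕ} {G : SimpleGraph (Fin n)} {M : Matrix (Fin n) (Fin n) ℂ}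
    (hM : PartiallyPos G M)
    (hrank : ∀ C : Finset (Fin n),
      (G.IsClique (C : Set (Fin n)) ∧
        ∀ D : Finset (Fin n), G.IsClique (D : Set (Fin n)) → C ⊆ D → C = D) →
      (M.submatrix (fun i : C => (i : Fin n)) (fun j : C => (j : Fin n))).rank ≤ 1)
    (hconn : (G.induce {i : Fin n | M i i ≠ 0}).Connected)
    (A B : Matrix (Fin n) (Fin n) ℂ) (hA : PartiallyPos G A) (hB : PartiallyPos G B)
    (hAB : M = A + B) :
    ∃ a : ℝ, 0 ≤ a ∧ A = (a : ℂ) • M := by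
  have hE : ∀ x y, M x y = A x y + B x y := by
    intro x y; rw [hAB]; rfl
  have hdiag : ∀ (P : Matrix (Fin n) (Fin n) ℂ), PartiallyPos G P → ∀ k, 0 ≤ P k k := by
    intro P hP k
    simpa using psd_00 (pp_pair hP (Or.inr rfl))
  have hzeroA : ∀ k, M k k = 0 → A k k = 0 := by
    intro k hk
    have h1 := hdiag A hA k
    have h2 := hdiag B hB k
    have h3 : A k k + B k k = 0 := by rw [← hE k k, hk]
    refine le_antisymm ?_ h1
    calc A k k ≤ A k k + B k k := le_add_of_nonneg_right h2
      _ = 0 := h3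
  -- propagation along edges
  have key3 : ∀ u v : Fin n, G.Adj u v → M u u ≠ 0 →
      A v v * M u u = A u u * M v v ∧ A u v * M u u = A u u * M u v := by
    intro u v huv hu
    have hR2 := pp_pair hM (Or.inl huv)
    have hA2 := pp_pair hA (Or.inl huv)
    have hB2 := pp_pair hB (Or.inl huv)
    have hsub : (!![M u u, M u v; M v u, M v v] - !![A u u, A u v; A v u, A v v]
        : Matrix (Fin 2) (Fin 2) ℂ) = !![B u u, B u v; B v u, B v v] := by
      ext a b
      fin_cases a <;> fin_cases b <;>
        simp [Matrix.sub_apply, hE u u, hE u v, hE v u, hE v v]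
    have hdet0 := det2_zero hrank huv
    have hk := key2 hR2 hA2 (by rw [hsub]; exact hB2) (by simpa using hdet0) (by simpa using hu)
    obtain ⟨hk1, hk2⟩ := hk
    simp only [Matrix.cons_val_zero, Matrix.cons_val_one, Matrix.head_cons, Matrix.vecHead,
      Matrix.cons_val', Matrix.empty_val', Matrix.cons_val_fin_one, Matrix.of_apply] at hk1 hk2
    constructor
    · rw [div_mul_eq_mul_div, eq_div_iff hu] at hk2
      linear_combination hk2
    · rw [div_mul_eq_mul_div, eq_div_iff hu] at hk1
      linear_combination hk1
  -- propagation along walks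
  have hwalk : ∀ u v : {i : Fin n | M i i ≠ 0},
      A ↑u ↑u * M ↑v ↑v = A ↑v ↑v * M ↑u ↑u := by
    intro u v
    obtain ⟨w⟩ := hconn.preconnected u v
    induction w with
    | nil => ring
    | @cons x y z h p ih =>
      have hx : M (x : Fin n) (x : Fin n) ≠ 0 := x.2
      have hy : M (y : Fin n) (y : Fin n) ≠ 0 := y.2
      have hadj : G.Adj ↑x ↑y := h
      have edge := (key3 ↑x ↑y hadj hx).1
      exact mul_right_cancel₀ hy
        (by linear_combination M (x : Fin n) (x : Fin n) * ih
          - M (z : Fin n) (z : Fin n) * edge)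
  -- base point
  obtain ⟨i0⟩ := hconn.nonempty
  have hi0 : M (i0 : Fin n) (i0 : Fin n) ≠ 0 := i0.2
  obtain ⟨μ, hμ0, hμ⟩ := real_of_nonneg (hdiag M hM i0)
  obtain ⟨α, hα0, hα⟩ := real_of_nonneg (hdiag A hA i0)
  have hμne : μ ≠ 0 := by
    intro h; exact hi0 (by rw [hμ, h, Complex.ofReal_zero])
  refine ⟨α / μ, div_nonneg hα0 hμ0, ?_⟩
  have haC : ((α / μ : ℝ) : ℂ) = A ↑i0 ↑i0 / M ↑i0 ↑i0 := by
    rw [hμ, hα]; push_cast; ring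
  -- ratio lemma for any vertex with nonzero diagonal
  have hratio : ∀ i : Fin n, M i i ≠ 0 →
      A i i = ((α / μ : ℝ) : ℂ) * M i i := by
    intro i hi
    have hw := hwalk i0 ⟨i, hi⟩
    rw [haC]
    field_simp
    linear_combination -hw
  ext i j
  rw [Matrix.smul_apply, smul_eq_mul]
  by_cases hd : i = j
  · subst hd
    by_cases hi : M i i = 0
    · rw [hi, hzeroA i hi, mul_zero]
    · exact hratio i hi
  · by_cases hadj : G.Adj i j
    · by_cases hi : M i i = 0
      · have hMij : M i j = 0 := by
          simpa using psd_offdiag_zero (pp_pair hM (Or.inl hadj)) (by simpa using hi)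
        have hAij : A i j = 0 := by
          simpa using psd_offdiag_zero (pp_pair hA (Or.inl hadj)) (by simpa using hzeroA i hi)
        rw [hMij, hAij, mul_zero]
      · have hk := (key3 i j hadj hi).2
        have hr := hratio i hi
        rw [hr] at hk
        exact mul_right_cancel₀ hi (by linear_combination hk)
    · rw [hA.2.1 i j hd hadj, hM.2.1 i j hd hadj, mul_zero]

end Helpers

/-- Sufficient conditions for a partially positive matrix on a chordal graph to generate
an extremal ray of the partially positive cone. -/
theorem extremal_ray_of_rank_one_cliques_and_connected {n : ℕ} (G : SimpleGraph (Fin n))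
    (hG : IsChordal G) (M : Matrix (Fin n) (Fin n) ℂ) (hM0 : M ≠ 0)
    (hM : PartiallyPos G M)
    (hrank : ∀ C : Finset (Fin n),
      (G.IsClique (C : Set (Fin n)) ∧
        ∀ D : Finset (Fin n), G.IsClique (D : Set (Fin n)) → C ⊆ D → C = D) →
      (M.submatrix (fun i : C => (i : Fin n)) (fun j : C => (j : Fin n))).rank ≤ 1)
    (hconn : (G.induce {i : Fin n | M i i ≠ 0}).Connected) :
    ∀ A B : Matrix (Fin n) (Fin n) ℂ, PartiallyPos G A → PartiallyPos G B → M = A + B →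
      (∃ a : ℝ, 0 ≤ a ∧ A = (a : ℂ) • M) ∧ (∃ b : ℝ, 0 ≤ b ∧ B = (b : ℂ) • M) := by
  intro A B hA hB hAB
  exact ⟨scalar_of_summand hM hrank hconn A B hA hB hAB,
    scalar_of_summand hM hrank hconn B A hB hA (by rw [hAB, add_comm])⟩
end

section
/- If M is a nonzero partially positive Hermitian matrix supported on a chordal graph G on {1,…,n} generating an extremal ray of the cone of partially positive matrices supported on G, then M is the entrywise projection onto the positions of G (and the diagonal) of a positive semidefinite rank-one matrix v v* for some v ∈ ℂ^n. -/
open ComplexOrder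

namespace ChordalAux

open Matrix

variable {n : ℕ}

/-- clique-indexed submatrices (via any function with clique range) are PSD -/
lemma pp_submatrix_psd {G : SimpleGraph (Fin n)} {M : Matrix (Fin n) (Fin n) ℂ}
    (hM : PartiallyPos G M) {α : Type*} [Fintype α] (f : α → Fin n)
    (hf : G.IsClique (Set.range f)) : (M.submatrix f f).PosSemidef := by
  classical
  have hC : G.IsClique ((Finset.image f Finset.univ : Finset (Fin n)) : Set (Fin n)) := by
    rwa [Finset.coe_image, Finset.coe_univ, Set.image_univ]
  have h := hM.2.2 _ hC
  have heq : M.submatrix f f =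
      ((M.submatrix (fun i : (Finset.image f Finset.univ : Finset (Fin n)) => (i : Fin n))
        (fun j : (Finset.image f Finset.univ : Finset (Fin n)) => (j : Fin n))).submatrix
        (fun a : α => (⟨f a, by simp⟩ : (Finset.image f Finset.univ : Finset (Fin n))))
        (fun a : α => ⟨f a, by simp⟩)) := by
    ext a b; rfl
  rw [heq]
  exact h.submatrix _

lemma projOn_psd_partiallyPos (G : SimpleGraph (Fin n)) {N : Matrix (Fin n) (Fin n) ℂ}
    (hN : N.PosSemidef) : PartiallyPos G (projOn G N) := by
  refine ⟨?_, ?_, ?_⟩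
  · ext i j
    simp only [conjTranspose_apply, projOn]
    by_cases h : i = j ∨ G.Adj i j
    · have h' : j = i ∨ G.Adj j i := h.imp Eq.symm SimpleGraph.Adj.symm
      rw [if_pos h', if_pos h, hN.1.apply]
    · have h' : ¬ (j = i ∨ G.Adj j i) := fun hc => h (hc.imp Eq.symm SimpleGraph.Adj.symm)
      rw [if_neg h', if_neg h, star_zero]
  · intro i j hij hadj
    simp only [projOn]
    rw [if_neg]
    rintro (h | h)
    exacts [hij h, hadj h]
  · intro C hC
    have heq : (projOn G N).submatrix (fun i : C => (i : Fin n)) (fun j : C => (j : Fin n))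
        = N.submatrix (fun i : C => (i : Fin n)) (fun j : C => (j : Fin n)) := by
      ext i j
      simp only [submatrix_apply, projOn]
      by_cases h : (i : Fin n) = (j : Fin n)
      · rw [if_pos (Or.inl h)]
      · exact if_pos (Or.inr (hC i.2 j.2 h))
    rw [heq]; exact hN.submatrix _

lemma PartiallyPos.zero (G : SimpleGraph (Fin n)) :
    PartiallyPos G (0 : Matrix (Fin n) (Fin n) ℂ) := by
  refine ⟨Matrix.isHermitian_zero, fun i j _ _ => rfl, fun C hC => ?_⟩
  have : (0 : Matrix (Fin n) (Fin n) ℂ).submatrix (fun i : C => (i : Fin n))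
      (fun j : C => (j : Fin n)) = 0 := rfl
  rw [this]; exact Matrix.PosSemidef.zero

lemma PartiallyPos.add {G : SimpleGraph (Fin n)} {A B : Matrix (Fin n) (Fin n) ℂ}
    (hA : PartiallyPos G A) (hB : PartiallyPos G B) : PartiallyPos G (A + B) := by
  refine ⟨hA.1.add hB.1, fun i j hij hadj => ?_, fun C hC => ?_⟩
  · simp only [Matrix.add_apply, hA.2.1 i j hij hadj, hB.2.1 i j hij hadj, add_zero]
  · have : (A + B).submatrix (fun i : C => (i : Fin n)) (fun j : C => (j : Fin n))
        = A.submatrix (fun i : C => (i : Fin n)) (fun j : C => (j : Fin n))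
          + B.submatrix (fun i : C => (i : Fin n)) (fun j : C => (j : Fin n)) := rfl
    rw [this]; exact (hA.2.2 C hC).add (hB.2.2 C hC)

lemma PartiallyPos.sum {G : SimpleGraph (Fin n)} {ι : Type*} (s : Finset ι)
    (f : ι → Matrix (Fin n) (Fin n) ℂ) (h : ∀ i ∈ s, PartiallyPos G (f i)) :
    PartiallyPos G (∑ i ∈ s, f i) := by
  classical
  induction s using Finset.induction_on with
  | empty => simpa using PartiallyPos.zero G
  | insert _ _ hx ih =>
      rw [Finset.sum_insert hx]
      exact PartiallyPos.add (h _ (Finset.mem_insert_self _ _))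
        (ih fun i hi => h i (Finset.mem_insert_of_mem hi))

section LemmaA

variable {κ : Type*} [Fintype κ] [DecidableEq κ]

lemma option_quad (K : Matrix (Option κ) (Option κ) ℂ) (t : ℂ) (x : κ → ℂ) :
    star (fun o : Option κ => o.elim t x) ⬝ᵥ (K *ᵥ fun o : Option κ => o.elim t x)
    = star t * K none none * t
      + star t * (∑ j, K none (some j) * x j)
      + (∑ i, star (x i) * K (some i) none) * t
      + star x ⬝ᵥ (K.submatrix some some *ᵥ x) := by
  simp only [dotProduct, mulVec, Pi.star_apply, Fintype.sum_option, Option.elim,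
    submatrix_apply]
  simp only [mul_add, add_mul, Finset.sum_add_distrib, Finset.mul_sum, Finset.sum_mul, mul_assoc]
  have h : ∀ i, t * (star (x i) * K (some i) none) = star (x i) * (K (some i) none * t) :=
    fun i => by ring
  try simp only [h]
  ring

lemma exists_col_solution (K : Matrix (Option κ) (Option κ) ℂ) (hK : K.PosSemidef) :
    ∃ u : κ → ℂ, (K.submatrix some some) *ᵥ u = (fun j => K (some j) none) ∧
      star u ⬝ᵥ (fun j => K (some j) none) ≤ K none none ∧ 0 ≤ K none none := by
  classical
  set A := K.submatrix some some with hAdef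
  set b : κ → ℂ := fun j => K (some j) none with hbdef
  set α := K none none with hadef
  have hA : A.PosSemidef := hK.submatrix some
  have hKo : ∀ j, K none (some j) = star (b j) := fun j => (hK.1.apply none (some j)).symm
  have hconj : ∀ x : κ → ℂ, (∑ j, K none (some j) * x j) = star (star x ⬝ᵥ b) := by
    intro x
    rw [dotProduct, star_sum]
    refine Finset.sum_congr rfl fun j _ => ?_
    rw [hKo, Pi.star_apply, star_mul', star_star]
    ring
  have hQ : ∀ (t : ℂ) (x : κ → ℂ),
      0 ≤ star t * α * t + star t * star (star x ⬝ᵥ b) + (star x ⬝ᵥ b) * t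
        + star x ⬝ᵥ (A *ᵥ x) := by
    intro t x
    have h := hK.dotProduct_mulVec_nonneg (fun o : Option κ => o.elim t x)
    rw [option_quad, hconj x,
      show (∑ i, star (x i) * K (some i) none) = star x ⬝ᵥ b from rfl] at h
    exact h
  have hα0 : 0 ≤ α := by simpa using hQ 1 0
  have him0 : α.im = 0 := by
    rw [Complex.le_def] at hα0; simpa using hα0.2.symm
  -- spectral setup
  have hAH := hA.1
  set U : Matrix κ κ ℂ := (hAH.eigenvectorUnitary : Matrix κ κ ℂ) with hUdef
  have hU1 : star U * U = 1 := (Unitary.mem_iff.mp hAH.eigenvectorUnitary.2).1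
  have hU2 : U * star U = 1 := (Unitary.mem_iff.mp hAH.eigenvectorUnitary.2).2
  set d := hAH.eigenvalues with hddef
  set D := Matrix.diagonal (RCLike.ofReal ∘ d : κ → ℂ) with hDdef
  have hspec : A = U * D * star U := hAH.spectral_theorem
  -- key vanishing property
  have key : ∀ i, d i = 0 → (star U *ᵥ b) i = 0 := by
    intro i hi
    set x : κ → ℂ := fun j => U j i with hxdef
    have hxs : x = U *ᵥ Pi.single i 1 := by
      funext j
      simp [hxdef, mulVec, dotProduct, Pi.single_apply, mul_ite, Finset.sum_ite_eq']
    have hD0 : D *ᵥ Pi.single i 1 = 0 := by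
      funext j
      rw [hDdef, mulVec_diagonal]
      rcases eq_or_ne j i with rfl | hji
      · simp [Function.comp, hi]
      · simp [Pi.single_eq_of_ne hji]
    have hx : A *ᵥ x = 0 :=
      calc A *ᵥ x = (U * D * star U) *ᵥ (U *ᵥ Pi.single i 1) := by rw [hspec, hxs]
        _ = ((U * D * star U) * U) *ᵥ Pi.single i 1 := mulVec_mulVec _ _ _
        _ = (U * D) *ᵥ Pi.single i 1 := by
              rw [Matrix.mul_assoc (U * D), hU1, Matrix.mul_one]
        _ = U *ᵥ (D *ᵥ Pi.single i 1) := (mulVec_mulVec _ _ _).symm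
        _ = 0 := by rw [hD0, mulVec_zero]
    have hsUb : (star U *ᵥ b) i = star x ⬝ᵥ b := by
      simp [mulVec, dotProduct, hxdef, Matrix.star_apply]
    rw [hsUb]
    by_contra hne
    obtain ⟨a, ha⟩ : ∃ a : ℝ, α = (a : ℂ) :=
      ⟨α.re, by apply Complex.ext <;> simp [him0]⟩
    have hsre : 0 ≤ a := by
      have := hα0; rw [ha, Complex.zero_le_real] at this; exact this
    set s : ℝ := 1 / (a + 1) with hsdef
    set γ := star x ⬝ᵥ b with hγdef
    have h := hQ (-(s : ℂ) * star γ) x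
    rw [hx, dotProduct_zero, add_zero, ← hγdef] at h
    simp only [star_mul', star_neg, star_star, Complex.star_def, Complex.conj_ofReal,
      Complex.conj_conj] at h
    have hmc : γ * (starRingEnd ℂ) γ = ((Complex.normSq γ : ℝ) : ℂ) := Complex.mul_conj γ
    have h3 : (0:ℂ) ≤ (((s*s*a - 2*s) * Complex.normSq γ : ℝ) : ℂ) := by
      refine le_trans h (le_of_eq ?_)
      rw [ha]; push_cast
      linear_combination ((s:ℂ)*(s:ℂ)*(a:ℂ) - 2*(s:ℂ)) * hmc
    rw [Complex.zero_le_real] at h3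
    have hn : 0 < Complex.normSq γ := Complex.normSq_pos.mpr hne
    have hspos : 0 < s := by rw [hsdef]; positivity
    have hs1 : s * (a + 1) = 1 := by
      rw [hsdef]; field_simp
    have e1 : s * a = 1 - s := by nlinarith [hs1]
    have e2 : s * s * a = s * (1 - s) := by rw [mul_assoc, e1]
    nlinarith [h3, hn, hspos, e2, mul_pos hspos hn, mul_pos (mul_pos hspos hspos) hn]
  -- construct u
  set g : κ → ℂ := fun i => if d i = 0 then 0 else ((d i : ℝ) : ℂ)⁻¹ with hgdef
  set u : κ → ℂ := (U * Matrix.diagonal g * star U) *ᵥ b with hudef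
  have hinner : (D * Matrix.diagonal g) *ᵥ (star U *ᵥ b) = star U *ᵥ b := by
    rw [hDdef, diagonal_mul_diagonal]
    funext i
    rw [mulVec_diagonal]
    rcases eq_or_ne (d i) 0 with hdi | hdi
    · simp [key i hdi]
    · have hgi : g i = ((d i : ℝ) : ℂ)⁻¹ := by rw [hgdef]; simp [hdi]
      have hne : ((d i : ℝ) : ℂ) ≠ 0 := by exact_mod_cast hdi
      simp only [Pi.mul_apply, Function.comp_apply, hgi, RCLike.ofReal_real_eq_id, id]
      simp [mul_inv_cancel₀ hne]
  have hprod : (U * D * star U) * (U * Matrix.diagonal g * star U)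
      = U * (D * Matrix.diagonal g) * star U := by
    simp only [Matrix.mul_assoc]
    rw [← Matrix.mul_assoc (star U) U, hU1, Matrix.one_mul]
  have hAu : A *ᵥ u = b :=
    calc A *ᵥ u = (U * D * star U) *ᵥ ((U * Matrix.diagonal g * star U) *ᵥ b) := by
          rw [hspec, hudef]
      _ = ((U * D * star U) * (U * Matrix.diagonal g * star U)) *ᵥ b := mulVec_mulVec _ _ _
      _ = (U * (D * Matrix.diagonal g) * star U) *ᵥ b := by rw [hprod]
      _ = U *ᵥ ((D * Matrix.diagonal g) *ᵥ (star U *ᵥ b)) := by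
          rw [mulVec_mulVec, mulVec_mulVec]
      _ = U *ᵥ (star U *ᵥ b) := by rw [hinner]
      _ = b := by rw [mulVec_mulVec, hU2, one_mulVec]
  refine ⟨u, hAu, ?_, hα0⟩
  have h := hQ 1 (-u)
  rw [mulVec_neg, hAu] at h
  simp only [star_neg, neg_dotProduct, dotProduct_neg, star_one, one_mul, mul_one,
    neg_neg] at h
  have h2 : (0:ℂ) ≤ α - star (star u ⬝ᵥ b) := by
    refine le_trans h (le_of_eq ?_); ring
  have him : (star u ⬝ᵥ b).im = 0 := by
    rw [Complex.le_def] at h2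
    have := h2.2
    simp only [Complex.zero_im, Complex.sub_im, him0] at this
    simp only [Complex.star_def, Complex.conj_im] at this
    linarith
  have hstar : star (star u ⬝ᵥ b) = star u ⬝ᵥ b := by
    rw [Complex.star_def]
    exact Complex.conj_eq_iff_im.mpr him
  rw [hstar] at h2
  exact sub_nonneg.mp h2

end LemmaA

/-- the completion theorem -/
lemma completion : ∀ (n : ℕ) (G : SimpleGraph (Fin n)) (σ : Equiv.Perm (Fin n)),
    IsPerfectElimOrdering G σ → ∀ M : Matrix (Fin n) (Fin n) ℂ, PartiallyPos G M →
    ∃ N : Matrix (Fin n) (Fin n) ℂ, N.PosSemidef ∧ projOn G N = M := by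
  intro n
  induction n with
  | zero =>
      intro G σ hσ M hM
      exact ⟨0, Matrix.PosSemidef.zero, by funext i j; exact i.elim0⟩
  | succ n IH =>
      intro G σ hσ M hM
      classical
      set p : Fin (n+1) := σ 0 with hp
      set e : Fin n → Fin (n+1) := p.succAbove with he
      have hei : Function.Injective e := Fin.succAbove_right_injective
      have hep : ∀ j : Fin n, e j ≠ p := fun j => Fin.succAbove_ne p j
      -- simplicial clique at p
      have hclq : G.IsClique {v | v = p ∨ G.Adj p v} := by
        refine SimpleGraph.IsClique.subset ?_ (hσ 0)
        intro v hv
        rcases hv with rfl | hadj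
        · exact Or.inl rfl
        · refine Or.inr ⟨?_, hadj⟩
          rw [Fin.pos_iff_ne_zero]
          intro h0
          have : v = σ 0 := by rw [← h0, Equiv.apply_symm_apply]
          exact hadj.ne' (by rw [this, ← hp])
      have hclq' := (SimpleGraph.isClique_iff _).mp hclq
      -- the reduced graph and ordering
      set G' : SimpleGraph (Fin n) := SimpleGraph.comap e G with hG'
      set E : Fin (n+1) ≃ Option (Fin n) := finSuccEquiv' p with hE
      have hEp : E p = none := finSuccEquiv'_at p
      set τ : Option (Fin n) ≃ Option (Fin n) := (finSuccEquiv n).symm.trans (σ.trans E) with hτ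
      have hτn : τ none = none := by
        show E (σ ((finSuccEquiv n).symm none)) = none
        rw [finSuccEquiv_symm_none, ← hp, hEp]
      set σ' : Equiv.Perm (Fin n) := Equiv.removeNone τ with hσ'def
      have hσ'e : ∀ k : Fin n, e (σ' k) = σ k.succ := by
        intro k
        have hex : ∃ x', τ (some k) = some x' := by
          rcases hc : τ (some k) with _ | v
          · exact absurd (τ.injective (hc.trans hτn.symm)) (by simp)
          · exact ⟨v, rfl⟩
        have h1 : some (σ' k) = τ (some k) := Equiv.removeNone_some τ hex
        have h2 : τ (some k) = E (σ k.succ) := by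
          show E (σ ((finSuccEquiv n).symm (some k))) = E (σ k.succ)
          rw [finSuccEquiv_symm_some]
        have h3 : E.symm (some (σ' k)) = σ k.succ := by
          rw [h1, h2, Equiv.symm_apply_apply]
        rw [← h3, hE, finSuccEquiv'_symm_some]
      have hσ'symm : ∀ v : Fin n, σ.symm (e v) = (σ'.symm v).succ := by
        intro v
        rw [Equiv.symm_apply_eq, ← hσ'e, Equiv.apply_symm_apply]
      have hσ' : IsPerfectElimOrdering G' σ' := by
        intro k
        intro u hu v hv huv
        have htrans : ∀ w, (w = σ' k ∨ (k < σ'.symm w ∧ G'.Adj (σ' k) w)) →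
            (e w = σ k.succ ∨ (k.succ < σ.symm (e w) ∧ G.Adj (σ k.succ) (e w))) := by
          intro w hw
          rcases hw with rfl | ⟨hk, hadj⟩
          · exact Or.inl (hσ'e k)
          · refine Or.inr ⟨?_, ?_⟩
            · rw [hσ'symm]; exact Fin.succ_lt_succ_iff.mpr hk
            · rw [← hσ'e k]; exact hadj
        exact (SimpleGraph.isClique_iff _).mp (hσ k.succ) (htrans u hu) (htrans v hv)
          (fun hc => huv (hei hc))
      -- the reduced matrix
      set M' : Matrix (Fin n) (Fin n) ℂ := M.submatrix e e with hM'
      have hM'pp : PartiallyPos G' M' := by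
        refine ⟨?_, ?_, ?_⟩
        · ext i j
          rw [Matrix.conjTranspose_apply, hM', Matrix.submatrix_apply, Matrix.submatrix_apply]
          exact hM.1.apply (e i) (e j)
        · intro i j hij hadj
          exact hM.2.1 (e i) (e j) (fun h => hij (hei h)) hadj
        · intro C hC
          have heq : M'.submatrix (fun i : C => (i : Fin n)) (fun j : C => (j : Fin n))
              = M.submatrix (fun i : C => e i) (fun j : C => e j) := rfl
          rw [heq]
          refine pp_submatrix_psd hM _ ?_
          rintro x ⟨⟨i, hiC⟩, rfl⟩ y ⟨⟨j, hjC⟩, rfl⟩ hxy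
          have hij : (i : Fin n) ≠ j := fun h => hxy (by simp [h])
          exact (SimpleGraph.isClique_iff _).mp hC hiC hjC hij
      obtain ⟨N', hN'psd, hN'proj⟩ := IH G' σ' hσ' M' hM'pp
      have hN'herm := hN'psd.1
      have hN'M : ∀ i j : Fin n, (i = j ∨ G'.Adj i j) → N' i j = M (e i) (e j) := by
        intro i j hij
        have h := congrFun (congrFun hN'proj i) j
        simp only [projOn] at h
        rw [if_pos hij] at h
        exact h
      -- the neighbor clique and the column solution
      set f : Option {j : Fin n // G.Adj p (e j)} → Fin (n+1) :=
        fun o => o.elim p (fun j => e j.1) with hf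
      have hfrange : G.IsClique (Set.range f) := by
        refine SimpleGraph.IsClique.subset ?_ hclq
        rintro x ⟨o, rfl⟩
        rcases o with _ | j
        · exact Or.inl rfl
        · exact Or.inr j.2
      have hK : (M.submatrix f f).PosSemidef := pp_submatrix_psd hM f hfrange
      obtain ⟨u, hAu, hub, hα0⟩ := exists_col_solution (M.submatrix f f) hK
      have hAN : ∀ j k : {j : Fin n // G.Adj p (e j)},
          (M.submatrix f f) (some j) (some k) = N' j.1 k.1 := by
        intro j k
        rcases eq_or_ne j.1 k.1 with h | h
        · exact (hN'M _ _ (Or.inl h)).symm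
        · have hadj : G.Adj (e j.1) (e k.1) :=
            hclq' (Or.inr j.2) (Or.inr k.2) (fun hc => h (hei hc))
          exact (hN'M _ _ (Or.inr hadj)).symm
      set w : Fin n → ℂ := fun j => if h : G.Adj p (e j) then u ⟨j, h⟩ else 0 with hw
      set c : Fin n → ℂ := N' *ᵥ w with hc
      have hsubty : ∀ (F : Fin n → ℂ),
          (∑ k : Fin n, (if G.Adj p (e k) then F k else 0))
            = ∑ k : {j : Fin n // G.Adj p (e j)}, F k.1 := by
        intro F
        rw [← Finset.sum_filter]
        exact Finset.sum_subtype _ (by simp) F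
      have hcS : ∀ j : {j : Fin n // G.Adj p (e j)}, c j.1 = M (e j.1) p := by
        intro j
        have h1 : c j.1 = ∑ k : Fin n, N' j.1 k * w k := rfl
        have h2 : ∀ k : Fin n, N' j.1 k * w k = if G.Adj p (e k) then N' j.1 k * w k else 0 := by
          intro k
          by_cases h : G.Adj p (e k)
          · rw [if_pos h]
          · rw [if_neg h, hw]; simp [h]
        have h3 : c j.1 = ∑ k : {j : Fin n // G.Adj p (e j)}, N' j.1 k.1 * w k.1 := by
          rw [h1, Finset.sum_congr rfl (fun k _ => h2 k), hsubty]
        have h4 : ∀ k : {j : Fin n // G.Adj p (e j)}, N' j.1 k.1 * w k.1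
            = (M.submatrix f f) (some j) (some k) * u k := by
          intro k
          rw [hAN, hw]
          simp [k.2]
        have h5 := congrFun hAu j
        rw [h3, Finset.sum_congr rfl (fun k _ => h4 k)]
        exact h5
      have hwc : star w ⬝ᵥ c
          = star u ⬝ᵥ (fun j : {j : Fin n // G.Adj p (e j)} => (M.submatrix f f) (some j) none) := by
        have h1 : star w ⬝ᵥ c = ∑ k : Fin n, star (w k) * c k := rfl
        have h2 : ∀ k : Fin n, star (w k) * c k = if G.Adj p (e k) then star (w k) * c k else 0 := by
          intro k
          by_cases h : G.Adj p (e k)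
          · rw [if_pos h]
          · rw [if_neg h, hw]; simp [h]
        rw [h1, Finset.sum_congr rfl (fun k _ => h2 k), hsubty]
        refine Finset.sum_congr rfl (fun k _ => ?_)
        show star (w k.1) * c k.1 = star (u k) * M (e k.1) p
        rw [hcS k, hw]
        simp [k.2]
      -- the completed matrix on Option (Fin n)
      set Nt : Matrix (Option (Fin n)) (Option (Fin n)) ℂ := fun o o' =>
        o.elim (o'.elim (M p p) (fun j => star (c j)))
          (fun i => o'.elim (c i) (fun j => N' i j)) with hNt
      have hNtsub : Nt.submatrix some some = N' := rfl
      have hMppstar : star (M p p) = M p p := by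
        have h := hα0
        rw [Complex.le_def] at h
        rw [Complex.star_def]
        apply Complex.conj_eq_iff_im.mpr
        exact (by simpa using h.2.symm : (M (f none) (f none)).im = 0)
      have hNtherm : Nt.IsHermitian := by
        ext o o'
        rcases o with _ | i <;> rcases o' with _ | j
        · exact hMppstar
        · rfl
        · exact star_star (c i)
        · exact hN'herm.apply i j
      have hNwc : star w ⬝ᵥ (N' *ᵥ w) ≤ M p p := by
        rw [← hc, hwc]
        exact hub
      have hNtpsd : Nt.PosSemidef := by
        refine Matrix.PosSemidef.of_dotProduct_mulVec_nonneg hNtherm ?_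
        intro y
        have hy : y = fun o : Option (Fin n) => o.elim (y none) (fun i => y (some i)) := by
          funext o; cases o <;> rfl
        rw [hy, option_quad, hNtsub]
        set t : ℂ := y none
        set x : Fin n → ℂ := fun i => y (some i)
        have hb1 : (∑ j, Nt none (some j) * x j) = star w ⬝ᵥ (N' *ᵥ x) := by
          have : (∑ j, Nt none (some j) * x j) = star c ⬝ᵥ x := rfl
          rw [this, hc, Matrix.star_mulVec, hN'herm.eq, ← Matrix.dotProduct_mulVec]
        have hb2 : (∑ i, star (x i) * Nt (some i) none) = star x ⬝ᵥ (N' *ᵥ w) := rfl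
        have hexp : star t * Nt none none * t + star t * (star w ⬝ᵥ (N' *ᵥ x))
            + (star x ⬝ᵥ (N' *ᵥ w)) * t + star x ⬝ᵥ (N' *ᵥ x)
            = star (x + t • w) ⬝ᵥ (N' *ᵥ (x + t • w))
              + (star t * t) * (M p p - star w ⬝ᵥ (N' *ᵥ w)) := by
          have hNtnn : Nt none none = M p p := rfl
          rw [hNtnn, Matrix.mulVec_add, Matrix.mulVec_smul, star_add, star_smul,
            add_dotProduct, dotProduct_add, dotProduct_add,
            smul_dotProduct, smul_dotProduct, dotProduct_smul,
            dotProduct_smul]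
          simp only [smul_eq_mul, star_trivial]
          ring
        rw [hb1, hb2, hexp]
        have h1 : 0 ≤ star (x + t • w) ⬝ᵥ (N' *ᵥ (x + t • w)) := hN'psd.dotProduct_mulVec_nonneg _
        have h2 : 0 ≤ (star t * t) * (M p p - star w ⬝ᵥ (N' *ᵥ w)) :=
          mul_nonneg (star_mul_self_nonneg t) (sub_nonneg.mpr hNwc)
        exact add_nonneg h1 h2
      -- assemble
      refine ⟨Nt.submatrix E E, hNtpsd.submatrix E, ?_⟩
      funext i j
      simp only [projOn]
      by_cases hij : i = j ∨ G.Adj i j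
      · rw [if_pos hij]
        have hNij : Nt.submatrix (⇑E) (⇑E) i j = Nt (E i) (E j) := rfl
        rcases hEi : E i with _ | i' <;> rcases hEj : E j with _ | j'
        · have hi : i = p := by
            rw [show p = E.symm none from (finSuccEquiv'_symm_none p).symm, ← hEi,
              Equiv.symm_apply_apply]
          have hj : j = p := by
            rw [show p = E.symm none from (finSuccEquiv'_symm_none p).symm, ← hEj,
              Equiv.symm_apply_apply]
          rw [hNij, hEi, hEj, hi, hj]
          rfl
        · have hi : i = p := by
            rw [show p = E.symm none from (finSuccEquiv'_symm_none p).symm, ← hEi,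
              Equiv.symm_apply_apply]
          have hj : j = e j' := by
            rw [show e j' = E.symm (some j') from (finSuccEquiv'_symm_some p j').symm, ← hEj,
              Equiv.symm_apply_apply]
          have hadj : G.Adj p (e j') := by
            rcases hij with h | h
            · exact absurd (hi ▸ hj ▸ h).symm (hep j')
            · exact hi ▸ hj ▸ h
          rw [hNij, hEi, hEj, hi, hj]
          show star (c j') = M p (e j')
          rw [hcS ⟨j', hadj⟩]
          exact hM.1.apply p (e j')
        · have hi : i = e i' := by
            rw [show e i' = E.symm (some i') from (finSuccEquiv'_symm_some p i').symm, ← hEi,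
              Equiv.symm_apply_apply]
          have hj : j = p := by
            rw [show p = E.symm none from (finSuccEquiv'_symm_none p).symm, ← hEj,
              Equiv.symm_apply_apply]
          have hadj : G.Adj p (e i') := by
            rcases hij with h | h
            · exact absurd (hi ▸ hj ▸ h) (hep i')
            · exact (hi ▸ hj ▸ h).symm
          rw [hNij, hEi, hEj, hi, hj]
          show c i' = M (e i') p
          exact hcS ⟨i', hadj⟩
        · have hi : i = e i' := by
            rw [show e i' = E.symm (some i') from (finSuccEquiv'_symm_some p i').symm, ← hEi,
              Equiv.symm_apply_apply]
          have hj : j = e j' := by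
            rw [show e j' = E.symm (some j') from (finSuccEquiv'_symm_some p j').symm, ← hEj,
              Equiv.symm_apply_apply]
          rw [hNij, hEi, hEj, hi, hj]
          show N' i' j' = M (e i') (e j')
          rcases hij with h | h
          · exact hN'M i' j' (Or.inl (hei (by rw [← hi, ← hj]; exact h)))
          · exact hN'M i' j' (Or.inr (by show G.Adj (e i') (e j'); rw [← hi, ← hj]; exact h))
      · rw [if_neg hij]
        push_neg at hij
        exact (hM.2.1 i j hij.1 hij.2).symm

end ChordalAux


/-- An extremal-ray generator of the partially positive cone on a chordal graph is the
projection of a rank-one positive semidefinite matrix `v v*`. -/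
theorem extremal_ray_is_proj_of_rank_one {n : ℕ} (G : SimpleGraph (Fin n))
    (hG : IsChordal G) (M : Matrix (Fin n) (Fin n) ℂ) (hM0 : M ≠ 0)
    (hM : PartiallyPos G M)
    (hext : ∀ A B : Matrix (Fin n) (Fin n) ℂ, PartiallyPos G A → PartiallyPos G B →
      M = A + B →
      (∃ a : ℝ, 0 ≤ a ∧ A = (a : ℂ) • M) ∧ (∃ b : ℝ, 0 ≤ b ∧ B = (b : ℂ) • M)) :
    ∃ v : Fin n → ℂ, M = projOn G (Matrix.vecMulVec v (star v)) := by
  classical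
  obtain ⟨σ, hσ⟩ := hG
  obtain ⟨N, hNpsd, hNproj⟩ := ChordalAux.completion n G σ hσ M hM
  obtain ⟨B, hB⟩ : ∃ B : Matrix (Fin n) (Fin n) ℂ, N = B.conjTranspose * B := by
    open MatrixOrder in
    exact CStarAlgebra.nonneg_iff_eq_star_mul_self.mp hNpsd.nonneg
  set v : Fin n → Fin n → ℂ := fun k i => star (B k i) with hv
  have hsum : ∑ k, Matrix.vecMulVec (v k) (star (v k)) = N := by
    rw [hB]
    ext i j
    rw [Matrix.sum_apply, Matrix.mul_apply]
    refine Finset.sum_congr rfl fun k _ => ?_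
    simp only [Matrix.vecMulVec_apply, hv, Matrix.conjTranspose_apply, Pi.star_apply,
      star_star]
  set P : Fin n → Matrix (Fin n) (Fin n) ℂ :=
    fun k => projOn G (Matrix.vecMulVec (v k) (star (v k))) with hP
  have hMsum : ∑ k, P k = M := by
    have key : ∀ i j, (∑ k, P k) i j
        = projOn G (∑ k, Matrix.vecMulVec (v k) (star (v k))) i j := by
      intro i j
      rw [Matrix.sum_apply]
      simp only [hP, projOn, Matrix.sum_apply]
      by_cases h : i = j ∨ G.Adj i j
      · rw [if_pos h]
        exact Finset.sum_congr rfl fun k _ => by rw [if_pos h]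
      · rw [if_neg h]
        exact Finset.sum_eq_zero fun k _ => by rw [if_neg h]
    funext i j
    rw [key, hsum, hNproj]
  have hPpp : ∀ k, PartiallyPos G (P k) := by
    intro k
    refine ChordalAux.projOn_psd_partiallyPos G ?_
    have hre : Matrix.vecMulVec (v k) (star (v k))
        = (Matrix.replicateRow Unit (star (v k))).conjTranspose * (Matrix.replicateRow Unit (star (v k))) := by
      rw [Matrix.vecMulVec_eq Unit]
      congr 1
      ext i u
      simp [Matrix.conjTranspose_apply, Matrix.replicateRow_apply, Matrix.replicateCol_apply, star_star]
    rw [hre]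
    exact Matrix.posSemidef_conjTranspose_mul_self _
  have hscal : ∀ k, ∃ a : ℝ, 0 ≤ a ∧ P k = (a : ℂ) • M := by
    intro k
    have hrest : PartiallyPos G (∑ j ∈ Finset.univ.erase k, P j) :=
      ChordalAux.PartiallyPos.sum _ _ (fun j _ => hPpp j)
    have hsplit : M = P k + ∑ j ∈ Finset.univ.erase k, P j := by
      rw [Finset.add_sum_erase _ _ (Finset.mem_univ k), hMsum]
    exact (hext _ _ (hPpp k) hrest hsplit).1
  choose a ha hPa using hscal
  have hsum_a : ((∑ k, a k : ℝ) : ℂ) • M = M := by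
    push_cast
    rw [Finset.sum_smul]
    exact Eq.trans (Finset.sum_congr rfl fun k _ => (hPa k).symm) hMsum
  have hone : (∑ k, a k) = 1 := by
    by_contra hne
    apply hM0
    have hne' : ((∑ k, a k : ℝ) : ℂ) - 1 ≠ 0 := by
      intro hc
      rw [sub_eq_zero] at hc
      exact hne (by exact_mod_cast hc)
    have h0 : (((∑ k, a k : ℝ) : ℂ) - 1) • M = 0 := by
      rw [sub_smul, one_smul, hsum_a, sub_self]
    exact (smul_eq_zero.mp h0).resolve_left hne'
  have hex : ∃ k, 0 < a k := by
    by_contra hcon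
    push_neg at hcon
    have h1 : (∑ k, a k) ≤ 0 := Finset.sum_nonpos fun k _ => hcon k
    rw [hone] at h1
    linarith
  obtain ⟨k, hk⟩ := hex
  refine ⟨((Real.sqrt (a k)⁻¹ : ℝ) : ℂ) • v k, ?_⟩
  have h1 : M = (((a k : ℝ) : ℂ))⁻¹ • P k := by
    rw [hPa k, smul_smul, inv_mul_cancel₀ (by exact_mod_cast hk.ne'), one_smul]
  have h2 : (((a k : ℝ) : ℂ))⁻¹ • P k
      = projOn G ((((a k : ℝ) : ℂ))⁻¹ • Matrix.vecMulVec (v k) (star (v k))) := by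
    funext i j
    simp only [hP, projOn, Matrix.smul_apply]
    by_cases h : i = j ∨ G.Adj i j
    · rw [if_pos h, if_pos h]
    · rw [if_neg h, if_neg h, smul_zero]
  have hs : ((Real.sqrt (a k)⁻¹ : ℝ) : ℂ) * ((Real.sqrt (a k)⁻¹ : ℝ) : ℂ)
      = (((a k : ℝ) : ℂ))⁻¹ := by
    rw [← Complex.ofReal_mul, Real.mul_self_sqrt (inv_nonneg.mpr hk.le), Complex.ofReal_inv]
  have h3 : (((a k : ℝ) : ℂ))⁻¹ • Matrix.vecMulVec (v k) (star (v k))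
      = Matrix.vecMulVec (((Real.sqrt (a k)⁻¹ : ℝ) : ℂ) • v k)
          (star (((Real.sqrt (a k)⁻¹ : ℝ) : ℂ) • v k)) := by
    funext i j
    simp only [Matrix.vecMulVec_apply, Matrix.smul_apply, Pi.smul_apply, Pi.star_apply,
      smul_eq_mul, star_mul', Complex.star_def, Complex.conj_ofReal]
    rw [← hs]
    ring
  rw [h1, h2, h3]
end

section
/- Products of two band matrices span everything blockwise: let 1 < b < n and for 1 ≤ k ≤ n−b+1 let π_k : M_n(ℂ) → M_b(ℂ) extract the principal submatrix indexed by {k,…,k+b−1}. Let Φ : E_{n,b} → ⊕_{k=1}^{n−b+1} M_b(ℂ) be Φ(M) = (π_k(M))_k, where E_{n,b} ⊆ M_n(ℂ) is the space of band matrices (M_{ij} = 0 if |i−j| ≥ b). Then the linear span of {Φ(A)·Φ(B) : A, B ∈ E_{n,b}} together with Φ(E_{n,b}) equals all of ⊕_{k=1}^{n−b+1} M_b(ℂ), while Φ itself is not surjective. -/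
/-- `M` is a band matrix of bandwidth `b`: `M i j = 0` whenever `|i - j| ≥ b`. -/
def IsBand (n b : ℕ) (M : Matrix (Fin n) (Fin n) ℂ) : Prop :=
  ∀ i j : Fin n, (b : ℤ) ≤ |((i : ℕ) : ℤ) - ((j : ℕ) : ℤ)| → M i j = 0

/-- `Φ`: the tuple of all `b × b` principal blocks along the diagonal of `M`. -/
def blockMap {n b : ℕ} (h : b ≤ n) (M : Matrix (Fin n) (Fin n) ℂ) :
    (k : Fin (n - b + 1)) → Matrix (Fin b) (Fin b) ℂ :=
  fun k i j =>
    M ⟨k.1 + i.1, by have hk := k.2; have hi := i.2; omega⟩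
      ⟨k.1 + j.1, by have hk := k.2; have hj := j.2; omega⟩

lemma isBand_std {n b : ℕ} (p q : Fin n) (hpq : ((p:ℕ):ℤ) - ((q:ℕ):ℤ) < b ∧ ((q:ℕ):ℤ) - ((p:ℕ):ℤ) < b) :
    IsBand n b (Matrix.single p q (1:ℂ)) := by
  intro i j hij
  rcases abs_cases (((i:ℕ):ℤ) - ((j:ℕ):ℤ)) with ⟨h, _⟩ | ⟨h, _⟩ <;>
  · rw [Matrix.single, Matrix.of_apply, if_neg]
    rintro ⟨rfl, rfl⟩
    omega

lemma blockMap_std {n b : ℕ} (hn : b ≤ n) (p q : Fin n) (k : Fin (n - b + 1)) (i j : Fin b) :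
    blockMap hn (Matrix.single p q (1:ℂ)) k i j =
      if (k.1 + i.1 = p.1 ∧ k.1 + j.1 = q.1) then 1 else 0 := by
  simp only [blockMap, Matrix.single, Matrix.of_apply, Fin.ext_iff]
  split_ifs with h1 h2 h2 <;> first | rfl | omega

lemma band_prod_apply {n b : ℕ} (hb : 1 < b) (hn : b < n) (k i j : ℕ) (hk : k ≤ n - b)
    (hi : i < b) (hj : j < b) (hp : k + i < n) (hq : k + (b-1) < n) (hr : k + j < n)
    (k' : Fin (n - b + 1)) (i' j' : Fin b) :
    (blockMap hn.le (Matrix.single (⟨k+i, hp⟩ : Fin n) ⟨k+(b-1), hq⟩ (1:ℂ)) k' *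
     blockMap hn.le (Matrix.single (⟨k+(b-1), hq⟩ : Fin n) ⟨k+j, hr⟩ (1:ℂ)) k') i' j' =
      if (k'.1 + i'.1 = k + i ∧ k'.1 + j'.1 = k + j ∧ k ≤ k'.1) then 1 else 0 := by
  rw [Matrix.mul_apply]
  simp only [blockMap_std]
  by_cases hc : k'.1 + i'.1 = k + i ∧ k'.1 + j'.1 = k + j ∧ k ≤ k'.1
  · rw [if_pos hc]
    obtain ⟨h1, h2, h3⟩ := hc
    have hm : k + (b-1) - k'.1 < b := by omega
    rw [Finset.sum_eq_single (⟨k + (b-1) - k'.1, hm⟩ : Fin b)]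
    · have he : k'.1 + (k + (b-1) - k'.1) = k + (b-1) := by omega
      rw [if_pos ⟨h1, he⟩, if_pos ⟨he, h2⟩, one_mul]
    · intro m _ hm'
      have hne : ¬ (k'.1 + m.1 = k + (b-1)) := by
        intro h
        apply hm'
        apply Fin.ext
        simp only
        omega
      rw [if_neg (fun h => hne h.2), zero_mul]
    · intro h; exact absurd (Finset.mem_univ _) h
  · rw [if_neg hc]
    apply Finset.sum_eq_zero
    intro m _
    by_cases h1 : k'.1 + i'.1 = k + i ∧ k'.1 + m.1 = k + (b-1)
    · by_cases h2 : k'.1 + m.1 = k + (b-1) ∧ k'.1 + j'.1 = k + j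
      · exact absurd ⟨h1.1, h2.2, by have := m.2; omega⟩ hc
      · rw [if_neg h2, mul_zero]
    · rw [if_neg h1, zero_mul]

lemma single_entry {N b : ℕ} (k k' : Fin N) (i j i' j' : Fin b) :
    (Pi.single k (Matrix.single i j (1:ℂ)) : Fin N → Matrix (Fin b) (Fin b) ℂ) k' i' j' =
      if (k'.1 = k.1 ∧ i'.1 = i.1 ∧ j'.1 = j.1) then 1 else 0 := by
  rcases eq_or_ne k' k with rfl | hne
  · simp [Matrix.single, Fin.ext_iff]
    split_ifs with h1 h2 h2 <;> first | rfl | omega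
  · rw [Pi.single_eq_of_ne hne, if_neg (fun h => hne (Fin.ext h.1))]
    rfl

lemma delta_mem {n b : ℕ} (hb : 1 < b) (hn : b < n) (k : Fin (n - b + 1)) (i j : Fin b) :
    (Pi.single k (Matrix.single i j (1:ℂ)) :
        Fin (n - b + 1) → Matrix (Fin b) (Fin b) ℂ) ∈
      Submodule.span ℂ
        ({x | ∃ M : Matrix (Fin n) (Fin n) ℂ, IsBand n b M ∧ x = blockMap hn.le M} ∪
          {x | ∃ A B : Matrix (Fin n) (Fin n) ℂ, IsBand n b A ∧ IsBand n b B ∧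
            x = blockMap hn.le A * blockMap hn.le B}) := by
  have hkk : k.1 ≤ n - b := by have := k.2; omega
  have prodMem : ∀ (K I J : ℕ) (hK : K ≤ n - b) (hI : I < b) (hJ : J < b),
      (blockMap hn.le (Matrix.single (⟨K+I, by omega⟩ : Fin n) ⟨K+(b-1), by omega⟩ (1:ℂ)) *
       blockMap hn.le (Matrix.single (⟨K+(b-1), by omega⟩ : Fin n) ⟨K+J, by omega⟩ (1:ℂ))) ∈
      Submodule.span ℂ
        ({x | ∃ M : Matrix (Fin n) (Fin n) ℂ, IsBand n b M ∧ x = blockMap hn.le M} ∪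
          {x | ∃ A B : Matrix (Fin n) (Fin n) ℂ, IsBand n b A ∧ IsBand n b B ∧
            x = blockMap hn.le A * blockMap hn.le B}) := by
    intro K I J hK hI hJ
    apply Submodule.subset_span
    exact Or.inr ⟨_, _,
      isBand_std _ _ (by constructor <;> (simp only [Fin.val_mk]; push_cast; omega)),
      isBand_std _ _ (by constructor <;> (simp only [Fin.val_mk]; push_cast; omega)), rfl⟩
  by_cases hcase : i.1 = 0 ∨ j.1 = 0 ∨ k.1 = n - b
  · have heq : (Pi.single k (Matrix.single i j (1:ℂ)) :
        Fin (n - b + 1) → Matrix (Fin b) (Fin b) ℂ) =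
        blockMap hn.le (Matrix.single (⟨k.1+i.1, by have := i.2; omega⟩ : Fin n)
            ⟨k.1+(b-1), by omega⟩ (1:ℂ)) *
        blockMap hn.le (Matrix.single (⟨k.1+(b-1), by omega⟩ : Fin n)
            ⟨k.1+j.1, by have := j.2; omega⟩ (1:ℂ)) := by
      funext k'
      ext i' j'
      rw [single_entry, Pi.mul_apply, band_prod_apply hb hn k.1 i.1 j.1 hkk i.2 j.2]
      have hk' := k'.2
      have hi' := i'.2
      have hj' := j'.2
      split_ifs <;> first | rfl | omega
    rw [heq]
    exact prodMem k.1 i.1 j.1 hkk i.2 j.2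
  · push_neg at hcase
    obtain ⟨hi0, hj0, hk0⟩ := hcase
    have heq : (Pi.single k (Matrix.single i j (1:ℂ)) :
        Fin (n - b + 1) → Matrix (Fin b) (Fin b) ℂ) =
        (blockMap hn.le (Matrix.single (⟨k.1+i.1, by have := i.2; omega⟩ : Fin n)
            ⟨k.1+(b-1), by omega⟩ (1:ℂ)) *
         blockMap hn.le (Matrix.single (⟨k.1+(b-1), by omega⟩ : Fin n)
            ⟨k.1+j.1, by have := j.2; omega⟩ (1:ℂ))) -
        (blockMap hn.le (Matrix.single (⟨(k.1+1)+(i.1-1), by have := i.2; omega⟩ : Fin n)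
            ⟨(k.1+1)+(b-1), by omega⟩ (1:ℂ)) *
         blockMap hn.le (Matrix.single (⟨(k.1+1)+(b-1), by omega⟩ : Fin n)
            ⟨(k.1+1)+(j.1-1), by have := j.2; omega⟩ (1:ℂ))) := by
      funext k'
      ext i' j'
      rw [single_entry, Pi.sub_apply, Matrix.sub_apply, Pi.mul_apply, Pi.mul_apply,
        band_prod_apply hb hn k.1 i.1 j.1 hkk i.2 j.2,
        band_prod_apply hb hn (k.1+1) (i.1-1) (j.1-1) (by omega) (by have := i.2; omega)
          (by have := j.2; omega)]
      have hk' := k'.2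
      have hi' := i'.2
      have hj' := j'.2
      split_ifs <;> first | (exfalso; omega) | norm_num
    rw [heq]
    exact Submodule.sub_mem _ (prodMem k.1 i.1 j.1 hkk i.2 j.2)
      (prodMem (k.1+1) (i.1-1) (j.1-1) (by omega) (by have := i.2; omega) (by have := j.2; omega))

/-- Products of two band matrices, together with the band matrices themselves, span all
of `⊕ₖ M_b(ℂ)` blockwise; yet `Φ` itself is not surjective. -/
theorem band_products_span_blocks {n b : ℕ} (hb : 1 < b) (hn : b < n) :
    (Submodule.span ℂ
        ({x | ∃ M : Matrix (Fin n) (Fin n) ℂ, IsBand n b M ∧ x = blockMap hn.le M} ∪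
          {x | ∃ A B : Matrix (Fin n) (Fin n) ℂ, IsBand n b A ∧ IsBand n b B ∧
            x = blockMap hn.le A * blockMap hn.le B}) = ⊤) ∧
      ¬ Function.Surjective
          (fun M : {M : Matrix (Fin n) (Fin n) ℂ // IsBand n b M} => blockMap hn.le M.1) := by
  constructor
  · rw [eq_top_iff]
    intro x _
    have hrep : x = ∑ k : Fin (n - b + 1), ∑ i : Fin b, ∑ j : Fin b,
        x k i j • (Pi.single k (Matrix.single i j (1:ℂ)) :
          Fin (n - b + 1) → Matrix (Fin b) (Fin b) ℂ) := by
      funext k'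
      ext i' j'
      simp only [Finset.sum_apply, Matrix.sum_apply, Pi.smul_apply, Matrix.smul_apply,
        single_entry, smul_eq_mul, mul_ite, mul_one, mul_zero]
      rw [Finset.sum_eq_single k']
      · rw [Finset.sum_eq_single i']
        · rw [Finset.sum_eq_single j']
          · rw [if_pos ⟨rfl, rfl, rfl⟩]
          · intro c _ hne
            exact if_neg fun h => hne (Fin.ext h.2.2).symm
          · exact fun h => absurd (Finset.mem_univ _) h
        · intro c _ hne
          exact Finset.sum_eq_zero fun d _ => if_neg fun h => hne (Fin.ext h.2.1).symm
        · exact fun h => absurd (Finset.mem_univ _) h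
      · intro c _ hne
        exact Finset.sum_eq_zero fun d _ => Finset.sum_eq_zero fun e _ =>
          if_neg fun h => hne (Fin.ext h.1).symm
      · exact fun h => absurd (Finset.mem_univ _) h
    rw [hrep]
    exact Submodule.sum_mem _ fun k _ => Submodule.sum_mem _ fun i _ => Submodule.sum_mem _
      fun j _ => Submodule.smul_mem _ _ (delta_mem hb hn k i j)
  · intro hsurj
    obtain ⟨⟨M, hM⟩, hMeq⟩ := hsurj (Pi.single ⟨0, by omega⟩
      (Matrix.single ⟨b-1, by omega⟩ ⟨b-1, by omega⟩ (1:ℂ)))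
    simp only at hMeq
    have h0 := congrFun (congrFun (congrFun hMeq ⟨0, by omega⟩) ⟨b-1, by omega⟩) ⟨b-1, by omega⟩
    have h1 := congrFun (congrFun (congrFun hMeq ⟨1, by omega⟩) ⟨b-2, by omega⟩) ⟨b-2, by omega⟩
    rw [single_entry] at h0 h1
    rw [if_pos ⟨rfl, rfl, rfl⟩] at h0
    rw [if_neg (by simp only [Fin.val_mk]; omega)] at h1
    simp only [blockMap] at h0 h1
    have hsame : (⟨(0:ℕ) + (b-1), by omega⟩ : Fin n) = ⟨(1:ℕ) + (b-2), by omega⟩ :=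
      Fin.ext (by simp only [Fin.val_mk]; omega)
    rw [hsame] at h0
    rw [h0] at h1
    exact one_ne_zero h1
end

section
/- Let G be a chordal graph on {1,…,n} with maximal cliques C_1,…,C_m and let Φ(M) = ((M_{ij})_{i,j∈C_k})_{k=1}^m map matrices supported on G into ⊕_k M_{|C_k|}(ℂ). Then Φ is positive and order-reflecting on the partially positive cone: for M supported on G, every component Φ(M)_k is positive semidefinite if and only if M lies in the projection of the PSD cone of M_n(ℂ) onto matrices supported on G. -/
open ComplexOrder

open Matrix

section Helpers
set_option linter.unusedSectionVars false
variable {m : Type*} [Fintype m] [DecidableEq m]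

/-- quadratic form conjugation -/
lemma quad_conj (B C : Matrix m m ℂ) (x : m → ℂ) :
    star x ⬝ᵥ (C * B * Cᴴ) *ᵥ x = star (Cᴴ *ᵥ x) ⬝ᵥ B *ᵥ (Cᴴ *ᵥ x) := by
  rw [star_mulVec, conjTranspose_conjTranspose, ← mulVec_mulVec, ← mulVec_mulVec,
    dotProduct_mulVec]

lemma star_mulVec_dotProduct (A : Matrix m m ℂ) (w x : m → ℂ) :
    star (A *ᵥ w) ⬝ᵥ x = star w ⬝ᵥ (Aᴴ *ᵥ x) := by
  rw [star_mulVec, ← dotProduct_mulVec]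

/-- pseudoinverse package for PSD matrices -/
lemma exists_pinv {A : Matrix m m ℂ} (hA : A.PosSemidef) :
    ∃ B : Matrix m m ℂ, B.PosSemidef ∧ A * B * A = A ∧ B * A * B = B ∧ A * B = B * A := by
  classical
  set U : Matrix m m ℂ := (hA.1.eigenvectorUnitary : Matrix m m ℂ) with hU
  have hUU : star U * U = 1 := Unitary.coe_star_mul_self hA.1.eigenvectorUnitary
  set ev : m → ℂ := fun i => (hA.1.eigenvalues i : ℂ) with hev
  set g : m → ℂ := fun i => if hA.1.eigenvalues i = 0 then 0 else ((hA.1.eigenvalues i : ℂ))⁻¹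
    with hg
  have hmul : ∀ a b : m → ℂ, (U * Matrix.diagonal a * star U) * (U * Matrix.diagonal b * star U)
      = U * Matrix.diagonal (a * b) * star U := by
    intro a b
    rw [show U * Matrix.diagonal a * star U * (U * Matrix.diagonal b * star U)
      = U * (Matrix.diagonal a * (star U * U) * Matrix.diagonal b) * star U by
        simp only [Matrix.mul_assoc], hUU]
    rw [mul_one, Matrix.diagonal_mul_diagonal]
    rfl
  have hspec : A = U * Matrix.diagonal ev * star U := by
    exact hA.1.spectral_theorem
  have hgeg : g * ev * g = g := by
    funext i
    simp only [hg, hev, Pi.mul_apply]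
    split_ifs with h
    · simp
    · field_simp
  have hevg : ev * g * ev = ev := by
    funext i
    simp only [hg, hev, Pi.mul_apply]
    split_ifs with h
    · simp [h]
    · field_simp
  have hcomm : ev * g = g * ev := mul_comm _ _
  refine ⟨U * Matrix.diagonal g * star U, ?_, ?_, ?_, ?_⟩
  · have hdg : (Matrix.diagonal g).PosSemidef := by
      rw [Matrix.posSemidef_diagonal_iff]
      intro i
      simp only [hg]
      split_ifs with h
      · exact le_refl 0
      · have : 0 < hA.1.eigenvalues i := lt_of_le_of_ne (hA.eigenvalues_nonneg i) (Ne.symm h)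
        rw [← Complex.ofReal_inv]
        exact Complex.zero_le_real.mpr (inv_pos.mpr this).le
    have := hdg.mul_mul_conjTranspose_same U
    simpa [Matrix.star_eq_conjTranspose] using this
  · rw [hspec, hmul, hmul, hevg]
  · rw [hspec, hmul, hmul]
    rw [show g * ev * g = g from hgeg]
  · rw [hspec, hmul, hmul, hcomm]
end Helpers


section Masked
variable {n : ℕ}

/-- If the principal submatrix of a Hermitian matrix over `p` is PSD, so is the
masked full-size matrix. -/
lemma masked_posSemidef {M : Matrix (Fin n) (Fin n) ℂ} (hM : M.IsHermitian)
    (p : Fin n → Prop) [DecidablePred p]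
    (h : (M.submatrix (fun i : {i // p i} => (i : Fin n))
      (fun j : {i // p i} => (j : Fin n))).PosSemidef) :
    (Matrix.diagonal (fun i => if p i then (1:ℂ) else 0) * M *
      Matrix.diagonal (fun i => if p i then (1:ℂ) else 0)).PosSemidef := by
  classical
  set d : Fin n → ℂ := fun i => if p i then (1:ℂ) else 0 with hd
  have hsd : star d = d := by
    funext i
    simp only [Pi.star_apply, hd]
    split_ifs <;> simp
  have hDH : (Matrix.diagonal d)ᴴ = Matrix.diagonal d := by
    rw [Matrix.diagonal_conjTranspose, hsd]
  have inner : ∀ (f : Fin n → ℂ), (∀ i, ¬ p i → f i = 0) →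
      ∑ i, f i = ∑ i : {i // p i}, f i := by
    intro f hf
    rw [← Finset.sum_subtype (Finset.univ.filter p) (by simp) f]
    exact (Finset.sum_subset (Finset.subset_univ _)
      (fun x _ hx => hf x (by simpa using hx))).symm
  refine PosSemidef.of_dotProduct_mulVec_nonneg ?_ ?_
  · show (Matrix.diagonal d * M * Matrix.diagonal d)ᴴ = Matrix.diagonal d * M * Matrix.diagonal d
    rw [Matrix.conjTranspose_mul, Matrix.conjTranspose_mul, hDH, hM.eq]
    rw [Matrix.mul_assoc]
  · intro x
    have hq : star x ⬝ᵥ (Matrix.diagonal d * M * Matrix.diagonal d) *ᵥ x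
        = star (Matrix.diagonal d *ᵥ x) ⬝ᵥ M *ᵥ (Matrix.diagonal d *ᵥ x) := by
      conv_lhs => rw [show Matrix.diagonal d * M * Matrix.diagonal d
        = Matrix.diagonal d * M * (Matrix.diagonal d)ᴴ from by rw [hDH], quad_conj, hDH]
    rw [hq]
    set y : Fin n → ℂ := Matrix.diagonal d *ᵥ x with hy
    have hyv : ∀ i, y i = if p i then x i else 0 := by
      intro i
      simp [hy, hd, Matrix.mulVec_diagonal, ite_mul]
    have key : star y ⬝ᵥ M *ᵥ y =
        star (fun i : {i // p i} => x (i : Fin n)) ⬝ᵥ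
          (M.submatrix (fun i : {i // p i} => (i : Fin n)) (fun j : {i // p i} => (j : Fin n)))
            *ᵥ (fun i : {i // p i} => x (i : Fin n)) := by
      rw [dotProduct, inner _ (fun i hi => by
        simp only [Pi.star_apply, hyv, if_neg hi, star_zero, zero_mul])]
      rw [dotProduct]
      apply Finset.sum_congr rfl
      intro a _
      have hpa : p a.1 := a.2
      simp only [Pi.star_apply, Matrix.mulVec, dotProduct, Matrix.submatrix_apply]
      rw [hyv, if_pos hpa]
      congr 1
      rw [inner _ (fun j hj => by rw [hyv, if_neg hj, mul_zero])]
      apply Finset.sum_congr rfl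
      intro b _
      rw [hyv, if_pos b.2]
    rw [key]
    exact h.dotProduct_mulVec_nonneg _
end Masked


section Step
variable {n : ℕ}

set_option maxHeartbeats 1600000 in
lemma completion_step (G : SimpleGraph (Fin n)) (σ : Equiv.Perm (Fin n))
    (hσ : IsPerfectElimOrdering G σ) (M : Matrix (Fin n) (Fin n) ℂ) (hM : M.IsHermitian)
    (hclq : ∀ (p : Fin n → Prop) [DecidablePred p], G.IsClique {x | p x} →
      (M.submatrix (fun i : {i // p i} => (i : Fin n))
        (fun j : {i // p i} => (j : Fin n))).PosSemidef)
    (k : ℕ) (hk : k < n)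
    (Q : Matrix (Fin n) (Fin n) ℂ) (hQ : Q.PosSemidef)
    (hQ0 : ∀ i j : Fin n, ((σ.symm i : ℕ) < k + 1 ∨ (σ.symm j : ℕ) < k + 1) → Q i j = 0)
    (hQM : ∀ i j : Fin n, k + 1 ≤ (σ.symm i : ℕ) → k + 1 ≤ (σ.symm j : ℕ) →
      (i = j ∨ G.Adj i j) → Q i j = M i j) :
    ∃ P : Matrix (Fin n) (Fin n) ℂ, P.PosSemidef ∧
      (∀ i j : Fin n, ((σ.symm i : ℕ) < k ∨ (σ.symm j : ℕ) < k) → P i j = 0) ∧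
      (∀ i j : Fin n, k ≤ (σ.symm i : ℕ) → k ≤ (σ.symm j : ℕ) →
        (i = j ∨ G.Adj i j) → P i j = M i j) := by
  classical
  obtain ⟨v, hv⟩ : ∃ w : Fin n, w = σ ⟨k, hk⟩ := ⟨_, rfl⟩
  have hsymv : σ.symm v = ⟨k, hk⟩ := by rw [hv]; exact Equiv.symm_apply_apply σ _
  have hsymvval : ((σ.symm v : Fin n) : ℕ) = k := by rw [hsymv]
  obtain ⟨inN, hinN⟩ : ∃ p : Fin n → Prop,
      p = fun u => k < (σ.symm u : ℕ) ∧ G.Adj v u := ⟨_, rfl⟩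
  obtain ⟨inS, hinS⟩ : ∃ p : Fin n → Prop, p = fun u => u = v ∨ inN u := ⟨_, rfl⟩
  have hSmem : ∀ u, inS u ↔ (u = v ∨ inN u) := fun u => by rw [hinS]
  have hNmem : ∀ u, inN u ↔ (k < (σ.symm u : ℕ) ∧ G.Adj v u) := fun u => by rw [hinN]
  have hSclique : G.IsClique {x | inS x} := by
    have h := hσ ⟨k, hk⟩
    have hset : {x | inS x} =
        {u | u = σ ⟨k, hk⟩ ∨ ((⟨k, hk⟩ : Fin n) < σ.symm u ∧ G.Adj (σ ⟨k, hk⟩) u)} := by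
      ext u
      simp only [Set.mem_setOf_eq, hSmem, hNmem, ← hv, Fin.lt_def]
    rw [hset]
    exact h
  have hNclique : G.IsClique {x | inN x} := hSclique.subset (fun u hu => (hSmem u).mpr (Or.inr hu))
  have hvN : ¬ inN v := by
    rw [hNmem, hsymvval]
    intro h
    exact lt_irrefl k h.1
  obtain ⟨d, hd⟩ : ∃ f : Fin n → ℂ, f = fun i => if inN i then (1:ℂ) else 0 := ⟨_, rfl⟩
  have hdval : ∀ i, d i = if inN i then (1:ℂ) else 0 := fun i => by rw [hd]
  obtain ⟨D, hD⟩ : ∃ A : Matrix (Fin n) (Fin n) ℂ, A = Matrix.diagonal d := ⟨_, rfl⟩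
  obtain ⟨dS, hdS⟩ : ∃ f : Fin n → ℂ, f = fun i => if inS i then (1:ℂ) else 0 := ⟨_, rfl⟩
  have hdSval : ∀ i, dS i = if inS i then (1:ℂ) else 0 := fun i => by rw [hdS]
  obtain ⟨DS, hDS⟩ : ∃ A : Matrix (Fin n) (Fin n) ℂ, A = Matrix.diagonal dS := ⟨_, rfl⟩
  obtain ⟨Cfull, hCdef⟩ : ∃ A : Matrix (Fin n) (Fin n) ℂ, A = DS * M * DS := ⟨_, rfl⟩
  obtain ⟨Bfull, hBdef⟩ : ∃ A : Matrix (Fin n) (Fin n) ℂ, A = D * M * D := ⟨_, rfl⟩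
  have hCfull : Cfull.PosSemidef := by
    rw [hCdef, hDS, hdS]
    exact masked_posSemidef hM inS (hclq inS hSclique)
  have hBfull : Bfull.PosSemidef := by
    rw [hBdef, hD, hd]
    exact masked_posSemidef hM inN (hclq inN hNclique)
  have hDH : Dᴴ = D := by
    have h1 : star d = d := by
      funext i
      simp only [Pi.star_apply, hdval]
      split_ifs <;> simp
    rw [hD, Matrix.diagonal_conjTranspose, h1]
  have hDD : D * D = D := by
    have h1 : (fun i => d i * d i) = d := by
      funext i
      simp only [hdval]
      split_ifs <;> simp
    rw [hD, Matrix.diagonal_mul_diagonal, h1]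
  have hDSD : DS * D = D := by
    have h1 : (fun i => dS i * d i) = d := by
      funext i
      simp only [hdval, hdSval]
      by_cases h : inN i
      · rw [if_pos h, if_pos ((hSmem i).mpr (Or.inr h)), one_mul]
      · simp [h]
    rw [hD, hDS, Matrix.diagonal_mul_diagonal, h1]
  have hDDS : D * DS = D := by
    have h1 : (fun i => d i * dS i) = d := by
      funext i
      simp only [hdval, hdSval]
      by_cases h : inN i
      · rw [if_pos h, if_pos ((hSmem i).mpr (Or.inr h)), mul_one]
      · simp [h]
    rw [hD, hDS, Matrix.diagonal_mul_diagonal, h1]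
  have hNedge : ∀ i j : Fin n, inN i → inN j → (i = j ∨ G.Adj i j) := by
    intro i j hi hj
    by_cases hij : i = j
    · exact Or.inl hij
    · exact Or.inr (hNclique hi hj hij)
  have hQMN : ∀ i j : Fin n, inN i → inN j → Q i j = M i j := by
    intro i j hi hj
    exact hQM i j ((hNmem i).mp hi).1 ((hNmem j).mp hj).1 (hNedge i j hi hj)
  have hDQD : D * Q * D = Bfull := by
    rw [hBdef, hD]
    ext i j
    simp only [Matrix.diagonal_mul, Matrix.mul_diagonal, hdval]
    by_cases hi : inN i
    · by_cases hj : inN j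
      · rw [if_pos hi, if_pos hj, hQMN i j hi hj]
      · simp [hj]
    · simp [hi]
  have hDCD : D * Cfull * D = Bfull := by
    rw [hCdef, hBdef]
    calc D * (DS * M * DS) * D = (D * DS) * M * (DS * D) := by
          simp only [Matrix.mul_assoc]
      _ = D * M * D := by rw [hDDS, hDSD]
  obtain ⟨Bp, hBp, hBPB, hPBP, hcomm⟩ := exists_pinv hBfull
  have hBpH : Bpᴴ = Bp := hBp.1
  obtain ⟨e, he⟩ : ∃ f : Fin n → ℂ, f = Pi.single v (1:ℂ) := ⟨_, rfl⟩
  have hse : star e = e := by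
    rw [he]
    funext i
    by_cases h : i = v
    · subst h; simp
    · simp [Pi.single_apply, h]
  obtain ⟨z, hz⟩ : ∃ f : Fin n → ℂ, f = D *ᵥ (M *ᵥ e) := ⟨_, rfl⟩
  obtain ⟨y, hy⟩ : ∃ f : Fin n → ℂ, f = Bp *ᵥ z := ⟨_, rfl⟩
  have hDz : D *ᵥ z = z := by
    rw [hz, Matrix.mulVec_mulVec, hDD]
  have hDSe : DS *ᵥ e = e := by
    funext i
    rw [hDS, Matrix.mulVec_diagonal]
    by_cases h : i = v
    · subst h
      rw [hdSval, if_pos ((hSmem i).mpr (Or.inl rfl)), one_mul]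
    · rw [he]
      simp [Pi.single_apply, h]
  have hzC : z = D *ᵥ (Cfull *ᵥ e) := by
    rw [hCdef, ← Matrix.mulVec_mulVec, ← Matrix.mulVec_mulVec, hDSe,
      Matrix.mulVec_mulVec, hDDS]
    exact hz
  have hBD : Bfull * D = Bfull := by
    rw [hBdef, Matrix.mul_assoc, hDD]
  have hDB : D * Bfull = Bfull := by
    rw [hBdef, ← Matrix.mul_assoc, ← Matrix.mul_assoc, hDD]
  have hrange : Bfull *ᵥ y = z := by
    obtain ⟨x0, hx0def⟩ : ∃ f : Fin n → ℂ, f = z - Bfull *ᵥ y := ⟨_, rfl⟩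
    have hDx0 : D *ᵥ x0 = x0 := by
      rw [hx0def, Matrix.mulVec_sub, hDz, Matrix.mulVec_mulVec, hDB]
    have hBx0 : Bfull *ᵥ x0 = 0 := by
      rw [hx0def, Matrix.mulVec_sub, hy, Matrix.mulVec_mulVec, Matrix.mulVec_mulVec]
      rw [show Bfull * Bfull * Bp = Bfull from by rw [Matrix.mul_assoc, hcomm,
        ← Matrix.mul_assoc, hBPB]]
      simp
    have hx0q : star x0 ⬝ᵥ Cfull *ᵥ x0 = 0 := by
      conv_lhs => rw [← hDx0, ← hDH]
      rw [← quad_conj, hDH, hDCD, hBx0, dotProduct_zero]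
    have hCx0 : Cfull *ᵥ x0 = 0 := (hCfull.dotProduct_mulVec_zero_iff x0).mp hx0q
    have hzx0 : star z ⬝ᵥ x0 = 0 := by
      rw [hzC, star_mulVec_dotProduct, hDH, hDx0, star_mulVec_dotProduct, hCfull.1.eq, hCx0,
        dotProduct_zero]
    have hyx0 : star (Bfull *ᵥ y) ⬝ᵥ x0 = 0 := by
      rw [star_mulVec_dotProduct, hBfull.1.eq, hBx0, dotProduct_zero]
    have hdot : star x0 ⬝ᵥ x0 = 0 := by
      have hstar : star x0 = star z - star (Bfull *ᵥ y) := by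
        rw [hx0def]
        exact star_sub _ _
      rw [hstar, sub_dotProduct, hzx0, hyx0, sub_zero]
    have hx00 : x0 = 0 := dotProduct_star_self_eq_zero.mp hdot
    rw [hx00] at hx0def
    exact (sub_eq_zero.mp hx0def.symm).symm
  obtain ⟨s0, hs0⟩ : ∃ w : ℂ, w = star z ⬝ᵥ y := ⟨_, rfl⟩
  have hs0' : star y ⬝ᵥ z = s0 := by
    rw [hs0]
    conv_rhs => rw [← hrange]
    rw [star_mulVec_dotProduct, hBfull.1.eq, hrange]
  obtain ⟨c, hc⟩ : ∃ w : ℂ, w = M v v - s0 := ⟨_, rfl⟩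
  have hzs : ∀ j, inN j → z j = M j v := by
    intro j hj
    rw [hz, he, Matrix.mulVec_single]
    rw [show (D *ᵥ MulOpposite.op (1:ℂ) • M.col v) j = d j * (M j v * 1) from by
      rw [hD, Matrix.mulVec_diagonal]; simp]
    rw [hdval, if_pos hj, one_mul, mul_one]
  have hcpos : 0 ≤ c := by
    have h0 := hCfull.dotProduct_mulVec_nonneg (e - D *ᵥ y)
    have expand : star (e - D *ᵥ y) ⬝ᵥ Cfull *ᵥ (e - D *ᵥ y)
        = star e ⬝ᵥ (Cfull *ᵥ e) - star e ⬝ᵥ (Cfull *ᵥ (D *ᵥ y))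
          - (star (D *ᵥ y) ⬝ᵥ (Cfull *ᵥ e) - star (D *ᵥ y) ⬝ᵥ (Cfull *ᵥ (D *ᵥ y))) := by
      rw [show star (e - D *ᵥ y) = star e - star (D *ᵥ y) from star_sub _ _,
        Matrix.mulVec_sub, sub_dotProduct, dotProduct_sub,
        dotProduct_sub]
    have t1 : star e ⬝ᵥ (Cfull *ᵥ e) = M v v := by
      rw [hse]
      conv_lhs => rw [he]
      rw [Matrix.mulVec_single_one, single_one_dotProduct, Matrix.col_apply, hCdef, hDS]
      simp only [Matrix.mul_diagonal, Matrix.diagonal_mul]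
      rw [hdSval, if_pos ((hSmem v).mpr (Or.inl rfl)), one_mul, mul_one]
    have t2 : star e ⬝ᵥ (Cfull *ᵥ (D *ᵥ y)) = s0 := by
      conv_lhs => rw [show Cfull = (Cfullᴴ)ᴴ from (Matrix.conjTranspose_conjTranspose _).symm]
      rw [← star_mulVec_dotProduct, hCfull.1.eq]
      conv_lhs => rw [show D = Dᴴ from hDH.symm]
      rw [← star_mulVec_dotProduct, ← hzC, hs0]
    have t3 : star (D *ᵥ y) ⬝ᵥ (Cfull *ᵥ e) = s0 := by
      rw [star_mulVec_dotProduct, hDH, Matrix.mulVec_mulVec]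
      rw [show (D * Cfull) *ᵥ e = D *ᵥ (Cfull *ᵥ e) from (Matrix.mulVec_mulVec _ _ _).symm]
      rw [← hzC, hs0']
    have t4 : star (D *ᵥ y) ⬝ᵥ (Cfull *ᵥ (D *ᵥ y)) = s0 := by
      conv_lhs => rw [← hDH]
      rw [← quad_conj, hDH, hDCD, hrange, hs0']
    rw [expand, t1, t2, t3, t4, sub_self, sub_zero] at h0
    rw [hc]
    exact h0
  -- the completion matrix
  have hsingle : star (Pi.single v (1:ℂ) : Fin n → ℂ) = (Pi.single v (1:ℂ) : Fin n → ℂ) := by rw [← he]; exact hse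
  obtain ⟨Ev, hEv⟩ : ∃ A : Matrix (Fin n) (Fin n) ℂ, A = Matrix.diagonal (Pi.single v (1:ℂ)) :=
    ⟨_, rfl⟩
  have hEvH : Evᴴ = Ev := by
    rw [hEv, Matrix.diagonal_conjTranspose, hsingle]
  have hEvPSD : (c • Ev).PosSemidef := by
    have heq : c • Ev = Matrix.diagonal (fun i => c * (Pi.single v (1:ℂ) : Fin n → ℂ) i) := by
      rw [hEv]
      ext i j
      by_cases h : i = j
      · subst h
        rw [Matrix.smul_apply, Matrix.diagonal_apply_eq, Matrix.diagonal_apply_eq, smul_eq_mul]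
      · rw [Matrix.smul_apply, Matrix.diagonal_apply_ne _ h, Matrix.diagonal_apply_ne _ h,
          smul_eq_mul, mul_zero]
    rw [heq, Matrix.posSemidef_diagonal_iff]
    intro i
    by_cases h : i = v
    · subst h
      simpa using hcpos
    · simp [Pi.single_apply, h]
  obtain ⟨F, hF⟩ : ∃ A : Matrix (Fin n) (Fin n) ℂ, A = Ev * M * D := ⟨_, rfl⟩
  obtain ⟨Z', hZ'⟩ : ∃ A : Matrix (Fin n) (Fin n) ℂ, A = Q * D := ⟨_, rfl⟩
  obtain ⟨Z, hZdef⟩ : ∃ A : Matrix (Fin n) (Fin n) ℂ, A = Z' + F := ⟨_, rfl⟩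
  have hZ'H : Z'ᴴ = D * Q := by
    rw [hZ', Matrix.conjTranspose_mul, hDH, hQ.1.eq]
  have hFH : Fᴴ = D * M * Ev := by
    rw [hF, Matrix.conjTranspose_mul, Matrix.conjTranspose_mul, hDH, hEvH, hM.eq,
      Matrix.mul_assoc]
  have hT2 : (Q - Z' * Bp * Z'ᴴ).PosSemidef := by
    refine PosSemidef.of_dotProduct_mulVec_nonneg ?_ ?_
    · show (Q - Z' * Bp * Z'ᴴ)ᴴ = Q - Z' * Bp * Z'ᴴ
      rw [Matrix.conjTranspose_sub, hQ.1.eq, Matrix.conjTranspose_mul,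
        Matrix.conjTranspose_conjTranspose, Matrix.conjTranspose_mul, hBpH, Matrix.mul_assoc]
    · intro x
      obtain ⟨zx, hzx⟩ : ∃ f : Fin n → ℂ, f = Z'ᴴ *ᵥ x := ⟨_, rfl⟩
      obtain ⟨w, hw⟩ : ∃ f : Fin n → ℂ, f = Bp *ᵥ zx := ⟨_, rfl⟩
      obtain ⟨m0, hm0⟩ : ∃ f : Fin n → ℂ, f = D *ᵥ w := ⟨_, rfl⟩
      have h0 := hQ.dotProduct_mulVec_nonneg (x - m0)
      have expand : star (x - m0) ⬝ᵥ Q *ᵥ (x - m0)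
          = star x ⬝ᵥ (Q *ᵥ x) - star x ⬝ᵥ (Q *ᵥ m0)
            - (star m0 ⬝ᵥ (Q *ᵥ x) - star m0 ⬝ᵥ (Q *ᵥ m0)) := by
        rw [show star (x - m0) = star x - star m0 from star_sub _ _,
          Matrix.mulVec_sub, sub_dotProduct, dotProduct_sub,
          dotProduct_sub]
      have tA : star x ⬝ᵥ (Q *ᵥ m0) = star zx ⬝ᵥ w := by
        rw [hm0, Matrix.mulVec_mulVec, ← hZ']
        conv_lhs => rw [show Z' = (Z'ᴴ)ᴴ from (Matrix.conjTranspose_conjTranspose _).symm]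
        rw [← star_mulVec_dotProduct, ← hzx, hw]
      have tB : star m0 ⬝ᵥ (Q *ᵥ x) = star zx ⬝ᵥ w := by
        rw [hm0, star_mulVec_dotProduct, hDH, Matrix.mulVec_mulVec, ← hZ'H, ← hzx, hw,
          star_mulVec_dotProduct, hBpH]
      have tC : star m0 ⬝ᵥ (Q *ᵥ m0) = star zx ⬝ᵥ w := by
        rw [hm0]
        conv_lhs => rw [← hDH]
        rw [← quad_conj, hDH, hDQD, hw]
        conv_lhs => rw [← hBpH]
        rw [← quad_conj, hBpH, hPBP]
      rw [expand, tA, tB, tC, sub_self, sub_zero] at h0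
      have hform : star x ⬝ᵥ (Q - Z' * Bp * Z'ᴴ) *ᵥ x
          = star x ⬝ᵥ (Q *ᵥ x) - star zx ⬝ᵥ w := by
        rw [Matrix.sub_mulVec, dotProduct_sub, quad_conj, ← hzx, ← hw]
      rw [hform]
      exact h0
  have hT3 : (Z * Bp * Zᴴ).PosSemidef := hBp.mul_mul_conjTranspose_same Z
  obtain ⟨P, hP⟩ : ∃ A : Matrix (Fin n) (Fin n) ℂ,
      A = c • Ev + (Q - Z' * Bp * Z'ᴴ) + Z * Bp * Zᴴ := ⟨_, rfl⟩
  have hPSD : P.PosSemidef := by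
    rw [hP]
    exact (hEvPSD.add hT2).add hT3
  -- entry analysis
  obtain ⟨R, hR⟩ : ∃ A : Matrix (Fin n) (Fin n) ℂ, A = M * D * Bp * (D * Q) := ⟨_, rfl⟩
  have hevmul : ∀ X : Matrix (Fin n) (Fin n) ℂ, Ev * X * Ev = X v v • Ev := by
    intro X
    rw [hEv]
    ext i j
    simp only [Matrix.diagonal_mul, Matrix.mul_diagonal, Matrix.smul_apply,
      Matrix.diagonal_apply, Pi.single_apply, smul_eq_mul]
    by_cases hi : i = v <;> by_cases hj : j = v <;> by_cases hij : i = j <;>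
      simp_all
  have hFBpF : F * Bp * Fᴴ = s0 • Ev := by
    have h1 : F * Bp * Fᴴ = Ev * (M * D * Bp * (D * M)) * Ev := by
      rw [hFH, hF]
      simp only [Matrix.mul_assoc]
    have h2 : (M * D * Bp * (D * M)) v v = s0 := by
      have hXe : star e ⬝ᵥ ((M * D) * Bp * (M * D)ᴴ) *ᵥ e
          = (M * D * Bp * (D * M)) v v := by
        rw [hse, he]
        simp only [Matrix.mulVec_single_one, single_one_dotProduct, Matrix.col_apply]
        rw [Matrix.conjTranspose_mul, hDH, hM.eq]
      rw [← hXe, quad_conj]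
      rw [show (M * D)ᴴ *ᵥ e = z from by
        rw [Matrix.conjTranspose_mul, hDH, hM.eq, ← Matrix.mulVec_mulVec, ← hz]]
      rw [← hy, hs0]
    rw [h1, hevmul, h2]
  have hFBpZ' : F * Bp * Z'ᴴ = Ev * R := by
    rw [hF, hZ'H, hR]
    simp only [Matrix.mul_assoc]
  have hZ'BpF : Z' * Bp * Fᴴ = (Ev * R)ᴴ := by
    rw [← hFBpZ', Matrix.conjTranspose_mul, Matrix.conjTranspose_mul,
      Matrix.conjTranspose_conjTranspose, hBpH, Matrix.mul_assoc]
  have hPeq : P = (c + s0) • Ev + Q + Ev * R + (Ev * R)ᴴ := by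
    rw [hP, hZdef]
    rw [show (Z' + F) * Bp * (Z' + F)ᴴ = Z' * Bp * Z'ᴴ + F * Bp * Z'ᴴ + Z' * Bp * Fᴴ
        + F * Bp * Fᴴ from by
      rw [Matrix.conjTranspose_add, Matrix.add_mul, Matrix.add_mul, Matrix.mul_add,
        Matrix.mul_add]
      abel]
    rw [hFBpF, hFBpZ', hZ'BpF, add_smul]
    abel
  obtain ⟨w2, hw2⟩ : ∃ f : Fin n → ℂ, f = Q *ᵥ (D *ᵥ y) := ⟨_, rfl⟩
  have hRrow : ∀ j, R v j = star (w2 j) := by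
    intro j
    have hRH : Rᴴ = Q * D * (Bp * (D * M)) := by
      rw [hR]
      simp only [Matrix.conjTranspose_mul, hBpH, hDH, hQ.1.eq, hM.eq, Matrix.mul_assoc]
    have h1 : Rᴴ *ᵥ e = w2 := by
      rw [hRH, hw2, hy, hz]
      simp only [← Matrix.mulVec_mulVec]
    have h2 : (Rᴴ *ᵥ e) j = Rᴴ j v := by
      rw [he]
      simp
    rw [← h1, h2, Matrix.conjTranspose_apply, star_star]
  have hw2low : ∀ j : Fin n, (σ.symm j : ℕ) < k + 1 → w2 j = 0 := by
    intro j hj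
    rw [hw2]
    show (Q j) ⬝ᵥ (D *ᵥ y) = 0
    rw [show Q j = 0 from funext fun l => hQ0 j l (Or.inl hj)]
    exact zero_dotProduct _
  have hw2v : w2 v = 0 := hw2low v (by rw [hsymvval]; omega)
  have hDw2 : D *ᵥ w2 = z := by
    rw [hw2, Matrix.mulVec_mulVec, Matrix.mulVec_mulVec, hDQD, hrange]
  have hw2N : ∀ j, inN j → w2 j = z j := by
    intro j hj
    rw [← hDw2]
    rw [show (D *ᵥ w2) j = d j * w2 j from by rw [hD]; exact Matrix.mulVec_diagonal _ _ _]
    rw [hdval, if_pos hj, one_mul]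
  have hEvRapp : ∀ i j, (Ev * R) i j = if i = v then star (w2 j) else 0 := by
    intro i j
    rw [hEv, Matrix.diagonal_mul, Pi.single_apply]
    by_cases h : i = v
    · rw [if_pos h, if_pos h, one_mul, h, hRrow]
    · rw [if_neg h, if_neg h, zero_mul]
  have hEvapp : ∀ i j, Ev i j = if i = v ∧ j = v then (1:ℂ) else 0 := by
    intro i j
    rw [hEv, Matrix.diagonal_apply, Pi.single_apply]
    by_cases hij : i = j
    · subst hij
      by_cases h : i = v
      · rw [if_pos rfl, if_pos h, if_pos ⟨h, h⟩]
      · rw [if_pos rfl, if_neg h, if_neg (fun hh => h hh.1)]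
    · rw [if_neg hij]
      by_cases h : i = v
      · rw [if_neg (fun hh => hij (hh.1.trans hh.2.symm))]
      · rw [if_neg (fun hh => h hh.1)]
  have hPentry : ∀ i j, P i j = (if i = v ∧ j = v then M v v else 0) + Q i j
      + (if i = v then star (w2 j) else 0) + (if j = v then w2 i else 0) := by
    intro i j
    rw [hPeq]
    rw [Matrix.add_apply, Matrix.add_apply, Matrix.add_apply, Matrix.smul_apply,
      Matrix.conjTranspose_apply, hEvRapp, hEvRapp, hEvapp, smul_eq_mul]
    have hcs : c + s0 = M v v := by rw [hc]; ring
    rw [hcs, mul_ite, mul_one, mul_zero]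
    congr 1
    by_cases h : j = v
    · rw [if_pos h, if_pos h, star_star]
    · rw [if_neg h, if_neg h, star_zero]
  refine ⟨P, hPSD, ?_, ?_⟩
  · intro i j hij
    have hlowv : ∀ l : Fin n, (σ.symm l : ℕ) < k → l ≠ v := by
      intro l hl hlv
      rw [hlv, hsymvval] at hl
      exact lt_irrefl k hl
    rw [hPentry]
    rcases hij with hi | hj
    · have hiv := hlowv i hi
      rw [if_neg (fun h => hiv h.1), if_neg hiv, hQ0 i j (Or.inl (by omega))]
      by_cases hjv : j = v
      · rw [if_pos hjv, hw2low i (by omega)]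
        ring
      · rw [if_neg hjv]
        ring
    · have hjv := hlowv j hj
      rw [if_neg (fun h => hjv h.2), if_neg hjv, hQ0 i j (Or.inr (by omega))]
      by_cases hiv : i = v
      · rw [if_pos hiv, hw2low j (by omega), star_zero]
        ring
      · rw [if_neg hiv]
        ring
  · intro i j hi hj hedge
    have hky : ∀ l : Fin n, k ≤ (σ.symm l : ℕ) → l ≠ v → k + 1 ≤ (σ.symm l : ℕ) := by
      intro l hl hlv
      rcases Nat.lt_or_ge k (σ.symm l : ℕ) with h | h
      · omega
      · exfalso
        apply hlv
        have : σ.symm l = ⟨k, hk⟩ := by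
          apply Fin.ext
          simp only []
          omega
        rw [hv, ← this, Equiv.apply_symm_apply]
    rw [hPentry]
    by_cases hiv : i = v
    · by_cases hjv : j = v
      · rw [if_pos ⟨hiv, hjv⟩, if_pos hiv, if_pos hjv, hiv, hjv, hw2v, hQ0 v v
          (Or.inl (by rw [hsymvval]; omega)), star_zero]
        ring
      · have hjN : inN j := by
          rw [hNmem]
          constructor
          · have := hky j hj hjv
            omega
          · rcases hedge with h | h
            · exact absurd (hiv ▸ h).symm hjv
            · exact hiv ▸ h
        rw [if_neg (fun h => hjv h.2), if_pos hiv, if_neg hjv,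
          hQ0 i j (Or.inl (by rw [hiv, hsymvval]; omega)), hw2N j hjN, hzs j hjN, hiv,
          hM.apply]
        ring
    · by_cases hjv : j = v
      · have hiN : inN i := by
          rw [hNmem]
          constructor
          · have := hky i hi hiv
            omega
          · rcases hedge with h | h
            · exact absurd (h.trans hjv) hiv
            · exact (hjv ▸ h).symm
        rw [if_neg (fun h => hiv h.1), if_neg hiv, if_pos hjv,
          hQ0 i j (Or.inr (by rw [hjv, hsymvval]; omega)), hw2N i hiN, hzs i hiN, hjv]
        ring
      · rw [if_neg (fun h => hiv h.1), if_neg hiv, if_neg hjv,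
          hQM i j (hky i hi hiv) (hky j hj hjv) hedge]
        ring
end Step

section Main
variable {n : ℕ}

/-- `Φ` is positive and order-reflecting on the partially positive cone: all the
maximal-clique components of `Φ(M)` are PSD iff `M` is the projection of a PSD matrix. -/
theorem chordal_blockMap_order_embedding {n : ℕ} (G : SimpleGraph (Fin n))
    (hG : IsChordal G) (M : Matrix (Fin n) (Fin n) ℂ) (hM : M.IsHermitian)
    (hsupp : ∀ i j : Fin n, i ≠ j → ¬ G.Adj i j → M i j = 0) :
    (∀ C : Finset (Fin n),
        (G.IsClique (C : Set (Fin n)) ∧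
          ∀ D : Finset (Fin n), G.IsClique (D : Set (Fin n)) → C ⊆ D → C = D) →
        (M.submatrix (fun i : C => (i : Fin n)) (fun j : C => (j : Fin n))).PosSemidef) ↔
      ∃ P : Matrix (Fin n) (Fin n) ℂ, P.PosSemidef ∧ projOn G P = M := by
  classical
  constructor
  · intro hmax
    have hclq : ∀ (p : Fin n → Prop) [DecidablePred p], G.IsClique {x | p x} →
        (M.submatrix (fun i : {i // p i} => (i : Fin n))
          (fun j : {i // p i} => (j : Fin n))).PosSemidef := by
      intro p _ hp
      set C : Finset (Fin n) := Finset.univ.filter p with hC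
      have hCclq : G.IsClique (C : Set (Fin n)) := by
        have : (C : Set (Fin n)) = {x | p x} := by
          ext x
          simp [hC]
        rw [this]
        exact hp
      set s : Finset (Finset (Fin n)) :=
        Finset.univ.powerset.filter (fun E : Finset (Fin n) =>
          G.IsClique (E : Set (Fin n)) ∧ C ⊆ E) with hs
      have hCs : C ∈ s := by
        rw [hs, Finset.mem_filter]
        exact ⟨Finset.mem_powerset.mpr (Finset.subset_univ _), hCclq, Finset.Subset.refl _⟩
      obtain ⟨E, hEs, hEmax⟩ := s.exists_max_image (fun E => E.card) ⟨C, hCs⟩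
      obtain ⟨hEclq, hCE⟩ := (Finset.mem_filter.mp hEs).2
      have hEfull : ∀ Dd : Finset (Fin n), G.IsClique (Dd : Set (Fin n)) → E ⊆ Dd → E = Dd := by
        intro Dd hDclq hED
        apply Finset.eq_of_subset_of_card_le hED
        apply hEmax
        rw [hs, Finset.mem_filter]
        exact ⟨Finset.mem_powerset.mpr (Finset.subset_univ _), hDclq, hCE.trans hED⟩
      have hPSD := hmax E ⟨hEclq, hEfull⟩
      have h2 := hPSD.submatrix (fun x : {i // p i} =>
        (⟨x.1, hCE (Finset.mem_filter.mpr ⟨Finset.mem_univ _, x.2⟩)⟩ : {i // i ∈ E}))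
      rw [Matrix.submatrix_submatrix] at h2
      exact h2
    obtain ⟨σ, hσ⟩ := hG
    have main : ∀ t : ℕ, t ≤ n → ∃ P : Matrix (Fin n) (Fin n) ℂ, P.PosSemidef ∧
        (∀ i j : Fin n, ((σ.symm i : ℕ) < n - t ∨ (σ.symm j : ℕ) < n - t) → P i j = 0) ∧
        (∀ i j : Fin n, n - t ≤ (σ.symm i : ℕ) → n - t ≤ (σ.symm j : ℕ) →
          (i = j ∨ G.Adj i j) → P i j = M i j) := by
      intro t
      induction t with
      | zero =>
        intro _
        refine ⟨0, Matrix.PosSemidef.zero, fun i j _ => rfl, fun i j hi hj _ => ?_⟩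
        exfalso
        have := (σ.symm i).isLt
        omega
      | succ t ih =>
        intro ht
        obtain ⟨Q, hQ, hQ0, hQM⟩ := ih (Nat.le_of_succ_le ht)
        have hk : n - (t + 1) < n := by omega
        obtain ⟨P, h1, h2, h3⟩ := completion_step G σ hσ M hM hclq (n - (t + 1)) hk Q hQ
          (fun i j h => hQ0 i j (by omega))
          (fun i j hi hj he => hQM i j (by omega) (by omega) he)
        exact ⟨P, h1, h2, h3⟩
    obtain ⟨P, hPSD, _, hPM⟩ := main n le_rfl
    refine ⟨P, hPSD, ?_⟩
    ext i j
    show (if i = j ∨ G.Adj i j then P i j else 0) = M i j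
    split_ifs with h
    · exact hPM i j (by omega) (by omega) h
    · exact (hsupp i j (fun he => h (Or.inl he)) (fun ha => h (Or.inr ha))).symm
  · rintro ⟨P, hP, hPM⟩ C ⟨hCclq, _⟩
    have hsub : M.submatrix (fun i : C => (i : Fin n)) (fun j : C => (j : Fin n))
        = P.submatrix (fun i : C => (i : Fin n)) (fun j : C => (j : Fin n)) := by
      ext i j
      rw [Matrix.submatrix_apply, Matrix.submatrix_apply, ← hPM]
      have h : (i : Fin n) = (j : Fin n) ∨ G.Adj i j := by
        by_cases hij : (i : Fin n) = (j : Fin n)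
        · exact Or.inl hij
        · exact Or.inr (hCclq (Finset.mem_coe.mpr i.2) (Finset.mem_coe.mpr j.2) hij)
      show (if (i : Fin n) = (j : Fin n) ∨ G.Adj i j then P i j else 0) = P (i : Fin n) j
      rw [if_pos h]
    rw [hsub]
    exact hP.submatrix _
end Main
end
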